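/- arXiv:2003.03042 — 13 statements merged into one kernel-verified Lean document; each statement's English description precedes it below -/
import Mathlib

section
/- Under consistency, mean exchangeability and positivity, the subgroup-specific potential outcome mean is identified by the g-formula: for every measurable subgroup w ⊆ 𝒳 with P(X ∈ w) > 0, and for any version m_a of the outcome regression E[Y | X, A = a], one has (1/P(X ∈ w)) ∫_{{X ∈ w}} Y^a dP = (1/P(X ∈ w)) ∫_{{X ∈ w}} m_a(X) dP; that is, E[Y^a | X ∈ w] = E[E[Y | X, A = a] | X ∈ w]. -/
open MeasureTheory

/-- Under consistency, mean exchangeability and positivity, the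
subgroup-specific potential outcome mean is identified by the g-formula:
`E[Y^a | X ∈ w] = E[E[Y | X, A = a] | X ∈ w]`. -/
theorem gformula_identification
    {Ω : Type*} [MeasurableSpace Ω] (P : Measure Ω) [IsProbabilityMeasure P]
    {𝒳 : Type*} [MeasurableSpace 𝒳]
    (X : Ω → 𝒳) (hX : Measurable X)
    (A : Ω → ℝ) (hA : Measurable A) (hA01 : ∀ ω, A ω = 0 ∨ A ω = 1)
    (Y : Ω → ℝ) (hY : Measurable Y) (hYint : Integrable Y P)
    (a : ℝ) (ha : a = 0 ∨ a = 1)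
    (Y1 Y0 : Ω → ℝ) (hY1m : Measurable Y1) (hY0m : Measurable Y0)
    (hY1int : Integrable Y1 P) (hY0int : Integrable Y0 P)
    (Ya : Ω → ℝ) (hYa : Ya = if a = 1 then Y1 else Y0)
    -- consistency of potential outcomes
    (hcons : ∀ᵐ ω ∂P, Y ω = A ω * Y1 ω + (1 - A ω) * Y0 ω)
    -- a version of the propensity score
    (e : 𝒳 → ℝ) (he : Measurable e)
    (hePS : ∀ B : Set 𝒳, MeasurableSet B →
      ∫ ω in X ⁻¹' B, e (X ω) ∂P = (P (X ⁻¹' B ∩ {ω | A ω = a})).toReal)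
    -- a version of the outcome regression E[Y | X, A = a]
    (m : 𝒳 → ℝ) (hm : Measurable m)
    (hmint : Integrable (fun ω => m (X ω)) P)
    (hmOR : ∀ B : Set 𝒳, MeasurableSet B →
      ∫ ω in X ⁻¹' B ∩ {ω | A ω = a}, Y ω ∂P
        = ∫ ω in X ⁻¹' B ∩ {ω | A ω = a}, m (X ω) ∂P)
    -- a version of E[Y^a | X]
    (ν : 𝒳 → ℝ) (hν : Measurable ν)
    (hνint : Integrable (fun ω => ν (X ω)) P)
    (hνCE : ∀ B : Set 𝒳, MeasurableSet B →
      ∫ ω in X ⁻¹' B, Ya ω ∂P = ∫ ω in X ⁻¹' B, ν (X ω) ∂P)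
    -- mean exchangeability
    (hexch : ∀ B : Set 𝒳, MeasurableSet B →
      ∫ ω in X ⁻¹' B ∩ {ω | A ω = a}, Ya ω ∂P
        = ∫ ω in X ⁻¹' B ∩ {ω | A ω = a}, ν (X ω) ∂P)
    -- positivity
    (ε : ℝ) (hε : 0 < ε)
    (hpos : ∀ᵐ ω ∂P, ε ≤ e (X ω) ∧ e (X ω) ≤ 1 - ε)
    -- the subgroup
    (w : Set 𝒳) (hw : MeasurableSet w)
    (hwpos : 0 < (P (X ⁻¹' w)).toReal) :
    (1 / (P (X ⁻¹' w)).toReal) * ∫ ω in X ⁻¹' w, Ya ω ∂P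
      = (1 / (P (X ⁻¹' w)).toReal) * ∫ ω in X ⁻¹' w, m (X ω) ∂P := by
  classical
  have hle : MeasurableSpace.comap X inferInstance ≤ ‹MeasurableSpace Ω› := hX.comap_le
  haveI : SigmaFinite (P.trim hle) := inferInstance
  have hXc : @Measurable Ω 𝒳 (MeasurableSpace.comap X inferInstance) _ X :=
    fun t ht => ⟨t, ht, rfl⟩
  set s : Set Ω := {ω | A ω = a} with hs
  have hsA : MeasurableSet s := hA (measurableSet_singleton a)
  have hYaY : ∀ᵐ ω ∂P, A ω = a → Ya ω = Y ω := by
    filter_upwards [hcons] with ω hω hAa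
    rcases ha with ha | ha
    · subst ha
      norm_num at hYa
      rw [hYa, hω, hAa]; ring
    · subst ha
      norm_num at hYa
      rw [hYa, hω, hAa]; ring
  have hkey : ∀ B : Set 𝒳, MeasurableSet B →
      ∫ ω in X ⁻¹' B ∩ s, ν (X ω) ∂P = ∫ ω in X ⁻¹' B ∩ s, m (X ω) ∂P := by
    intro B hB
    have hmeas : MeasurableSet (X ⁻¹' B ∩ s) := (hX hB).inter hsA
    have h1 : ∫ ω in X ⁻¹' B ∩ s, Ya ω ∂P = ∫ ω in X ⁻¹' B ∩ s, Y ω ∂P := by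
      refine setIntegral_congr_ae hmeas ?_
      filter_upwards [hYaY] with ω hω hmem
      exact hω hmem.2
    rw [← hexch B hB, h1, hmOR B hB]
  set h : Ω → ℝ := fun ω => ν (X ω) - m (X ω) with hh
  have hhint : Integrable h P := hνint.sub hmint
  have hhm : StronglyMeasurable[MeasurableSpace.comap X inferInstance] h :=
    ((hν.sub hm).comp hXc).stronglyMeasurable
  set ind : Ω → ℝ := s.indicator (fun _ => (1 : ℝ)) with hind
  have hindint : Integrable ind P := (integrable_const 1).indicator hsA
  have hfe : h * ind = s.indicator h := by
    funext ω
    simp only [Pi.mul_apply, hind, Set.indicator_apply]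
    split <;> simp
  have hfint : Integrable (h * ind) P := by
    rw [hfe]; exact hhint.indicator hsA
  have hfzero : ∀ B : Set 𝒳, MeasurableSet B → ∫ ω in X ⁻¹' B, (h * ind) ω ∂P = 0 := by
    intro B hB
    have h1 : ∫ ω in X ⁻¹' B, (h * ind) ω ∂P = ∫ ω in X ⁻¹' B ∩ s, h ω ∂P := by
      rw [hfe]
      exact setIntegral_indicator hsA
    rw [h1, hh]
    rw [integral_sub hνint.integrableOn hmint.integrableOn, hkey B hB]
    ring
  have hc0 : (fun _ => (0 : ℝ)) =ᵐ[P] P[h * ind|MeasurableSpace.comap X inferInstance] := by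
    refine ae_eq_condExp_of_forall_setIntegral_eq hle hfint
      (fun t _ _ => (integrable_zero _ _ _).integrableOn)
      ?_ stronglyMeasurable_const.aestronglyMeasurable
    rintro t ⟨B, hB, rfl⟩ _
    rw [hfzero B hB]
    simp
  have heint : Integrable (fun ω => e (X ω)) P := by
    refine (integrable_const (1 : ℝ)).mono' (he.comp hX).aestronglyMeasurable ?_
    filter_upwards [hpos] with ω hω
    rw [Real.norm_eq_abs, abs_le]
    constructor
    · linarith [hω.1]
    · linarith [hω.2]
  have hePSce : (fun ω => e (X ω)) =ᵐ[P] P[ind|MeasurableSpace.comap X inferInstance] := by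
    refine ae_eq_condExp_of_forall_setIntegral_eq hle hindint
      (fun t _ _ => heint.integrableOn)
      ?_ ((he.comp hXc).stronglyMeasurable.aestronglyMeasurable)
    rintro t ⟨B, hB, rfl⟩ _
    rw [hePS B hB, hind]
    rw [setIntegral_indicator hsA, setIntegral_const, smul_eq_mul, mul_one, measureReal_def]
  have hmul : P[h * ind|MeasurableSpace.comap X inferInstance]
      =ᵐ[P] h * P[ind|MeasurableSpace.comap X inferInstance] :=
    condExp_mul_of_stronglyMeasurable_left hhm hfint hindint
  have hze : ∀ᵐ ω ∂P, h ω * e (X ω) = 0 := by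
    filter_upwards [hc0, hmul, hePSce] with ω h1 h2 h3
    simp only [Pi.mul_apply] at h2
    rw [h3, ← h2, ← h1]
  have hz : ∀ᵐ ω ∂P, ν (X ω) = m (X ω) := by
    filter_upwards [hze, hpos] with ω h1 h2
    have hne : e (X ω) ≠ 0 := by
      have := h2.1; intro hc; rw [hc] at this; linarith
    rcases mul_eq_zero.mp h1 with hzz | hzz
    · have : ν (X ω) - m (X ω) = 0 := hzz
      linarith
    · exact absurd hzz hne
  congr 1
  rw [hνCE w hw]
  refine setIntegral_congr_ae (hX hw) ?_
  filter_upwards [hz] with ω hω _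
  exact hω
end

section
/- Under consistency, mean exchangeability and positivity, the subgroup-specific potential outcome mean admits the inverse probability weighting representation: for every measurable subgroup w ⊆ 𝒳 with P(X ∈ w) > 0, ∫_{{X ∈ w}} Y^a dP = ∫_Ω 1{X ∈ w} · 1{A = a} · Y / e_a(X) dP; that is, E[Y^a | X ∈ w] = (1/P(X ∈ w)) · E[ 1{X ∈ w, A = a} Y / e_a(X) ]. -/
open MeasureTheory

lemma aux_mul_eq
    {Ω : Type*} {mΩ : MeasurableSpace Ω} (P : Measure Ω) [IsProbabilityMeasure P]
    {𝒳 : Type*} [MeasurableSpace 𝒳]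
    (X : Ω → 𝒳) (hX : Measurable X)
    (f1 f2 : Ω → ℝ) (hf1 : Integrable f1 P) (hf2 : Integrable f2 P)
    (hset : ∀ B : Set 𝒳, MeasurableSet B →
      ∫ ω in X ⁻¹' B, f1 ω ∂P = ∫ ω in X ⁻¹' B, f2 ω ∂P)
    (g : 𝒳 → ℝ) (hg : Measurable g)
    (hg1 : Integrable (fun ω => g (X ω) * f1 ω) P)
    (hg2 : Integrable (fun ω => g (X ω) * f2 ω) P) :
    ∫ ω, g (X ω) * f1 ω ∂P = ∫ ω, g (X ω) * f2 ω ∂P := by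
  have hm : MeasurableSpace.comap X ‹MeasurableSpace 𝒳› ≤ mΩ := hX.comap_le
  haveI : SigmaFinite (P.trim hm) := by
    have : IsFiniteMeasure (P.trim hm) := isFiniteMeasure_trim hm
    infer_instance
  have hXm : Measurable[MeasurableSpace.comap X ‹MeasurableSpace 𝒳›] X := fun s hs => ⟨s, hs, rfl⟩
  have hgm : StronglyMeasurable[MeasurableSpace.comap X ‹MeasurableSpace 𝒳›] (fun ω => g (X ω)) :=
    (hg.comp hXm).stronglyMeasurable
  have hcond : P[f1|MeasurableSpace.comap X ‹MeasurableSpace 𝒳›]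
      =ᵐ[P] P[f2|MeasurableSpace.comap X ‹MeasurableSpace 𝒳›] := by
    refine ae_eq_condExp_of_forall_setIntegral_eq hm hf2
      (fun s _ _ => integrable_condExp.integrableOn)
      (fun s hs _ => ?_) stronglyMeasurable_condExp.aestronglyMeasurable
    obtain ⟨B, hB, rfl⟩ := hs
    rw [setIntegral_condExp hm hf1 ⟨B, hB, rfl⟩]
    exact hset B hB
  calc ∫ ω, g (X ω) * f1 ω ∂P
      = ∫ ω, (P[fun ω => g (X ω) * f1 ω|MeasurableSpace.comap X ‹MeasurableSpace 𝒳›]) ω ∂P :=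
        (integral_condExp hm).symm
    _ = ∫ ω, g (X ω) * (P[f1|MeasurableSpace.comap X ‹MeasurableSpace 𝒳›]) ω ∂P :=
        integral_congr_ae ((condExp_mul_of_stronglyMeasurable_left hgm hg1 hf1).mono fun ω h => h)
    _ = ∫ ω, g (X ω) * (P[f2|MeasurableSpace.comap X ‹MeasurableSpace 𝒳›]) ω ∂P :=
        integral_congr_ae (hcond.mono fun ω h => congrArg (fun t => g (X ω) * t) h)
    _ = ∫ ω, (P[fun ω => g (X ω) * f2 ω|MeasurableSpace.comap X ‹MeasurableSpace 𝒳›]) ω ∂P :=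
        (integral_congr_ae ((condExp_mul_of_stronglyMeasurable_left hgm hg2 hf2).mono fun ω h => h)).symm
    _ = ∫ ω, g (X ω) * f2 ω ∂P := integral_condExp hm

/-- Under consistency, mean exchangeability and positivity, the
subgroup-specific potential outcome mean admits the inverse probability weighting
representation: `∫_{X ∈ w} Y^a dP = ∫ 1{X ∈ w} 1{A = a} Y / e_a(X) dP`. -/
theorem ipw_identification
    {Ω : Type*} [MeasurableSpace Ω] (P : Measure Ω) [IsProbabilityMeasure P]
    {𝒳 : Type*} [MeasurableSpace 𝒳]
    (X : Ω → 𝒳) (hX : Measurable X)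
    (A : Ω → ℝ) (hA : Measurable A) (hA01 : ∀ ω, A ω = 0 ∨ A ω = 1)
    (Y : Ω → ℝ) (hY : Measurable Y) (hYint : Integrable Y P)
    (a : ℝ) (ha : a = 0 ∨ a = 1)
    (Y1 Y0 : Ω → ℝ) (hY1m : Measurable Y1) (hY0m : Measurable Y0)
    (hY1int : Integrable Y1 P) (hY0int : Integrable Y0 P)
    (Ya : Ω → ℝ) (hYa : Ya = if a = 1 then Y1 else Y0)
    -- consistency of potential outcomes
    (hcons : ∀ᵐ ω ∂P, Y ω = A ω * Y1 ω + (1 - A ω) * Y0 ω)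
    -- a version of the propensity score
    (e : 𝒳 → ℝ) (he : Measurable e)
    (hePS : ∀ B : Set 𝒳, MeasurableSet B →
      ∫ ω in X ⁻¹' B, e (X ω) ∂P = (P (X ⁻¹' B ∩ {ω | A ω = a})).toReal)
    -- a version of E[Y^a | X]
    (ν : 𝒳 → ℝ) (hν : Measurable ν)
    (hνint : Integrable (fun ω => ν (X ω)) P)
    (hνCE : ∀ B : Set 𝒳, MeasurableSet B →
      ∫ ω in X ⁻¹' B, Ya ω ∂P = ∫ ω in X ⁻¹' B, ν (X ω) ∂P)
    -- mean exchangeability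
    (hexch : ∀ B : Set 𝒳, MeasurableSet B →
      ∫ ω in X ⁻¹' B ∩ {ω | A ω = a}, Ya ω ∂P
        = ∫ ω in X ⁻¹' B ∩ {ω | A ω = a}, ν (X ω) ∂P)
    -- positivity
    (ε : ℝ) (hε : 0 < ε)
    (hpos : ∀ᵐ ω ∂P, ε ≤ e (X ω) ∧ e (X ω) ≤ 1 - ε)
    -- the subgroup
    (w : Set 𝒳) (hw : MeasurableSet w)
    (hwpos : 0 < (P (X ⁻¹' w)).toReal) :
    ∫ ω in X ⁻¹' w, Ya ω ∂P
      = ∫ ω, (X ⁻¹' w ∩ {ω' | A ω' = a}).indicator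
          (fun ω' => Y ω' / e (X ω')) ω ∂P := by
  -- notation
  have hs : MeasurableSet {ω | A ω = a} := hA (measurableSet_singleton a)
  set s : Set Ω := {ω | A ω = a} with hs_def
  have hYam : Measurable Ya := by rw [hYa]; split_ifs <;> assumption
  have hYaint : Integrable Ya P := by rw [hYa]; split_ifs <;> assumption
  -- pointwise facts from positivity
  have hfacts : ∀ᵐ ω ∂P, 0 < e (X ω) ∧ (e (X ω))⁻¹ ≤ ε⁻¹ ∧ e (X ω) ≤ 1 := by
    filter_upwards [hpos] with ω ⟨h1, h2⟩
    have h0 : 0 < e (X ω) := lt_of_lt_of_le hε h1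
    exact ⟨h0, inv_anti₀ hε h1, h2.trans (by linarith)⟩
  set g : 𝒳 → ℝ := w.indicator (fun x => (e x)⁻¹) with hg_def
  set g' : 𝒳 → ℝ := w.indicator (fun x => ν x / e x) with hg'_def
  have hgmeas : Measurable g := (he.inv).indicator hw
  have hg'meas : Measurable g' := (hν.div he).indicator hw
  have hgbound : ∀ᵐ ω ∂P, |g (X ω)| ≤ ε⁻¹ := by
    filter_upwards [hfacts] with ω ⟨h0, hinv, _⟩
    by_cases hwm : X ω ∈ w
    · rw [hg_def, Set.indicator_of_mem hwm, abs_of_pos (inv_pos.mpr h0)]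
      exact hinv
    · rw [hg_def, Set.indicator_of_notMem hwm, abs_zero]
      positivity
  have hg'bound : ∀ᵐ ω ∂P, |g' (X ω)| ≤ ε⁻¹ * |ν (X ω)| := by
    filter_upwards [hfacts] with ω ⟨h0, hinv, _⟩
    by_cases hwm : X ω ∈ w
    · rw [hg'_def, Set.indicator_of_mem hwm, abs_div, abs_of_pos h0, div_eq_mul_inv, mul_comm]
      exact mul_le_mul_of_nonneg_right hinv (abs_nonneg _)
    · rw [hg'_def, Set.indicator_of_notMem hwm, abs_zero]
      positivity
  -- integrability helpers
  have hmul_int : ∀ f : Ω → ℝ, Measurable f → Integrable f P →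
      Integrable (fun ω => g (X ω) * f ω) P := fun f hfm hf => by
    refine Integrable.mono' (hf.abs.const_mul ε⁻¹)
      (((hgmeas.comp hX).mul hfm).aestronglyMeasurable) ?_
    filter_upwards [hgbound] with ω hb
    simp only [Real.norm_eq_abs, abs_mul]
    exact mul_le_mul_of_nonneg_right hb (abs_nonneg _)
  have hmul_int' : ∀ f : Ω → ℝ, Measurable f → (∀ᵐ ω ∂P, |f ω| ≤ 1) →
      Integrable (fun ω => g' (X ω) * f ω) P := fun f hfm hfb => by
    refine Integrable.mono' ((hνint.abs.const_mul ε⁻¹))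
      (((hg'meas.comp hX).mul hfm).aestronglyMeasurable) ?_
    filter_upwards [hg'bound, hfb] with ω hb hf1
    simp only [Real.norm_eq_abs, abs_mul]
    calc |g' (X ω)| * |f ω| ≤ ε⁻¹ * |ν (X ω)| * 1 :=
          mul_le_mul hb hf1 (abs_nonneg _) (by positivity)
      _ = ε⁻¹ * |ν (X ω)| := mul_one _
  have heint : Integrable (fun ω => e (X ω)) P := by
    refine Integrable.mono' (integrable_const (1:ℝ)) ((he.comp hX).aestronglyMeasurable) ?_
    filter_upwards [hfacts] with ω ⟨h0, _, h1⟩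
    rw [Real.norm_eq_abs, abs_of_pos h0]; exact h1
  have hind1 : Integrable (fun ω => s.indicator (fun _ => (1:ℝ)) ω) P :=
    (integrable_const (1:ℝ)).indicator hs
  -- consistency
  have hconsa : (fun ω => s.indicator Y ω) =ᵐ[P] (fun ω => s.indicator Ya ω) := by
    filter_upwards [hcons] with ω hω
    by_cases hmem : ω ∈ s
    · have hAa : A ω = a := hmem
      rw [Set.indicator_of_mem hmem, Set.indicator_of_mem hmem]
      rcases ha with h0 | h1
      · rw [hYa, if_neg (by rw [h0]; norm_num), hω, hAa, h0]; ring
      · rw [hYa, if_pos h1, hω, hAa, h1]; ring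
    · rw [Set.indicator_of_notMem hmem, Set.indicator_of_notMem hmem]
  -- two applications of the auxiliary lemma
  have step_exch : ∫ ω, g (X ω) * s.indicator (fun ω' => ν (X ω')) ω ∂P
      = ∫ ω, g (X ω) * s.indicator Ya ω ∂P := by
    refine aux_mul_eq P X hX _ _ (hνint.indicator hs) (hYaint.indicator hs)
      (fun B hB => ?_) g hgmeas
      (hmul_int _ ((hν.comp hX).indicator hs) (hνint.indicator hs))
      (hmul_int _ (hYam.indicator hs) (hYaint.indicator hs))
    rw [setIntegral_indicator hs, setIntegral_indicator hs]
    exact (hexch B hB).symm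
  have step_ps : ∫ ω, g' (X ω) * s.indicator (fun _ => (1:ℝ)) ω ∂P
      = ∫ ω, g' (X ω) * e (X ω) ∂P := by
    refine aux_mul_eq P X hX _ _ hind1 heint (fun B hB => ?_) g' hg'meas
      (hmul_int' _ (measurable_const.indicator hs) (Filter.Eventually.of_forall fun ω => ?_))
      (hmul_int' _ (he.comp hX) ?_)
    · rw [setIntegral_indicator hs, setIntegral_const, smul_eq_mul, mul_one]
      exact (hePS B hB).symm
    · by_cases hmem : ω ∈ s
      · rw [Set.indicator_of_mem hmem]; norm_num
      · rw [Set.indicator_of_notMem hmem]; norm_num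
    · filter_upwards [hfacts] with ω ⟨h0, _, h1⟩
      rw [abs_of_pos h0]; exact h1
  -- pointwise identities
  have heq1 : ∀ ω, (X ⁻¹' w ∩ s).indicator (fun ω' => Y ω' / e (X ω')) ω
      = g (X ω) * s.indicator Y ω := by
    intro ω
    by_cases hwm : X ω ∈ w <;> by_cases hsm : ω ∈ s <;>
      simp [Set.indicator_apply, Set.mem_inter_iff, hwm, hsm, hg_def,
        div_eq_mul_inv, mul_comm]
  have heq2 : ∀ ω, g (X ω) * s.indicator (fun ω' => ν (X ω')) ω
      = g' (X ω) * s.indicator (fun _ => (1:ℝ)) ω := by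
    intro ω
    by_cases hwm : X ω ∈ w <;> by_cases hsm : ω ∈ s <;>
      simp [Set.indicator_apply, hwm, hsm, hg_def, hg'_def, div_eq_mul_inv, mul_comm]
  have heq3 : (fun ω => g' (X ω) * e (X ω))
      =ᵐ[P] (fun ω => (X ⁻¹' w).indicator (fun ω' => ν (X ω')) ω) := by
    filter_upwards [hfacts] with ω ⟨h0, _, _⟩
    by_cases hwm : X ω ∈ w
    · simp [Set.indicator_apply, hwm, hg'_def, div_mul_cancel₀ _ (ne_of_gt h0)]
    · simp [Set.indicator_apply, hwm, hg'_def]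
  calc ∫ ω in X ⁻¹' w, Ya ω ∂P
      = ∫ ω in X ⁻¹' w, ν (X ω) ∂P := hνCE w hw
    _ = ∫ ω, (X ⁻¹' w).indicator (fun ω' => ν (X ω')) ω ∂P :=
        (integral_indicator (hX hw)).symm
    _ = ∫ ω, g' (X ω) * e (X ω) ∂P := (integral_congr_ae heq3).symm
    _ = ∫ ω, g' (X ω) * s.indicator (fun _ => (1:ℝ)) ω ∂P := step_ps.symm
    _ = ∫ ω, g (X ω) * s.indicator (fun ω' => ν (X ω')) ω ∂P :=
        (integral_congr_ae (Filter.Eventually.of_forall fun ω => heq2 ω)).symm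
    _ = ∫ ω, g (X ω) * s.indicator Ya ω ∂P := step_exch
    _ = ∫ ω, g (X ω) * s.indicator Y ω ∂P :=
        (integral_congr_ae (hconsa.mono fun ω h => congrArg (fun t => g (X ω) * t) h)).symm
    _ = ∫ ω, (X ⁻¹' w ∩ s).indicator (fun ω' => Y ω' / e (X ω')) ω ∂P :=
        (integral_congr_ae (Filter.Eventually.of_forall fun ω => heq1 ω)).symm
end

section
/- Under consistency, mean exchangeability and positivity, any version m_a of the outcome regression E[Y | X, A = a] coincides almost surely with any version ν_a of the conditional potential outcome mean E[Y^a | X]: m_a(X) = ν_a(X) P-almost surely. -/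
open MeasureTheory
open scoped ENNReal NNReal

/-- Under consistency, mean exchangeability and positivity, any version
`m_a` of the outcome regression `E[Y | X, A = a]` coincides `P`-almost surely with any
version `ν_a` of the conditional potential outcome mean `E[Y^a | X]`. -/
theorem outcome_regression_eq_conditional_potential_outcome
    {Ω : Type*} [MeasurableSpace Ω] (P : Measure Ω) [IsProbabilityMeasure P]
    {𝒳 : Type*} [MeasurableSpace 𝒳]
    (X : Ω → 𝒳) (hX : Measurable X)
    (A : Ω → ℝ) (hA : Measurable A) (hA01 : ∀ ω, A ω = 0 ∨ A ω = 1)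
    (Y : Ω → ℝ) (hY : Measurable Y) (hYint : Integrable Y P)
    (a : ℝ) (ha : a = 0 ∨ a = 1)
    (Y1 Y0 : Ω → ℝ) (hY1m : Measurable Y1) (hY0m : Measurable Y0)
    (hY1int : Integrable Y1 P) (hY0int : Integrable Y0 P)
    (Ya : Ω → ℝ) (hYa : Ya = if a = 1 then Y1 else Y0)
    -- consistency of potential outcomes
    (hcons : ∀ᵐ ω ∂P, Y ω = A ω * Y1 ω + (1 - A ω) * Y0 ω)
    -- a version of the propensity score
    (e : 𝒳 → ℝ) (he : Measurable e)
    (hePS : ∀ B : Set 𝒳, MeasurableSet B →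
      ∫ ω in X ⁻¹' B, e (X ω) ∂P = (P (X ⁻¹' B ∩ {ω | A ω = a})).toReal)
    -- a version of the outcome regression E[Y | X, A = a]
    (m : 𝒳 → ℝ) (hm : Measurable m)
    (hmint : Integrable (fun ω => m (X ω)) P)
    (hmOR : ∀ B : Set 𝒳, MeasurableSet B →
      ∫ ω in X ⁻¹' B ∩ {ω | A ω = a}, Y ω ∂P
        = ∫ ω in X ⁻¹' B ∩ {ω | A ω = a}, m (X ω) ∂P)
    -- a version of E[Y^a | X]
    (ν : 𝒳 → ℝ) (hν : Measurable ν)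
    (hνint : Integrable (fun ω => ν (X ω)) P)
    (hνCE : ∀ B : Set 𝒳, MeasurableSet B →
      ∫ ω in X ⁻¹' B, Ya ω ∂P = ∫ ω in X ⁻¹' B, ν (X ω) ∂P)
    -- mean exchangeability
    (hexch : ∀ B : Set 𝒳, MeasurableSet B →
      ∫ ω in X ⁻¹' B ∩ {ω | A ω = a}, Ya ω ∂P
        = ∫ ω in X ⁻¹' B ∩ {ω | A ω = a}, ν (X ω) ∂P)
    -- positivity
    (ε : ℝ) (hε : 0 < ε)
    (hpos : ∀ᵐ ω ∂P, ε ≤ e (X ω) ∧ e (X ω) ≤ 1 - ε) :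
    ∀ᵐ ω ∂P, m (X ω) = ν (X ω) := by

  classical
  set S : Set Ω := {ω | A ω = a} with hSdef
  have hS : MeasurableSet S := hA (measurableSet_singleton a)
  -- On S, Y = Ya a.e.
  have hYYa : ∀ᵐ ω ∂P, ω ∈ S → Y ω = Ya ω := by
    filter_upwards [hcons] with ω hω hωS
    have hAa : A ω = a := hωS
    rcases ha with ha0 | ha1
    · have : Ya = Y0 := by rw [hYa, if_neg (by rw [ha0]; norm_num)]
      rw [this, hω, hAa, ha0]; ring
    · have : Ya = Y1 := by rw [hYa, if_pos ha1]
      rw [this, hω, hAa, ha1]; ring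
  set g : 𝒳 → ℝ := fun x => m x - ν x with hgdef
  have hgmeas : Measurable g := hm.sub hν
  have hgXint : Integrable (fun ω => g (X ω)) P := hmint.sub hνint
  -- key: ∫ over X⁻¹B ∩ S of g(X) is zero
  have hzero : ∀ B : Set 𝒳, MeasurableSet B →
      ∫ ω in X ⁻¹' B ∩ S, g (X ω) ∂P = 0 := by
    intro B hB
    have h1 : ∫ ω in X ⁻¹' B ∩ S, Y ω ∂P = ∫ ω in X ⁻¹' B ∩ S, Ya ω ∂P := by
      refine setIntegral_congr_ae ((hX hB).inter hS) ?_
      filter_upwards [hYYa] with ω h hω using h hω.2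
    have h2 : ∫ ω in X ⁻¹' B ∩ S, m (X ω) ∂P = ∫ ω in X ⁻¹' B ∩ S, ν (X ω) ∂P := by
      rw [← hmOR B hB, h1, hexch B hB]
    rw [hgdef]
    simp only
    rw [integral_sub (hmint.integrableOn) (hνint.integrableOn), h2, sub_self]
  set Q : Measure 𝒳 := P.map X with hQdef
  have hXaem : AEMeasurable X P := hX.aemeasurable
  -- positivity transferred to Q
  have hposQ : ∀ᵐ x ∂Q, ε ≤ e x ∧ e x ≤ 1 - ε := by
    rw [hQdef, ae_map_iff hXaem]
    · exact hpos
    · exact (measurableSet_le measurable_const he).inter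
        (measurableSet_le he measurable_const)
  -- QS = Q.withDensity (ofReal ∘ e)
  set QS : Measure 𝒳 := (P.restrict S).map X with hQSdef
  have hwd : QS = Q.withDensity (fun x => ENNReal.ofReal (e x)) := by
    ext B hB
    have hQS : QS B = P (X ⁻¹' B ∩ S) := by
      rw [hQSdef, Measure.map_apply hX hB, Measure.restrict_apply (hX hB)]
    have heQint : Integrable e Q := by
      refine Integrable.mono' (integrable_const 1) he.aestronglyMeasurable ?_
      filter_upwards [hposQ] with x hx
      rw [Real.norm_eq_abs, abs_le]
      constructor <;> linarith [hε.le, hx.1, hx.2]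
    have hnn : 0 ≤ᵐ[Q.restrict B] e := by
      refine ae_restrict_of_ae ?_
      filter_upwards [hposQ] with x hx using le_trans hε.le hx.1
    have hint : ∫ x in B, e x ∂Q = (∫⁻ x in B, ENNReal.ofReal (e x) ∂Q).toReal := by
      rw [integral_eq_lintegral_of_nonneg_ae hnn
        (he.aestronglyMeasurable.restrict)]
    have hmap : ∫ x in B, e x ∂Q = ∫ ω in X ⁻¹' B, e (X ω) ∂P := by
      rw [hQdef]
      exact setIntegral_map hB (he.aestronglyMeasurable) hXaem
    have hfin : ∫⁻ x in B, ENNReal.ofReal (e x) ∂Q ≠ ⊤ := by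
      have hle : ∫⁻ x in B, ENNReal.ofReal (e x) ∂Q ≤ ∫⁻ _ in B, 1 ∂Q := by
        refine lintegral_mono_ae ?_
        refine ae_restrict_of_ae ?_
        filter_upwards [hposQ] with x hx
        exact ENNReal.ofReal_le_one.mpr (by linarith [hx.2])
      refine ne_of_lt (lt_of_le_of_lt hle ?_)
      haveI : IsProbabilityMeasure Q := Measure.isProbabilityMeasure_map hXaem
      rw [lintegral_const, one_mul]
      exact measure_lt_top _ _
    have htoReal : (P (X ⁻¹' B ∩ S)).toReal
        = (∫⁻ x in B, ENNReal.ofReal (e x) ∂Q).toReal := by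
      rw [← hePS B hB, ← hmap, hint]
    have hPfin : P (X ⁻¹' B ∩ S) ≠ ⊤ := measure_ne_top _ _
    rw [hQS, withDensity_apply _ hB]
    exact (ENNReal.toReal_eq_toReal_iff' hPfin hfin).mp htoReal
  -- integrability of g wrt Q
  have hgQint : Integrable g Q := by
    rw [hQdef, integrable_map_measure hgmeas.aestronglyMeasurable hXaem]
    exact hgXint
  -- the weighted function
  set h : 𝒳 → ℝ := fun x => ((e x).toNNReal : ℝ) * g x with hhdef
  have hhint : Integrable h Q := by
    refine hgQint.bdd_mul (c := 1)
      (Measurable.aestronglyMeasurable (measurable_coe_nnreal_real.comp he.real_toNNReal)) ?_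
    filter_upwards [hposQ] with x hx
    rw [Real.norm_eq_abs, abs_of_nonneg (by positivity)]
    calc ((e x).toNNReal : ℝ) = max (e x) 0 := by
          simp [Real.coe_toNNReal']
      _ ≤ 1 := max_le (by linarith [hx.2]) zero_le_one
  have hhzero : ∀ s : Set 𝒳, MeasurableSet s → Q s < ⊤ → ∫ x in s, h x ∂Q = 0 := by
    intro B hB _
    have e1 : ∫ x in B, h x ∂Q
        = ∫ x in B, g x ∂(Q.withDensity (fun x => ((e x).toNNReal : ℝ≥0∞))) := by
      rw [setIntegral_withDensity_eq_setIntegral_smul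
        (by exact he.real_toNNReal) g hB]
      simp [hhdef, NNReal.smul_def]
    have e2 : (fun x => ((e x).toNNReal : ℝ≥0∞)) = fun x => ENNReal.ofReal (e x) := by
      ext x; rw [ENNReal.ofReal]
    rw [e1, e2, ← hwd, hQSdef]
    rw [setIntegral_map hB hgmeas.aestronglyMeasurable
      (hX.aemeasurable.mono_measure Measure.restrict_le_self)]
    rw [Measure.restrict_restrict (hX hB)]
    exact hzero B hB
  have hh0 : h =ᵐ[Q] 0 := hhint.ae_eq_zero_of_forall_setIntegral_eq_zero hhzero
  have hg0 : g =ᵐ[Q] 0 := by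
    filter_upwards [hh0, hposQ] with x hx hpx
    have hne : ((e x).toNNReal : ℝ) ≠ 0 := by
      have : (0:ℝ) < (e x).toNNReal := by
        rw [Real.coe_toNNReal']
        exact lt_max_of_lt_left (lt_of_lt_of_le hε hpx.1)
      exact ne_of_gt this
    have := hx
    simp only [hhdef, Pi.zero_apply] at this
    exact (mul_eq_zero.mp this).resolve_left hne
  have : ∀ᵐ ω ∂P, g (X ω) = 0 := by
    have := (ae_map_iff hXaem (hgmeas (measurableSet_singleton 0))).mp ?_
    · exact this
    · filter_upwards [hg0] with x hx using hx
  filter_upwards [this] with ω hω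
  have : m (X ω) - ν (X ω) = 0 := hω
  linarith
end

section
/- The inverse probability weighting functional and the g-formula functional agree on the observed data: for every measurable subgroup w ⊆ 𝒳, ∫_Ω 1{X ∈ w} · 1{A = a} · Y / e_a(X) dP = ∫_{{X ∈ w}} m_a(X) dP, where e_a is a version of the propensity score satisfying e_a(X) ≥ ε almost surely for some ε > 0 and m_a is a version of the outcome regression E[Y | X, A = a]. -/
open MeasureTheory

lemma integrable_eX {Ω : Type*} [MeasurableSpace Ω] {P : Measure Ω} [IsProbabilityMeasure P]
    {𝒳 : Type*} [MeasurableSpace 𝒳] {X : Ω → 𝒳} {e : 𝒳 → ℝ} {S : Set Ω}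
    (hX : Measurable X) (he : Measurable e)
    (hePS : ∀ B : Set 𝒳, MeasurableSet B →
      ∫ ω in X ⁻¹' B, e (X ω) ∂P = (P (X ⁻¹' B ∩ S)).toReal)
    (hnn : ∀ᵐ ω ∂P, 0 ≤ e (X ω)) : Integrable (fun ω => e (X ω)) P := by
  have hg : Measurable fun ω => e (X ω) := he.comp hX
  refine ⟨hg.aestronglyMeasurable, ?_⟩
  rw [hasFiniteIntegral_iff_norm]
  set B : ℕ → Set Ω := fun n => X ⁻¹' (e ⁻¹' Set.Iic (n : ℝ)) with hBdef
  have hBmeas : ∀ n, MeasurableSet (B n) := fun n => hX (he measurableSet_Iic)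
  have key : ∀ n, ∫⁻ ω in B n, ENNReal.ofReal ‖e (X ω)‖ ∂P ≤ 1 := by
    intro n
    have hInt : IntegrableOn (fun ω => e (X ω)) (B n) P := by
      refine Integrable.mono' (integrable_const (n : ℝ)) hg.aestronglyMeasurable.restrict ?_
      filter_upwards [ae_restrict_mem (hBmeas n), ae_restrict_of_ae hnn] with ω h1 h2
      rw [Real.norm_of_nonneg h2]; exact h1
    have hnn' : 0 ≤ᵐ[P.restrict (B n)] fun ω => e (X ω) := ae_restrict_of_ae hnn
    have h1 : ∫⁻ ω in B n, ENNReal.ofReal ‖e (X ω)‖ ∂P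
        = ∫⁻ ω in B n, ENNReal.ofReal (e (X ω)) ∂P := by
      refine lintegral_congr_ae ?_
      filter_upwards [hnn'] with ω h2
      rw [Real.norm_of_nonneg h2]
    rw [h1, ← ofReal_integral_eq_lintegral_ofReal hInt hnn',
      hePS _ (he measurableSet_Iic), ENNReal.ofReal_toReal (measure_ne_top P _)]
    exact prob_le_one
  have hmono : Monotone fun n => (B n).indicator fun ω => ENNReal.ofReal ‖e (X ω)‖ := by
    intro i j hij
    refine Set.indicator_le_indicator_of_subset (fun ω hω => ?_) (fun _ => zero_le)
    show e (X ω) ≤ (j : ℝ)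
    exact le_trans hω (Nat.cast_le.mpr hij)
  have hsup : ∀ ω, (⨆ n, (B n).indicator (fun ω => ENNReal.ofReal ‖e (X ω)‖) ω)
      = ENNReal.ofReal ‖e (X ω)‖ := by
    intro ω
    obtain ⟨n, hn⟩ := exists_nat_ge (e (X ω))
    refine le_antisymm (iSup_le fun k => Set.indicator_le_self _ _ ω) ?_
    have hω : ω ∈ B n := hn
    exact le_trans (Set.indicator_of_mem hω
      (fun ω => ENNReal.ofReal ‖e (X ω)‖)).symm.le (le_iSup (fun k => (B k).indicator (fun ω => ENNReal.ofReal ‖e (X ω)‖) ω) n)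
  calc ∫⁻ ω, ENNReal.ofReal ‖e (X ω)‖ ∂P
      = ∫⁻ ω, ⨆ n, (B n).indicator (fun ω => ENNReal.ofReal ‖e (X ω)‖) ω ∂P := by
        refine lintegral_congr fun ω => (hsup ω).symm
    _ = ⨆ n, ∫⁻ ω, (B n).indicator (fun ω => ENNReal.ofReal ‖e (X ω)‖) ω ∂P := by
        refine lintegral_iSup (fun n => Measurable.indicator ?_ (hBmeas n)) hmono
        exact ENNReal.measurable_ofReal.comp hg.norm
    _ ≤ 1 := by
        refine iSup_le fun n => ?_
        rw [lintegral_indicator (hBmeas n)]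
        exact key n
    _ < ⊤ := by norm_num
private abbrev sigmaX {Ω 𝒳 : Type*} [m𝒳 : MeasurableSpace 𝒳] (X : Ω → 𝒳) :
    MeasurableSpace Ω := m𝒳.comap X

private lemma comp_sm {α β : Type*} [mα : MeasurableSpace α] [MeasurableSpace β]
    {X : α → β} {g : β → ℝ} (hX : Measurable X) (hg : Measurable g) :
    StronglyMeasurable (fun a => g (X a)) := (hg.comp hX).stronglyMeasurable

/-- The inverse probability weighting functional and the g-formula
functional agree on the observed data: for every measurable subgroup `w ⊆ 𝒳`,
`∫ 1{X ∈ w} 1{A = a} Y / e_a(X) dP = ∫_{X ∈ w} m_a(X) dP`. -/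
theorem ipw_eq_gformula
    {Ω : Type*} [MeasurableSpace Ω] (P : Measure Ω) [IsProbabilityMeasure P]
    {𝒳 : Type*} [MeasurableSpace 𝒳]
    (X : Ω → 𝒳) (hX : Measurable X)
    (A : Ω → ℝ) (hA : Measurable A) (hA01 : ∀ ω, A ω = 0 ∨ A ω = 1)
    (Y : Ω → ℝ) (hY : Measurable Y) (hYint : Integrable Y P)
    (a : ℝ) (ha : a = 0 ∨ a = 1)
    -- a version of the propensity score, bounded below by ε > 0 a.s.
    (e : 𝒳 → ℝ) (he : Measurable e)
    (hePS : ∀ B : Set 𝒳, MeasurableSet B →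
      ∫ ω in X ⁻¹' B, e (X ω) ∂P = (P (X ⁻¹' B ∩ {ω | A ω = a})).toReal)
    (ε : ℝ) (hε : 0 < ε) (hpos : ∀ᵐ ω ∂P, ε ≤ e (X ω))
    -- a version of the outcome regression E[Y | X, A = a]
    (m : 𝒳 → ℝ) (hm : Measurable m)
    (hmint : Integrable (fun ω => m (X ω)) P)
    (hmOR : ∀ B : Set 𝒳, MeasurableSet B →
      ∫ ω in X ⁻¹' B ∩ {ω | A ω = a}, Y ω ∂P
        = ∫ ω in X ⁻¹' B ∩ {ω | A ω = a}, m (X ω) ∂P)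
    -- the subgroup
    (w : Set 𝒳) (hw : MeasurableSet w) :
    ∫ ω, (X ⁻¹' w ∩ {ω' | A ω' = a}).indicator (fun ω' => Y ω' / e (X ω')) ω ∂P
      = ∫ ω in X ⁻¹' w, m (X ω) ∂P := by
  classical
  set S : Set Ω := {ω' | A ω' = a} with hSdef
  have hS : MeasurableSet S := hA (measurableSet_singleton a)
  have hm_le : sigmaX X ≤ ‹MeasurableSpace Ω› := by exact hX.comap_le
  haveI : SigmaFinite (P.trim hm_le) := by
    haveI : IsFiniteMeasure (P.trim hm_le) := isFiniteMeasure_trim hm_le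
    infer_instance
  have hXm : Measurable[sigmaX X] X := Measurable.of_comap_le le_rfl
  -- nonnegativity and nonvanishing of e ∘ X a.e.
  have hnn : ∀ᵐ ω ∂P, 0 ≤ e (X ω) := hpos.mono fun ω h => le_trans hε.le h
  have hne : ∀ᵐ ω ∂P, e (X ω) ≠ 0 := hpos.mono fun ω h => ne_of_gt (lt_of_lt_of_le hε h)
  have heint : Integrable (fun ω => e (X ω)) P := integrable_eX hX he hePS hnn
  -- the treatment indicator
  set χ : Ω → ℝ := S.indicator (fun _ => (1 : ℝ)) with hχdef
  have hχint : Integrable χ P := (integrable_const (1 : ℝ)).indicator hS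
  -- e ∘ X is a version of the conditional expectation of χ given σ(X)
  have hcond_e : (fun ω => e (X ω)) =ᵐ[P] P[χ | sigmaX X] := by
    refine ae_eq_condExp_of_forall_setIntegral_eq hm_le hχint
      (fun s hs _ => heint.integrableOn) (fun s hs _ => ?_)
      ((comp_sm (mα := sigmaX X) hXm he).aestronglyMeasurable)
    obtain ⟨B, hB, rfl⟩ := hs
    rw [hePS B hB, hχdef, setIntegral_indicator hS]
    simp [setIntegral_const, measureReal_def]
  -- the two conditional expectations agree
  have hind_int : Integrable (S.indicator Y) P := hYint.indicator hS
  have hindm_int : Integrable (S.indicator fun ω => m (X ω)) P := hmint.indicator hS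
  have hcond_eq : P[S.indicator Y | sigmaX X] =ᵐ[P] P[S.indicator (fun ω => m (X ω)) | sigmaX X] := by
    refine ae_eq_condExp_of_forall_setIntegral_eq hm_le hindm_int
      (fun s hs _ => integrable_condExp.integrableOn) (fun s hs _ => ?_)
      (stronglyMeasurable_condExp.aestronglyMeasurable)
    obtain ⟨B, hB, rfl⟩ := hs
    rw [setIntegral_condExp hm_le hind_int ⟨B, hB, rfl⟩,
      setIntegral_indicator hS, setIntegral_indicator hS]
    exact hmOR B hB
  -- the σ(X)-measurable weights
  set h₁ : Ω → ℝ := fun ω => (w.indicator fun x => (e x)⁻¹) (X ω) with h₁def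
  set h₂ : Ω → ℝ := fun ω => (w.indicator fun x => m x * (e x)⁻¹) (X ω) with h₂def
  have h₁meas : StronglyMeasurable[sigmaX X] h₁ :=
    comp_sm (mα := sigmaX X) hXm (he.inv.indicator hw)
  have h₂meas : StronglyMeasurable[sigmaX X] h₂ :=
    comp_sm (mα := sigmaX X) hXm ((hm.mul he.inv).indicator hw)
  have h₁bd : ∀ᵐ ω ∂P, |h₁ ω| ≤ ε⁻¹ := by
    filter_upwards [hpos] with ω hω
    simp only [h₁def]
    by_cases hmem : X ω ∈ w
    · rw [Set.indicator_of_mem hmem]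
      rw [abs_of_nonneg (inv_nonneg.mpr (le_trans hε.le hω))]
      exact inv_anti₀ hε hω
    · rw [Set.indicator_of_notMem hmem]
      simpa using inv_nonneg.mpr hε.le
  -- integrability facts
  have hprod₁ : Integrable (h₁ * S.indicator Y) P := by
    refine Integrable.mono' (hYint.abs.const_mul ε⁻¹)
      ((h₁meas.mono hm_le).aestronglyMeasurable.mul hind_int.aestronglyMeasurable) ?_
    filter_upwards [h₁bd] with ω hω
    rw [Pi.mul_apply, norm_mul, Real.norm_eq_abs]
    refine mul_le_mul hω ?_ (norm_nonneg _) (inv_nonneg.mpr hε.le)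
    simpa [Real.norm_eq_abs] using norm_indicator_le_norm_self (f := Y) (a := ω)
  have hprod₂ : Integrable (h₁ * S.indicator fun ω => m (X ω)) P := by
    refine Integrable.mono' (hmint.abs.const_mul ε⁻¹)
      ((h₁meas.mono hm_le).aestronglyMeasurable.mul hindm_int.aestronglyMeasurable) ?_
    filter_upwards [h₁bd] with ω hω
    rw [Pi.mul_apply, norm_mul, Real.norm_eq_abs]
    refine mul_le_mul hω ?_ (norm_nonneg _) (inv_nonneg.mpr hε.le)
    simpa [Real.norm_eq_abs] using
      norm_indicator_le_norm_self (f := fun ω => m (X ω)) (a := ω)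
  have h₂bd : ∀ᵐ ω ∂P, |h₂ ω| ≤ ε⁻¹ * |m (X ω)| := by
    filter_upwards [hpos] with ω hω
    simp only [h₂def]
    by_cases hmem : X ω ∈ w
    · rw [Set.indicator_of_mem hmem, abs_mul, mul_comm]
      refine mul_le_mul_of_nonneg_right ?_ (abs_nonneg _)
      rw [abs_of_nonneg (inv_nonneg.mpr (le_trans hε.le hω))]
      exact inv_anti₀ hε hω
    · rw [Set.indicator_of_notMem hmem]
      simpa using mul_nonneg (inv_nonneg.mpr hε.le) (abs_nonneg _)
  have hprod₃ : Integrable (h₂ * χ) P := by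
    refine Integrable.mono' (hmint.abs.const_mul ε⁻¹)
      ((h₂meas.mono hm_le).aestronglyMeasurable.mul hχint.aestronglyMeasurable) ?_
    filter_upwards [h₂bd] with ω hω
    rw [Pi.mul_apply, norm_mul, Real.norm_eq_abs]
    calc |h₂ ω| * ‖χ ω‖ ≤ (ε⁻¹ * |m (X ω)|) * 1 := by
          refine mul_le_mul hω ?_ (norm_nonneg _) (by positivity)
          rw [hχdef, Real.norm_eq_abs]
          by_cases hmem : ω ∈ S <;> simp [Set.indicator, hmem]
      _ = ε⁻¹ * |m (X ω)| := mul_one _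
  -- pointwise identifications
  have hpt1 : ∀ ω, (X ⁻¹' w ∩ S).indicator (fun ω' => Y ω' / e (X ω')) ω
      = (h₁ * S.indicator Y) ω := by
    intro ω
    by_cases h1 : X ω ∈ w <;> by_cases h2 : ω ∈ S <;>
      simp [h₁def, Set.indicator, h1, h2, Set.mem_inter_iff, Set.mem_preimage,
        div_eq_mul_inv, mul_comm]
  have hpt2 : ∀ ω, (h₁ * S.indicator fun ω' => m (X ω')) ω = (h₂ * χ) ω := by
    intro ω
    by_cases h1 : X ω ∈ w <;> by_cases h2 : ω ∈ S <;>
      simp [h₁def, h₂def, hχdef, Set.indicator, h1, h2, mul_comm]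
  calc ∫ ω, (X ⁻¹' w ∩ S).indicator (fun ω' => Y ω' / e (X ω')) ω ∂P
      = ∫ ω, (h₁ * S.indicator Y) ω ∂P :=
        integral_congr_ae (Filter.Eventually.of_forall hpt1)
    _ = ∫ ω, (P[h₁ * S.indicator Y | sigmaX X]) ω ∂P := (integral_condExp hm_le).symm
    _ = ∫ ω, (h₁ * P[S.indicator Y | sigmaX X]) ω ∂P :=
        integral_congr_ae (condExp_mul_of_stronglyMeasurable_left h₁meas hprod₁ hind_int)
    _ = ∫ ω, (h₁ * P[S.indicator (fun ω' => m (X ω')) | sigmaX X]) ω ∂P :=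
        integral_congr_ae (hcond_eq.mono fun ω hω => by
          rw [Pi.mul_apply, Pi.mul_apply, hω])
    _ = ∫ ω, (P[h₁ * S.indicator (fun ω' => m (X ω')) | sigmaX X]) ω ∂P :=
        (integral_congr_ae (condExp_mul_of_stronglyMeasurable_left h₁meas hprod₂ hindm_int)).symm
    _ = ∫ ω, (h₁ * S.indicator fun ω' => m (X ω')) ω ∂P := integral_condExp hm_le
    _ = ∫ ω, (h₂ * χ) ω ∂P := integral_congr_ae (Filter.Eventually.of_forall hpt2)
    _ = ∫ ω, (P[h₂ * χ | sigmaX X]) ω ∂P := (integral_condExp hm_le).symm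
    _ = ∫ ω, (h₂ * P[χ | sigmaX X]) ω ∂P :=
        integral_congr_ae (condExp_mul_of_stronglyMeasurable_left h₂meas hprod₃ hχint)
    _ = ∫ ω, h₂ ω * e (X ω) ∂P :=
        integral_congr_ae (hcond_e.symm.mono fun ω hω => by rw [Pi.mul_apply, hω])
    _ = ∫ ω, (X ⁻¹' w).indicator (fun ω' => m (X ω')) ω ∂P := by
        refine integral_congr_ae ?_
        filter_upwards [hne] with ω hω
        by_cases h1 : X ω ∈ w
        · simp [h₂def, Set.indicator, h1, Set.mem_preimage,
            mul_assoc, inv_mul_cancel₀ hω]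
        · simp [h₂def, Set.indicator, h1, Set.mem_preimage]
    _ = ∫ ω in X ⁻¹' w, m (X ω) ∂P := integral_indicator (hX hw)
end

section
/- The population mean of the subgroup inverse probability weighted treatment-effect contrast equals the g-formula contrast: for every measurable subgroup w ⊆ 𝒳, E[ 1{X ∈ w} · ( A·Y / e₁(X) − (1 − A)·Y / (1 − e₁(X)) ) ] = ∫_{{X ∈ w}} ( m₁(X) − m₀(X) ) dP, where e₁ is a version of the propensity score for treatment a = 1 with ε ≤ e₁(X) ≤ 1 − ε almost surely, and m₁, m₀ are versions of the outcome regressions E[Y | X, A = 1] and E[Y | X, A = 0]. -/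
open MeasureTheory

lemma pullout_integral {Ω : Type*} {m m0 : MeasurableSpace Ω} (hm : m ≤ m0)
    (P : Measure Ω) [SigmaFinite (P.trim hm)] {f g h : Ω → ℝ}
    (hf : Integrable f P) (hfg : g =ᵐ[P] P[f|m]) (hh : StronglyMeasurable[m] h)
    (hhf : Integrable (fun ω => h ω * f ω) P) :
    ∫ ω, h ω * f ω ∂P = ∫ ω, h ω * g ω ∂P := by
  have h2 : P[h * f|m] =ᵐ[P] h * P[f|m] := condExp_mul_of_stronglyMeasurable_left hh hhf hf
  calc ∫ ω, h ω * f ω ∂P = ∫ ω, (P[h * f|m]) ω ∂P := (integral_condExp hm).symm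
    _ = ∫ ω, (h * P[f|m]) ω ∂P := integral_congr_ae h2
    _ = ∫ ω, h ω * g ω ∂P := integral_congr_ae (by
        filter_upwards [hfg] with ω hω
        simp only [Pi.mul_apply, hω])

lemma arm_integral {Ω : Type*} [mΩ : MeasurableSpace Ω] {𝒳 : Type*} [m𝒳 : MeasurableSpace 𝒳]
    (P : Measure Ω) [IsProbabilityMeasure P]
    (X : Ω → 𝒳) (hX : Measurable X)
    (T : Ω → ℝ) (hT : Measurable T) (hT01 : ∀ ω, T ω = 0 ∨ T ω = 1)
    (Y : Ω → ℝ) (hY : Measurable Y) (hYint : Integrable Y P)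
    (e : 𝒳 → ℝ) (he : Measurable e)
    (ε : ℝ) (hε : 0 < ε) (hpos : ∀ᵐ ω ∂P, ε ≤ e (X ω) ∧ e (X ω) ≤ 1)
    (hePS : (fun ω => e (X ω)) =ᵐ[P] P[T | MeasurableSpace.comap X ‹_›])
    (mreg : 𝒳 → ℝ) (hmreg : Measurable mreg)
    (hmint : Integrable (fun ω => mreg (X ω)) P)
    (hOR : ∀ B : Set 𝒳, MeasurableSet B →
      ∫ ω in X ⁻¹' B ∩ {ω | T ω = 1}, Y ω ∂P
        = ∫ ω in X ⁻¹' B ∩ {ω | T ω = 1}, mreg (X ω) ∂P)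
    (w : Set 𝒳) (hw : MeasurableSet w) :
    ∫ ω, (X ⁻¹' w).indicator (fun ω' => T ω' * Y ω' / e (X ω')) ω ∂P
      = ∫ ω in X ⁻¹' w, mreg (X ω) ∂P := by
  have hm : MeasurableSpace.comap X m𝒳 ≤ mΩ := hX.comap_le
  have hXm : Measurable[MeasurableSpace.comap X m𝒳] X :=
    measurable_iff_comap_le.mpr le_rfl
  have hTset : MeasurableSet {ω | T ω = 1} := hT (measurableSet_singleton 1)
  have hTnorm : ∀ ω, ‖T ω‖ ≤ 1 := by
    intro ω; rcases hT01 ω with h | h <;> simp [h]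
  have hTint : Integrable T P :=
    Integrable.mono' (integrable_const 1) hT.aestronglyMeasurable
      (Filter.Eventually.of_forall hTnorm)
  have hTYint : Integrable (fun ω => T ω * Y ω) P := by
    refine Integrable.mono' hYint.norm ((hT.mul hY).aestronglyMeasurable) ?_
    refine Filter.Eventually.of_forall fun ω => ?_
    rw [norm_mul]
    calc ‖T ω‖ * ‖Y ω‖ ≤ 1 * ‖Y ω‖ :=
          mul_le_mul_of_nonneg_right (hTnorm ω) (norm_nonneg _)
      _ = ‖Y ω‖ := one_mul _
  have heb : ∀ᵐ ω ∂P, ‖e (X ω)‖ ≤ 1 := by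
    filter_upwards [hpos] with ω hω
    rw [Real.norm_eq_abs, abs_le]
    constructor <;> nlinarith [hω.1, hω.2]
  have hgint : Integrable (fun ω => mreg (X ω) * e (X ω)) P := by
    refine Integrable.mono' hmint.norm
      (((hmreg.comp hX).mul (he.comp hX)).aestronglyMeasurable) ?_
    filter_upwards [heb] with ω hω
    rw [norm_mul]
    calc ‖mreg (X ω)‖ * ‖e (X ω)‖ ≤ ‖mreg (X ω)‖ * 1 :=
          mul_le_mul_of_nonneg_left hω (norm_nonneg _)
      _ = ‖mreg (X ω)‖ := mul_one _
  have hTY_eq : ∀ ω, T ω * Y ω = ({ω | T ω = 1}).indicator Y ω := by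
    intro ω; rcases hT01 ω with h | h <;>
      simp [Set.indicator_apply, Set.mem_setOf_eq, h]
  have hTm_eq : ∀ ω, mreg (X ω) * T ω
      = ({ω | T ω = 1}).indicator (fun ω => mreg (X ω)) ω := by
    intro ω; rcases hT01 ω with h | h <;>
      simp [Set.indicator_apply, Set.mem_setOf_eq, h]
  -- key conditional expectation identity
  have hc : (fun ω => mreg (X ω) * e (X ω)) =ᵐ[P] P[fun ω => T ω * Y ω|MeasurableSpace.comap X m𝒳] := by
    refine ae_eq_condExp_of_forall_setIntegral_eq hm hTYint
      (fun s _ _ => hgint.integrableOn) (fun s hs _ => ?_)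
      (((hmreg.comp hXm).mul (he.comp hXm)).stronglyMeasurable.aestronglyMeasurable)
    obtain ⟨B, hB, rfl⟩ := hs
    have hBsm : StronglyMeasurable[MeasurableSpace.comap X m𝒳] (fun ω => B.indicator mreg (X ω)) :=
      ((hmreg.indicator hB).comp hXm).stronglyMeasurable
    have hind1 : ∀ ω, (X ⁻¹' B).indicator (fun ω => mreg (X ω) * e (X ω)) ω
        = B.indicator mreg (X ω) * e (X ω) := by
      intro ω; by_cases h : X ω ∈ B <;>
        simp [Set.indicator_apply, Set.mem_preimage, h]
    have hind2 : ∀ ω, (X ⁻¹' B).indicator (fun ω => mreg (X ω) * T ω) ω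
        = B.indicator mreg (X ω) * T ω := by
      intro ω; by_cases h : X ω ∈ B <;>
        simp [Set.indicator_apply, Set.mem_preimage, h]
    have hBTint : Integrable (fun ω => B.indicator mreg (X ω) * T ω) P := by
      refine Integrable.mono' hmint.norm
        (((hmreg.indicator hB).comp hX).mul hT).aestronglyMeasurable ?_
      refine Filter.Eventually.of_forall fun ω => ?_
      rw [norm_mul]
      have h1 : ‖B.indicator mreg (X ω)‖ ≤ ‖mreg (X ω)‖ := by
        by_cases h : X ω ∈ B <;> simp [Set.indicator_apply, h, norm_nonneg]
      calc ‖B.indicator mreg (X ω)‖ * ‖T ω‖ ≤ ‖mreg (X ω)‖ * 1 :=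
            mul_le_mul h1 (hTnorm ω) (norm_nonneg _) (norm_nonneg _)
        _ = ‖mreg (X ω)‖ := mul_one _
    calc ∫ x in X ⁻¹' B, mreg (X x) * e (X x) ∂P
        = ∫ ω, B.indicator mreg (X ω) * e (X ω) ∂P := by
          rw [← integral_indicator (hX hB)]
          exact integral_congr_ae (Filter.Eventually.of_forall hind1)
      _ = ∫ ω, B.indicator mreg (X ω) * T ω ∂P :=
          (pullout_integral hm P hTint hePS hBsm hBTint).symm
      _ = ∫ x in X ⁻¹' B, mreg (X x) * T x ∂P := by
          rw [← integral_indicator (hX hB)]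
          exact (integral_congr_ae (Filter.Eventually.of_forall hind2)).symm
      _ = ∫ x in X ⁻¹' B ∩ {ω | T ω = 1}, mreg (X x) ∂P := by
          rw [show (fun x => mreg (X x) * T x)
              = fun x => ({ω | T ω = 1}).indicator (fun ω => mreg (X ω)) x from
            funext hTm_eq]
          exact setIntegral_indicator hTset
      _ = ∫ x in X ⁻¹' B ∩ {ω | T ω = 1}, Y x ∂P := (hOR B hB).symm
      _ = ∫ x in X ⁻¹' B, T x * Y x ∂P := by
          rw [show (fun x => T x * Y x)
              = fun x => ({ω | T ω = 1}).indicator Y x from funext hTY_eq]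
          exact (setIntegral_indicator hTset).symm
  -- now the weighted integral
  have hh1sm : StronglyMeasurable[MeasurableSpace.comap X m𝒳] (fun ω => w.indicator (fun x => (e x)⁻¹) (X ω)) :=
    ((he.inv.indicator hw).comp hXm).stronglyMeasurable
  have hpt : ∀ ω, (X ⁻¹' w).indicator (fun ω' => T ω' * Y ω' / e (X ω')) ω
      = w.indicator (fun x => (e x)⁻¹) (X ω) * (T ω * Y ω) := by
    intro ω; by_cases h : X ω ∈ w
    · rw [Set.indicator_of_mem h, Set.indicator_of_mem (Set.mem_preimage.mpr h)]
      rw [div_eq_mul_inv, mul_comm]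
    · simp [Set.indicator_apply, h]
  have hint1 : Integrable (fun ω => w.indicator (fun x => (e x)⁻¹) (X ω) * (T ω * Y ω)) P := by
    refine Integrable.mono' (hYint.norm.const_mul ε⁻¹)
      (((he.inv.indicator hw).comp hX).mul (hT.mul hY)).aestronglyMeasurable ?_
    filter_upwards [hpos] with ω hω
    have hh1 : ‖w.indicator (fun x => (e x)⁻¹) (X ω)‖ ≤ ε⁻¹ := by
      by_cases h : X ω ∈ w
      · rw [Set.indicator_of_mem h, Real.norm_eq_abs,
          abs_of_pos (inv_pos.mpr (lt_of_lt_of_le hε hω.1))]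
        exact inv_anti₀ hε hω.1
      · rw [Set.indicator_of_notMem h, norm_zero]
        exact inv_nonneg.mpr hε.le
    rw [norm_mul, norm_mul]
    calc ‖w.indicator (fun x => (e x)⁻¹) (X ω)‖ * (‖T ω‖ * ‖Y ω‖)
        ≤ ε⁻¹ * (1 * ‖Y ω‖) :=
          mul_le_mul hh1 (mul_le_mul_of_nonneg_right (hTnorm ω) (norm_nonneg _))
            (mul_nonneg (norm_nonneg _) (norm_nonneg _)) (inv_nonneg.mpr hε.le)
      _ = ε⁻¹ * ‖Y ω‖ := by rw [one_mul]
  calc ∫ ω, (X ⁻¹' w).indicator (fun ω' => T ω' * Y ω' / e (X ω')) ω ∂P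
      = ∫ ω, w.indicator (fun x => (e x)⁻¹) (X ω) * (T ω * Y ω) ∂P :=
        integral_congr_ae (Filter.Eventually.of_forall hpt)
    _ = ∫ ω, w.indicator (fun x => (e x)⁻¹) (X ω) * (mreg (X ω) * e (X ω)) ∂P :=
        pullout_integral hm P hTYint hc hh1sm hint1
    _ = ∫ ω, (X ⁻¹' w).indicator (fun ω => mreg (X ω)) ω ∂P := by
        refine integral_congr_ae ?_
        filter_upwards [hpos] with ω hω
        by_cases h : X ω ∈ w
        · have hne : e (X ω) ≠ 0 := ne_of_gt (lt_of_lt_of_le hε hω.1)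
          rw [Set.indicator_of_mem h, Set.indicator_of_mem (Set.mem_preimage.mpr h),
            mul_comm (mreg (X ω)), ← mul_assoc, inv_mul_cancel₀ hne, one_mul]
        · simp [Set.indicator_apply, h]
    _ = ∫ ω in X ⁻¹' w, mreg (X ω) ∂P := integral_indicator (hX hw)

/-- The population mean of the subgroup inverse probability weighted
treatment-effect contrast equals the g-formula contrast:
`E[1{X ∈ w} (A·Y/e₁(X) − (1−A)·Y/(1−e₁(X)))] = ∫_{X ∈ w} (m₁(X) − m₀(X)) dP`. -/
theorem ipw_contrast_eq_gformula_contrast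
    {Ω : Type*} [MeasurableSpace Ω] (P : Measure Ω) [IsProbabilityMeasure P]
    {𝒳 : Type*} [MeasurableSpace 𝒳]
    (X : Ω → 𝒳) (hX : Measurable X)
    (A : Ω → ℝ) (hA : Measurable A) (hA01 : ∀ ω, A ω = 0 ∨ A ω = 1)
    (Y : Ω → ℝ) (hY : Measurable Y) (hYint : Integrable Y P)
    -- a version of the propensity score for treatment a = 1
    (e1 : 𝒳 → ℝ) (he1 : Measurable e1)
    (he1PS : ∀ B : Set 𝒳, MeasurableSet B →
      ∫ ω in X ⁻¹' B, e1 (X ω) ∂P = (P (X ⁻¹' B ∩ {ω | A ω = 1})).toReal)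
    -- positivity
    (ε : ℝ) (hε : 0 < ε)
    (hpos : ∀ᵐ ω ∂P, ε ≤ e1 (X ω) ∧ e1 (X ω) ≤ 1 - ε)
    -- a version of the outcome regression E[Y | X, A = 1]
    (m1 : 𝒳 → ℝ) (hm1 : Measurable m1)
    (hm1int : Integrable (fun ω => m1 (X ω)) P)
    (hm1OR : ∀ B : Set 𝒳, MeasurableSet B →
      ∫ ω in X ⁻¹' B ∩ {ω | A ω = 1}, Y ω ∂P
        = ∫ ω in X ⁻¹' B ∩ {ω | A ω = 1}, m1 (X ω) ∂P)
    -- a version of the outcome regression E[Y | X, A = 0]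
    (m0 : 𝒳 → ℝ) (hm0 : Measurable m0)
    (hm0int : Integrable (fun ω => m0 (X ω)) P)
    (hm0OR : ∀ B : Set 𝒳, MeasurableSet B →
      ∫ ω in X ⁻¹' B ∩ {ω | A ω = 0}, Y ω ∂P
        = ∫ ω in X ⁻¹' B ∩ {ω | A ω = 0}, m0 (X ω) ∂P)
    -- the subgroup
    (w : Set 𝒳) (hw : MeasurableSet w) :
    ∫ ω, (X ⁻¹' w).indicator
        (fun ω' => A ω' * Y ω' / e1 (X ω')
          - (1 - A ω') * Y ω' / (1 - e1 (X ω'))) ω ∂P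
      = ∫ ω in X ⁻¹' w, (m1 (X ω) - m0 (X ω)) ∂P := by
  have hm : MeasurableSpace.comap X ‹MeasurableSpace 𝒳› ≤ ‹MeasurableSpace Ω› :=
    hX.comap_le
  have hXm : Measurable[MeasurableSpace.comap X ‹MeasurableSpace 𝒳›] X :=
    measurable_iff_comap_le.mpr le_rfl
  have hAnorm : ∀ ω, ‖A ω‖ ≤ 1 := by
    intro ω; rcases hA01 ω with h | h <;> simp [h]
  have hAint : Integrable A P :=
    Integrable.mono' (integrable_const 1) hA.aestronglyMeasurable
      (Filter.Eventually.of_forall hAnorm)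
  have hAset : MeasurableSet {ω | A ω = 1} := hA (measurableSet_singleton 1)
  have he1b : ∀ᵐ ω ∂P, ‖e1 (X ω)‖ ≤ 1 := by
    filter_upwards [hpos] with ω hω
    rw [Real.norm_eq_abs, abs_le]
    constructor <;> nlinarith [hω.1, hω.2]
  have he1Xint : Integrable (fun ω => e1 (X ω)) P :=
    Integrable.mono' (integrable_const 1) (he1.comp hX).aestronglyMeasurable he1b
  -- e1 ∘ X is a version of the conditional expectation of A given X
  have hce : (fun ω => e1 (X ω)) =ᵐ[P]
      P[A|MeasurableSpace.comap X ‹MeasurableSpace 𝒳›] := by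
    refine ae_eq_condExp_of_forall_setIntegral_eq hm hAint
      (fun s _ _ => he1Xint.integrableOn) (fun s hs _ => ?_)
      ((he1.comp hXm).stronglyMeasurable.aestronglyMeasurable)
    obtain ⟨B, hB, rfl⟩ := hs
    rw [he1PS B hB]
    have hAeq : ∀ ω, A ω = ({ω | A ω = 1}).indicator (fun _ => (1 : ℝ)) ω := by
      intro ω; rcases hA01 ω with h | h <;>
        simp [Set.indicator_apply, Set.mem_setOf_eq, h]
    calc (P (X ⁻¹' B ∩ {ω | A ω = 1})).toReal
        = ∫ x in X ⁻¹' B ∩ {ω | A ω = 1}, (1 : ℝ) ∂P := by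
          rw [setIntegral_const]; simp [Measure.real]
      _ = ∫ x in X ⁻¹' B, ({ω | A ω = 1}).indicator (fun _ => (1 : ℝ)) x ∂P :=
          (setIntegral_indicator hAset).symm
      _ = ∫ x in X ⁻¹' B, A x ∂P := by
          exact (setIntegral_congr_fun (hX hB) fun x _ => (hAeq x).symm)
  -- arm 1
  have hpos1 : ∀ᵐ ω ∂P, ε ≤ e1 (X ω) ∧ e1 (X ω) ≤ 1 := by
    filter_upwards [hpos] with ω hω
    exact ⟨hω.1, by linarith [hω.2]⟩
  have I1 := arm_integral P X hX A hA hA01 Y hY hYint e1 he1 ε hε hpos1 hce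
    m1 hm1 hm1int hm1OR w hw
  -- arm 0
  have hsub := condExp_sub (μ := P) (m := MeasurableSpace.comap X ‹MeasurableSpace 𝒳›)
    (integrable_const (1 : ℝ)) hAint
  have hconst : P[(fun _ : Ω => (1 : ℝ))|MeasurableSpace.comap X ‹MeasurableSpace 𝒳›]
      = fun _ => 1 := condExp_const hm 1
  have hce0 : (fun ω => (fun x => 1 - e1 x) (X ω)) =ᵐ[P]
      P[fun ω => 1 - A ω|MeasurableSpace.comap X ‹MeasurableSpace 𝒳›] := by
    rw [show (fun ω => (1 : ℝ) - A ω) = (fun _ : Ω => (1 : ℝ)) - A from rfl]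
    filter_upwards [hsub, hce] with ω h1 h2
    rw [h1, Pi.sub_apply, hconst]
    simp [← h2]
  have hA01' : ∀ ω, 1 - A ω = 0 ∨ 1 - A ω = 1 := by
    intro ω; rcases hA01 ω with h | h <;> simp [h]
  have hpos0 : ∀ᵐ ω ∂P, ε ≤ (fun x => 1 - e1 x) (X ω) ∧ (fun x => 1 - e1 x) (X ω) ≤ 1 := by
    filter_upwards [hpos] with ω hω
    refine ⟨?_, ?_⟩ <;> [skip; skip] <;> nlinarith [hω.1, hω.2]
  have hOR0 : ∀ B : Set 𝒳, MeasurableSet B →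
      ∫ ω in X ⁻¹' B ∩ {ω | 1 - A ω = 1}, Y ω ∂P
        = ∫ ω in X ⁻¹' B ∩ {ω | 1 - A ω = 1}, m0 (X ω) ∂P := by
    intro B hB
    have hset : {ω | (1 : ℝ) - A ω = 1} = {ω | A ω = 0} := by
      ext ω; simp [sub_eq_self]
    rw [hset]; exact hm0OR B hB
  have I0 := arm_integral P X hX (fun ω => 1 - A ω) (measurable_const.sub hA) hA01'
    Y hY hYint (fun x => 1 - e1 x) (measurable_const.sub he1) ε hε hpos0 hce0
    m0 hm0 hm0int hOR0 w hw
  -- integrability of each arm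
  have harmint : ∀ (T : Ω → ℝ) (hT : Measurable T) (hTn : ∀ ω, ‖T ω‖ ≤ 1)
      (e : 𝒳 → ℝ) (he : Measurable e) (hposA : ∀ᵐ ω ∂P, ε ≤ e (X ω)),
      Integrable (fun ω => (X ⁻¹' w).indicator
        (fun ω' => T ω' * Y ω' / e (X ω')) ω) P := by
    intro T hT hTn e he hposA
    refine Integrable.mono' (hYint.norm.const_mul ε⁻¹)
      (((hT.mul hY).div (he.comp hX)).indicator (hX hw)).aestronglyMeasurable ?_
    filter_upwards [hposA] with ω hω
    by_cases h : ω ∈ X ⁻¹' w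
    · rw [Set.indicator_of_mem h]
      rw [norm_div, norm_mul]
      have h1 : ‖T ω‖ * ‖Y ω‖ ≤ ‖Y ω‖ := by
        calc ‖T ω‖ * ‖Y ω‖ ≤ 1 * ‖Y ω‖ :=
              mul_le_mul_of_nonneg_right (hTn ω) (norm_nonneg _)
          _ = ‖Y ω‖ := one_mul _
      have h2 : ε ≤ ‖e (X ω)‖ := by
        rw [Real.norm_eq_abs, abs_of_pos (lt_of_lt_of_le hε hω)]; exact hω
      calc ‖T ω‖ * ‖Y ω‖ / ‖e (X ω)‖ ≤ ‖Y ω‖ / ε := div_le_div₀ (norm_nonneg _) h1 hε h2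
        _ = ε⁻¹ * ‖Y ω‖ := div_eq_inv_mul _ _
    · rw [Set.indicator_of_notMem h, norm_zero]
      positivity
  have hI1int : Integrable (fun ω => (X ⁻¹' w).indicator
      (fun ω' => A ω' * Y ω' / e1 (X ω')) ω) P :=
    harmint A hA hAnorm e1 he1 (hpos.mono fun ω hω => hω.1)
  have hI0int : Integrable (fun ω => (X ⁻¹' w).indicator
      (fun ω' => (1 - A ω') * Y ω' / (1 - e1 (X ω'))) ω) P := by
    have := harmint (fun ω => 1 - A ω) (measurable_const.sub hA)
      (fun ω => by rcases hA01 ω with h | h <;> simp [h])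
      (fun x => 1 - e1 x) (measurable_const.sub he1)
      (hpos.mono fun ω hω => by show ε ≤ 1 - e1 (X ω); linarith [hω.2])
    exact this
  have hsplit : ∀ ω, (X ⁻¹' w).indicator
      (fun ω' => A ω' * Y ω' / e1 (X ω')
        - (1 - A ω') * Y ω' / (1 - e1 (X ω'))) ω
      = (X ⁻¹' w).indicator (fun ω' => A ω' * Y ω' / e1 (X ω')) ω
        - (X ⁻¹' w).indicator (fun ω' => (1 - A ω') * Y ω' / (1 - e1 (X ω'))) ω := by
    intro ω; by_cases h : ω ∈ X ⁻¹' w <;> simp [Set.indicator_apply, h]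
  calc ∫ ω, (X ⁻¹' w).indicator
        (fun ω' => A ω' * Y ω' / e1 (X ω')
          - (1 - A ω') * Y ω' / (1 - e1 (X ω'))) ω ∂P
      = ∫ ω, ((X ⁻¹' w).indicator (fun ω' => A ω' * Y ω' / e1 (X ω')) ω
          - (X ⁻¹' w).indicator (fun ω' => (1 - A ω') * Y ω' / (1 - e1 (X ω'))) ω) ∂P :=
        integral_congr_ae (Filter.Eventually.of_forall hsplit)
    _ = ∫ ω, (X ⁻¹' w).indicator (fun ω' => A ω' * Y ω' / e1 (X ω')) ω ∂P
        - ∫ ω, (X ⁻¹' w).indicator (fun ω' => (1 - A ω') * Y ω' / (1 - e1 (X ω'))) ω ∂P :=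
        integral_sub hI1int hI0int
    _ = ∫ ω in X ⁻¹' w, m1 (X ω) ∂P - ∫ ω in X ⁻¹' w, m0 (X ω) ∂P := by rw [I1, I0]
    _ = ∫ ω in X ⁻¹' w, (m1 (X ω) - m0 (X ω)) ∂P :=
        (integral_sub hm1int.integrableOn hm0int.integrableOn).symm
end

section
/- Double robustness with a correctly specified outcome model: let m_a be a version of the outcome regression E[Y | X, A = a], and let e* : 𝒳 → ℝ be ANY measurable function (a possibly misspecified propensity model) satisfying e*(x) ≥ ε for all x, for some ε > 0. Then for every measurable subgroup w ⊆ 𝒳, E[ 1{X ∈ w} · ( m_a(X) + 1{A = a} · (Y − m_a(X)) / e*(X) ) ] = ∫_{{X ∈ w}} m_a(X) dP; i.e. the augmentation term has mean zero. -/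
open MeasureTheory

/-- Auxiliary: if `m ∘ X` has the same set-integrals as `Y` on all sets `X ⁻¹' B`, then
multiplying by any bounded measurable function of `X` preserves the integral identity. -/
lemma dr_aux {Ω : Type*} [MeasurableSpace Ω] {𝒳 : Type*} [MeasurableSpace 𝒳]
    (Q : Measure Ω) [IsFiniteMeasure Q]
    (X : Ω → 𝒳) (hX : Measurable X)
    (Y : Ω → ℝ) (hYQ : Integrable Y Q)
    (m : 𝒳 → ℝ) (hm : Measurable m) (hmQ : Integrable (fun ω => m (X ω)) Q)
    (hOR : ∀ B : Set 𝒳, MeasurableSet B →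
      ∫ ω in X ⁻¹' B, Y ω ∂Q = ∫ ω in X ⁻¹' B, m (X ω) ∂Q)
    (h : 𝒳 → ℝ) (hh : Measurable h) (C : ℝ) (hC : ∀ x, ‖h x‖ ≤ C) :
    ∫ ω, h (X ω) * Y ω ∂Q = ∫ ω, h (X ω) * m (X ω) ∂Q := by
  have hle : MeasurableSpace.comap X inferInstance ≤ ‹MeasurableSpace Ω› := hX.comap_le
  haveI : SigmaFinite (Q.trim hle) := inferInstance
  have hXm : Measurable[MeasurableSpace.comap X inferInstance] X :=
    measurable_iff_comap_le.mpr le_rfl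
  have hcond : (fun ω => m (X ω)) =ᵐ[Q] Q[Y|MeasurableSpace.comap X inferInstance] := by
    refine ae_eq_condExp_of_forall_setIntegral_eq hle hYQ
      (fun s _ _ => hmQ.integrableOn) (fun s hs _ => ?_) ?_
    · obtain ⟨B, hB, rfl⟩ := hs
      exact (hOR B hB).symm
    · exact (Measurable.stronglyMeasurable (hm.comp hXm)).aestronglyMeasurable
  have hgsm : StronglyMeasurable[MeasurableSpace.comap X inferInstance]
      (fun ω => h (X ω)) := (hh.comp hXm).stronglyMeasurable
  have hgae : AEStronglyMeasurable (fun ω => h (X ω)) Q :=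
    (hgsm.mono hle).aestronglyMeasurable
  have hgY : Integrable ((fun ω => h (X ω)) * Y) Q :=
    hYQ.bdd_mul hgae (Filter.Eventually.of_forall fun ω => hC _)
  calc ∫ ω, h (X ω) * Y ω ∂Q
      = ∫ ω, (Q[(fun ω => h (X ω)) * Y|MeasurableSpace.comap X inferInstance]) ω ∂Q :=
        (integral_condExp hle).symm
    _ = ∫ ω, ((fun ω => h (X ω)) * Q[Y|MeasurableSpace.comap X inferInstance]) ω ∂Q :=
        integral_congr_ae (condExp_mul_of_stronglyMeasurable_left hgsm hgY hYQ)
    _ = ∫ ω, h (X ω) * m (X ω) ∂Q := by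
        refine integral_congr_ae ?_
        filter_upwards [hcond] with ω hω
        simp only [Pi.mul_apply]
        rw [hω]

/-- Double robustness with a correctly specified outcome model: for any
measurable `e* ≥ ε > 0` (a possibly misspecified propensity model) and any measurable
subgroup `w`, `E[1{X ∈ w}(m_a(X) + 1{A = a}(Y − m_a(X))/e*(X))] = ∫_{X ∈ w} m_a(X) dP`. -/
theorem dr_correct_outcome_model
    {Ω : Type*} [MeasurableSpace Ω] (P : Measure Ω) [IsProbabilityMeasure P]
    {𝒳 : Type*} [MeasurableSpace 𝒳]
    (X : Ω → 𝒳) (hX : Measurable X)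
    (A : Ω → ℝ) (hA : Measurable A) (hA01 : ∀ ω, A ω = 0 ∨ A ω = 1)
    (Y : Ω → ℝ) (hY : Measurable Y) (hYint : Integrable Y P)
    (a : ℝ) (ha : a = 0 ∨ a = 1)
    -- a version of the outcome regression E[Y | X, A = a]
    (m : 𝒳 → ℝ) (hm : Measurable m)
    (hmint : Integrable (fun ω => m (X ω)) P)
    (hmOR : ∀ B : Set 𝒳, MeasurableSet B →
      ∫ ω in X ⁻¹' B ∩ {ω | A ω = a}, Y ω ∂P
        = ∫ ω in X ⁻¹' B ∩ {ω | A ω = a}, m (X ω) ∂P)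
    -- ANY measurable propensity model bounded below by ε > 0
    (estar : 𝒳 → ℝ) (hestar : Measurable estar)
    (ε : ℝ) (hε : 0 < ε) (hestarpos : ∀ x, ε ≤ estar x)
    -- the subgroup
    (w : Set 𝒳) (hw : MeasurableSet w) :
    ∫ ω, (X ⁻¹' w).indicator
        (fun ω' => m (X ω')
          + ({ω'' | A ω'' = a}).indicator
              (fun ω'' => (Y ω'' - m (X ω'')) / estar (X ω'')) ω') ω ∂P
      = ∫ ω in X ⁻¹' w, m (X ω) ∂P := by
  have hAa : MeasurableSet {ω | A ω = a} := hA (measurableSet_singleton a)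
  have hwX : MeasurableSet (X ⁻¹' w) := hX hw
  set Q := P.restrict {ω | A ω = a} with hQdef
  haveI : IsFiniteMeasure Q := by
    refine ⟨?_⟩
    rw [hQdef, Measure.restrict_apply_univ]
    exact measure_lt_top P _
  have hYQ : Integrable Y Q := hYint.restrict
  have hmQ : Integrable (fun ω => m (X ω)) Q := hmint.restrict
  have hOR : ∀ B : Set 𝒳, MeasurableSet B →
      ∫ ω in X ⁻¹' B, Y ω ∂Q = ∫ ω in X ⁻¹' B, m (X ω) ∂Q := by
    intro B hB
    rw [hQdef, Measure.restrict_restrict (hX hB)]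
    exact hmOR B hB
  -- the bounded multiplier
  set g : 𝒳 → ℝ := w.indicator (fun x => (estar x)⁻¹) with hgdef
  have hgm : Measurable g := hestar.inv.indicator hw
  have hbound : ∀ x : 𝒳, ‖(estar x)⁻¹‖ ≤ ε⁻¹ := by
    intro x
    have h1 : 0 < estar x := lt_of_lt_of_le hε (hestarpos x)
    rw [Real.norm_eq_abs, abs_of_pos (inv_pos.mpr h1)]
    exact inv_anti₀ hε (hestarpos x)
  have hgb : ∀ x : 𝒳, ‖g x‖ ≤ ε⁻¹ := by
    intro x
    rw [hgdef]
    by_cases hx : x ∈ w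
    · rw [Set.indicator_of_mem hx]; exact hbound x
    · rw [Set.indicator_of_notMem hx]
      simp [le_of_lt (inv_pos.mpr hε)]
  have hkey : ∫ ω, g (X ω) * Y ω ∂Q = ∫ ω, g (X ω) * m (X ω) ∂Q :=
    dr_aux Q X hX Y hYQ m hm hmQ hOR g hgm ε⁻¹ hgb
  -- the augmentation term
  set F : Ω → ℝ := fun ω =>
    ({ω'' | A ω'' = a}).indicator (fun ω'' => (Y ω'' - m (X ω'')) / estar (X ω'')) ω with hFdef
  have hFint : Integrable F P := by
    have : Integrable (fun ω =>
        (({ω'' | A ω'' = a}).indicator (fun ω'' => (estar (X ω''))⁻¹) ω)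
          * (Y ω - m (X ω))) P := by
      refine (hYint.sub hmint).bdd_mul (c := ε⁻¹) ?_ (Filter.Eventually.of_forall ?_)
      · exact ((hestar.comp hX).inv.indicator hAa).aestronglyMeasurable
      · intro ω
        by_cases hω : ω ∈ {ω'' | A ω'' = a}
        · rw [Set.indicator_of_mem hω]; exact hbound _
        · rw [Set.indicator_of_notMem hω]; simp [le_of_lt (inv_pos.mpr hε)]
    refine this.congr (Filter.Eventually.of_forall fun ω => ?_)
    by_cases hω : ω ∈ {ω'' | A ω'' = a}
    · rw [hFdef]
      simp only [Set.indicator_of_mem hω]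
      rw [inv_mul_eq_div]
    · rw [hFdef]; simp only [Set.indicator_of_notMem hω, zero_mul]
  -- Step 1: rewrite LHS and split the sum
  rw [integral_indicator hwX]
  have hsplit : ∫ ω in X ⁻¹' w, (m (X ω) + F ω) ∂P
      = (∫ ω in X ⁻¹' w, m (X ω) ∂P) + ∫ ω in X ⁻¹' w, F ω ∂P :=
    integral_add hmint.integrableOn hFint.integrableOn
  rw [hsplit]
  -- Step 2: the augmentation term integrates to zero
  have hFzero : ∫ ω in X ⁻¹' w, F ω ∂P = 0 := by
    have h1 : ∫ ω in X ⁻¹' w, F ω ∂P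
        = ∫ ω in X ⁻¹' w ∩ {ω'' | A ω'' = a},
            (Y ω - m (X ω)) / estar (X ω) ∂P := setIntegral_indicator hAa
    have h2 : ∫ ω in X ⁻¹' w ∩ {ω'' | A ω'' = a},
          (Y ω - m (X ω)) / estar (X ω) ∂P
        = ∫ ω in X ⁻¹' w, (Y ω - m (X ω)) / estar (X ω) ∂Q := by
      rw [hQdef, Measure.restrict_restrict hwX]
    have h3 : ∫ ω in X ⁻¹' w, (Y ω - m (X ω)) / estar (X ω) ∂Q
        = ∫ ω, g (X ω) * (Y ω - m (X ω)) ∂Q := by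
      rw [← integral_indicator hwX]
      refine integral_congr_ae (Filter.Eventually.of_forall fun ω => ?_)
      by_cases hω : ω ∈ X ⁻¹' w
      · have hω' : X ω ∈ w := hω
        simp only [Set.indicator_of_mem hω, hgdef, Set.indicator_of_mem hω']
        rw [inv_mul_eq_div]
      · have hω' : X ω ∉ w := hω
        simp only [Set.indicator_of_notMem hω, hgdef, Set.indicator_of_notMem hω', zero_mul]
    have hgae : AEStronglyMeasurable (fun ω => g (X ω)) Q :=
      (hgm.comp hX).aestronglyMeasurable
    have hgY : Integrable (fun ω => g (X ω) * Y ω) Q :=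
      hYQ.bdd_mul hgae (Filter.Eventually.of_forall fun ω => hgb _)
    have hgmq : Integrable (fun ω => g (X ω) * m (X ω)) Q :=
      hmQ.bdd_mul hgae (Filter.Eventually.of_forall fun ω => hgb _)
    have h4 : ∫ ω, g (X ω) * (Y ω - m (X ω)) ∂Q
        = (∫ ω, g (X ω) * Y ω ∂Q) - ∫ ω, g (X ω) * m (X ω) ∂Q := by
      rw [← integral_sub hgY hgmq]
      refine integral_congr_ae (Filter.Eventually.of_forall fun ω => ?_)
      ring
    rw [h1, h2, h3, h4, hkey, sub_self]
  rw [hFzero, add_zero]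
end

section
/- Double robustness with a correctly specified propensity score: let e_a be a version of the propensity score with e_a(X) ≥ ε almost surely for some ε > 0, let m_a be a version of the outcome regression E[Y | X, A = a], and let g : 𝒳 → ℝ be ANY measurable function (a possibly misspecified outcome model) with g ∘ X integrable. Then for every measurable subgroup w ⊆ 𝒳, E[ 1{X ∈ w} · ( g(X) + 1{A = a} · (Y − g(X)) / e_a(X) ) ] = ∫_{{X ∈ w}} m_a(X) dP. -/
open MeasureTheory

open scoped ENNReal NNReal

section Aux
variable {Ω : Type*} [MeasurableSpace Ω] {𝒳 : Type*} [MeasurableSpace 𝒳]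

/-- The propensity score composed with `X` is integrable (it is a.e. in `[ε, 1]`). -/
lemma aux_e_int (P : Measure Ω) [IsProbabilityMeasure P]
    (X : Ω → 𝒳) (hX : Measurable X) (S : Set Ω)
    (e : 𝒳 → ℝ) (he : Measurable e)
    (hePS : ∀ B : Set 𝒳, MeasurableSet B →
      ∫ ω in X ⁻¹' B, e (X ω) ∂P = (P (X ⁻¹' B ∩ S)).toReal)
    {ε : ℝ} (hε : 0 < ε) (hpos : ∀ᵐ ω ∂P, ε ≤ e (X ω)) :
    Integrable (fun ω => e (X ω)) P := by
  have hnull : ∀ n : ℕ, P (X ⁻¹' {x | 1 < e x ∧ e x ≤ (n : ℝ)}) = 0 := by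
    intro n
    set B : Set 𝒳 := {x : 𝒳 | 1 < e x ∧ e x ≤ (n : ℝ)} with hBdef
    have hBm : MeasurableSet B :=
      (measurableSet_lt measurable_const he).inter (measurableSet_le he measurable_const)
    set s : Set Ω := X ⁻¹' B with hsdef
    have hsm : MeasurableSet s := hX hBm
    have hint : IntegrableOn (fun ω => e (X ω)) s P := by
      refine Integrable.mono' (integrable_const (n : ℝ))
        ((he.comp hX).aestronglyMeasurable.restrict) ?_
      refine (ae_restrict_iff' hsm).2 (Filter.Eventually.of_forall fun ω hω => ?_)
      rw [Real.norm_eq_abs, abs_of_nonneg (le_of_lt (lt_trans one_pos hω.1))]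
      exact hω.2
    have h1 : ∫ ω in s, (1 : ℝ) ∂P = (P s).toReal := by
      simp [hsdef]; rfl
    have hles : (P (s ∩ S)).toReal ≤ (P s).toReal :=
      ENNReal.toReal_mono (measure_ne_top P _) (measure_mono Set.inter_subset_left)
    have h2 : ∫ ω in s, (e (X ω) - 1) ∂P = (P (s ∩ S)).toReal - (P s).toReal := by
      rw [integral_sub hint (integrable_const 1).integrableOn, h1, hePS B hBm]
    have h3 : 0 ≤ ∫ ω in s, (e (X ω) - 1) ∂P :=
      setIntegral_nonneg hsm fun ω hω => by linarith [hω.1]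
    have h4 : ∫ ω in s, (e (X ω) - 1) ∂P = 0 := le_antisymm (by rw [h2]; linarith) h3
    have hz : (fun ω => e (X ω) - 1) =ᵐ[P.restrict s] 0 := by
      have hnn : 0 ≤ᵐ[P.restrict s] fun ω => e (X ω) - 1 :=
        (ae_restrict_iff' hsm).2 (Filter.Eventually.of_forall fun ω hω => by
          simp only [Pi.zero_apply]; linarith [hω.1])
      exact (integral_eq_zero_iff_of_nonneg_ae hnn (hint.sub (integrable_const 1))).1 h4
    -- conclude P s = 0
    have hne : s ⊆ {ω | e (X ω) - 1 ≠ 0} := fun ω hω => by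
      have := hω.1; simp only [Set.mem_setOf_eq]; intro h; linarith
    have : P.restrict s {ω | e (X ω) - 1 ≠ 0} = 0 := by
      have := hz
      rw [Filter.EventuallyEq, ae_iff] at this
      simpa using this
    have hmeas : MeasurableSet {ω | e (X ω) - 1 ≠ 0} := by
      have hm1 : Measurable fun ω => e (X ω) - 1 := (he.comp hX).sub measurable_const
      exact (hm1 (measurableSet_singleton 0)).compl
    rw [Measure.restrict_apply hmeas] at this
    exact le_antisymm (le_of_le_of_eq (measure_mono (fun ω hω => Set.mem_inter (hne hω) hω : s ⊆ {ω | e (X ω) - 1 ≠ 0} ∩ s)) this) zero_le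
  have hU : P (X ⁻¹' {x | 1 < e x}) = 0 := by
    have hsub : X ⁻¹' {x | 1 < e x} ⊆ ⋃ n : ℕ, X ⁻¹' {x | 1 < e x ∧ e x ≤ (n : ℝ)} := by
      intro ω hω
      exact Set.mem_iUnion.2 ⟨⌈e (X ω)⌉₊, hω, Nat.le_ceil _⟩
    exact measure_mono_null hsub (measure_iUnion_null hnull)
  have hle1 : ∀ᵐ ω ∂P, e (X ω) ≤ 1 := by
    rw [ae_iff]
    simpa [not_le] using hU
  refine Integrable.mono' (integrable_const (1 : ℝ)) (he.comp hX).aestronglyMeasurable ?_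
  filter_upwards [hpos, hle1] with ω h1 h2
  rw [Real.norm_eq_abs, abs_of_nonneg (le_trans hε.le h1)]
  exact h2

/-- Pull-out of the propensity score: integrating a function of `X` over `S` equals
integrating `e(X)` times that function over everything. -/
lemma aux_pull (P : Measure Ω) [IsProbabilityMeasure P]
    (X : Ω → 𝒳) (hX : Measurable X) (S : Set Ω) (hS : MeasurableSet S)
    (e : 𝒳 → ℝ) (he : Measurable e)
    (hePS : ∀ B : Set 𝒳, MeasurableSet B →
      ∫ ω in X ⁻¹' B, e (X ω) ∂P = (P (X ⁻¹' B ∩ S)).toReal)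
    {ε : ℝ} (hε : 0 < ε) (hpos : ∀ᵐ ω ∂P, ε ≤ e (X ω))
    (f : 𝒳 → ℝ) (hf : Measurable f) :
    ∫ ω in S, f (X ω) ∂P = ∫ ω, e (X ω) * f (X ω) ∂P := by
  have heint : Integrable (fun ω => e (X ω)) P := aux_e_int P X hX S e he hePS hε hpos
  set μ := Measure.map X P with hμdef
  have hμpos : ∀ᵐ x ∂μ, ε ≤ e x :=
    (ae_map_iff hX.aemeasurable (measurableSet_le measurable_const he)).2 hpos
  have hν : Measure.map X (P.restrict S) = μ.withDensity (fun x => ((e x).toNNReal : ℝ≥0∞)) := by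
    ext B hB
    rw [Measure.map_apply hX hB, Measure.restrict_apply (hX hB), withDensity_apply _ hB]
    have hIe : IntegrableOn e B μ :=
      ((integrable_map_measure he.aestronglyMeasurable hX.aemeasurable).2 heint).integrableOn
    have hnn : 0 ≤ᵐ[μ.restrict B] e :=
      ae_restrict_of_ae (hμpos.mono fun x hx => le_trans hε.le hx)
    have hcoe : (fun x => ((e x).toNNReal : ℝ≥0∞)) = fun x => ENNReal.ofReal (e x) := rfl
    rw [hcoe, ← ofReal_integral_eq_lintegral_ofReal hIe hnn,
      setIntegral_map hB he.aestronglyMeasurable hX.aemeasurable, hePS B hB,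
      ENNReal.ofReal_toReal (measure_ne_top P _)]
  calc ∫ ω in S, f (X ω) ∂P
      = ∫ x, f x ∂(Measure.map X (P.restrict S)) :=
        (integral_map hX.aemeasurable hf.aestronglyMeasurable).symm
    _ = ∫ x, ((e x).toNNReal : ℝ≥0) • f x ∂μ := by
        have hmeas : Measurable fun x => (e x).toNNReal := measurable_real_toNNReal.comp he
        rw [hν]
        exact integral_withDensity_eq_integral_smul hmeas f
    _ = ∫ x, e x * f x ∂μ := by
        refine integral_congr_ae (hμpos.mono fun x hx => ?_)
        show (e x).toNNReal • f x = e x * f x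
        rw [NNReal.smul_def, Real.coe_toNNReal _ (le_trans hε.le hx), smul_eq_mul]
    _ = ∫ ω, e (X ω) * f (X ω) ∂P :=
        integral_map hX.aemeasurable (he.mul hf).aestronglyMeasurable

/-- Pull-out of the outcome regression: for a bounded function of `X`,
`∫_S φ(X) Y = ∫_S φ(X) m(X)`. -/
lemma aux_reg (P : Measure Ω) [IsProbabilityMeasure P]
    (X : Ω → 𝒳) (hX : Measurable X) (S : Set Ω) (hS : MeasurableSet S)
    (Y : Ω → ℝ) (hYint : Integrable Y P)
    (m : 𝒳 → ℝ) (hm : Measurable m) (hmint : Integrable (fun ω => m (X ω)) P)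
    (hmOR : ∀ B : Set 𝒳, MeasurableSet B →
      ∫ ω in X ⁻¹' B ∩ S, Y ω ∂P = ∫ ω in X ⁻¹' B ∩ S, m (X ω) ∂P)
    (φ : 𝒳 → ℝ) (hφ : Measurable φ) (C : ℝ) (hbd : ∀ᵐ ω ∂P, ‖φ (X ω)‖ ≤ C) :
    ∫ ω in S, φ (X ω) * Y ω ∂P = ∫ ω in S, φ (X ω) * m (X ω) ∂P := by
  set P' := P.restrict S with hP'def
  have hm'le : MeasurableSpace.comap X inferInstance ≤ _ := hX.comap_le
  haveI : SigmaFinite (P'.trim hm'le) := by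
    haveI : IsFiniteMeasure P' := by
      constructor
      exact lt_of_le_of_lt (Measure.restrict_apply_le _ _) (measure_lt_top P _)
    infer_instance
  have hXm' : Measurable[MeasurableSpace.comap X inferInstance] X := Measurable.of_comap_le le_rfl
  have hY' : Integrable Y P' := hYint.restrict
  have hmX' : Integrable (fun ω => m (X ω)) P' := hmint.restrict
  have hcond : (fun ω => m (X ω)) =ᵐ[P'] P'[Y|MeasurableSpace.comap X inferInstance] := by
    refine ae_eq_condExp_of_forall_setIntegral_eq hm'le hY'
      ?_ (fun s hs _ => ?_) ?_
    · exact fun s _ _ => Integrable.integrableOn hmX'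
    · obtain ⟨B, hB, rfl⟩ := hs
      rw [hP'def, Measure.restrict_restrict (hX hB)]
      exact (hmOR B hB).symm
    · exact StronglyMeasurable.aestronglyMeasurable
        ((hm.comp hXm').stronglyMeasurable)
  have hφm' : StronglyMeasurable[MeasurableSpace.comap X inferInstance] fun ω => φ (X ω) :=
    (hφ.comp hXm').stronglyMeasurable
  have hbd' : ∀ᵐ ω ∂P', ‖φ (X ω)‖ ≤ C := ae_restrict_of_ae hbd
  have hφmeas : AEStronglyMeasurable (fun ω => φ (X ω)) P' :=
    (hφ.comp hX).aestronglyMeasurable.restrict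
  have hint1 : Integrable (fun ω => φ (X ω) * Y ω) P' := hY'.bdd_mul hφmeas hbd'
  have hint1' : Integrable ((fun ω => φ (X ω)) * Y) P' := hint1
  have hpull : P'[(fun ω => φ (X ω)) * Y|MeasurableSpace.comap X inferInstance] =ᵐ[P'] (fun ω => φ (X ω)) * P'[Y|MeasurableSpace.comap X inferInstance] :=
    condExp_mul_of_stronglyMeasurable_left hφm' hint1' hY'
  calc ∫ ω in S, φ (X ω) * Y ω ∂P
      = ∫ ω, ((fun ω => φ (X ω)) * Y) ω ∂P' := rfl
    _ = ∫ ω, (P'[(fun ω => φ (X ω)) * Y|MeasurableSpace.comap X inferInstance]) ω ∂P' := (integral_condExp hm'le).symm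
    _ = ∫ ω, ((fun ω => φ (X ω)) * P'[Y|MeasurableSpace.comap X inferInstance]) ω ∂P' := integral_congr_ae hpull
    _ = ∫ ω in S, φ (X ω) * m (X ω) ∂P := by
        refine integral_congr_ae (hcond.mono fun ω h => ?_)
        simp only [Pi.mul_apply]
        rw [← h]
end Aux

/-- Double robustness with a correctly specified propensity score: for any
measurable `g` (a possibly misspecified outcome model) with `g ∘ X` integrable and any
measurable subgroup `w`,
`E[1{X ∈ w}(g(X) + 1{A = a}(Y − g(X))/e_a(X))] = ∫_{X ∈ w} m_a(X) dP`. -/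
theorem dr_correct_propensity_model
    {Ω : Type*} [MeasurableSpace Ω] (P : Measure Ω) [IsProbabilityMeasure P]
    {𝒳 : Type*} [MeasurableSpace 𝒳]
    (X : Ω → 𝒳) (hX : Measurable X)
    (A : Ω → ℝ) (hA : Measurable A) (hA01 : ∀ ω, A ω = 0 ∨ A ω = 1)
    (Y : Ω → ℝ) (hY : Measurable Y) (hYint : Integrable Y P)
    (a : ℝ) (ha : a = 0 ∨ a = 1)
    -- a version of the propensity score, with e_a(X) ≥ ε > 0 a.s.
    (e : 𝒳 → ℝ) (he : Measurable e)
    (hePS : ∀ B : Set 𝒳, MeasurableSet B →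
      ∫ ω in X ⁻¹' B, e (X ω) ∂P = (P (X ⁻¹' B ∩ {ω | A ω = a})).toReal)
    (ε : ℝ) (hε : 0 < ε) (hpos : ∀ᵐ ω ∂P, ε ≤ e (X ω))
    -- a version of the outcome regression E[Y | X, A = a]
    (m : 𝒳 → ℝ) (hm : Measurable m)
    (hmint : Integrable (fun ω => m (X ω)) P)
    (hmOR : ∀ B : Set 𝒳, MeasurableSet B →
      ∫ ω in X ⁻¹' B ∩ {ω | A ω = a}, Y ω ∂P
        = ∫ ω in X ⁻¹' B ∩ {ω | A ω = a}, m (X ω) ∂P)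
    -- ANY measurable outcome model with integrable composition
    (g : 𝒳 → ℝ) (hg : Measurable g)
    (hgint : Integrable (fun ω => g (X ω)) P)
    -- the subgroup
    (w : Set 𝒳) (hw : MeasurableSet w) :
    ∫ ω, (X ⁻¹' w).indicator
        (fun ω' => g (X ω')
          + ({ω'' | A ω'' = a}).indicator
              (fun ω'' => (Y ω'' - g (X ω'')) / e (X ω'')) ω') ω ∂P
      = ∫ ω in X ⁻¹' w, m (X ω) ∂P := by

  have hS : MeasurableSet {ω | A ω = a} := hA (measurableSet_singleton a)
  -- the misspecified weight function
  set φ : 𝒳 → ℝ := fun x => w.indicator (fun _ => (1 : ℝ)) x / e x with hφdef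
  have hφ : Measurable φ := (measurable_const.indicator hw).div he
  have hbd : ∀ᵐ ω ∂P, ‖φ (X ω)‖ ≤ 1 / ε := by
    filter_upwards [hpos] with ω h
    have he0 : 0 < e (X ω) := lt_of_lt_of_le hε h
    have hnum : ‖w.indicator (fun _ => (1 : ℝ)) (X ω)‖ ≤ 1 := by
      by_cases hmem : X ω ∈ w <;>
        simp [Set.indicator_of_mem, Set.indicator_of_notMem, hmem]
    rw [hφdef]
    simp only [norm_div]
    refine div_le_div₀ zero_le_one hnum hε ?_
    rwa [Real.norm_eq_abs, abs_of_pos he0]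
  -- integrabilities
  have hφY : Integrable (fun ω => φ (X ω) * Y ω) P :=
    hYint.bdd_mul (hφ.comp hX).aestronglyMeasurable hbd
  have hφg : Integrable (fun ω => φ (X ω) * g (X ω)) P :=
    hgint.bdd_mul (hφ.comp hX).aestronglyMeasurable hbd
  have hT1 : Integrable ((X ⁻¹' w).indicator fun ω => g (X ω)) P :=
    hgint.indicator (hX hw)
  have hT2 : Integrable (({ω | A ω = a}).indicator fun ω => φ (X ω) * Y ω) P :=
    hφY.indicator hS
  have hT3 : Integrable (({ω | A ω = a}).indicator fun ω => φ (X ω) * g (X ω)) P :=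
    hφg.indicator hS
  -- the pointwise decomposition of the integrand
  have hFeq : (fun ω => (X ⁻¹' w).indicator
        (fun ω' => g (X ω')
          + ({ω'' | A ω'' = a}).indicator
              (fun ω'' => (Y ω'' - g (X ω'')) / e (X ω'')) ω') ω)
      = fun ω => ((X ⁻¹' w).indicator fun ω => g (X ω)) ω
          + ((({ω | A ω = a}).indicator fun ω => φ (X ω) * Y ω) ω
            - (({ω | A ω = a}).indicator fun ω => φ (X ω) * g (X ω)) ω) := by
    funext ω
    by_cases h1 : X ω ∈ w <;> by_cases h2 : A ω = a <;>
      simp [Set.indicator_apply, Set.mem_setOf_eq, h1, h2, hφdef] <;> ring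
  -- key integral identities
  have hregY : ∫ ω in {ω | A ω = a}, φ (X ω) * Y ω ∂P
      = ∫ ω in {ω | A ω = a}, φ (X ω) * m (X ω) ∂P :=
    aux_reg P X hX _ hS Y hYint m hm hmint hmOR φ hφ (1 / ε) hbd
  have hpullm : ∫ ω in {ω | A ω = a}, φ (X ω) * m (X ω) ∂P
      = ∫ ω, e (X ω) * (φ (X ω) * m (X ω)) ∂P :=
    aux_pull P X hX _ hS e he hePS hε hpos (fun x => φ x * m x) (hφ.mul hm)
  have hpullg : ∫ ω in {ω | A ω = a}, φ (X ω) * g (X ω) ∂P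
      = ∫ ω, e (X ω) * (φ (X ω) * g (X ω)) ∂P :=
    aux_pull P X hX _ hS e he hePS hε hpos (fun x => φ x * g x) (hφ.mul hg)
  have hcancel : ∀ (f : 𝒳 → ℝ),
      ∫ ω, e (X ω) * (φ (X ω) * f (X ω)) ∂P = ∫ ω in X ⁻¹' w, f (X ω) ∂P := by
    intro f
    rw [← integral_indicator (hX hw)]
    refine integral_congr_ae (hpos.mono fun ω h => ?_)
    have he0 : e (X ω) ≠ 0 := ne_of_gt (lt_of_lt_of_le hε h)
    simp only [hφdef]
    by_cases h1 : X ω ∈ w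
    · rw [Set.indicator_of_mem h1, Set.indicator_of_mem (Set.mem_preimage.mpr h1)]
      field_simp
    · rw [Set.indicator_of_notMem h1,
        Set.indicator_of_notMem (fun hh => h1 (Set.mem_preimage.mp hh))]
      simp
  have hT23 : Integrable (fun ω => ({ω | A ω = a}.indicator fun ω => φ (X ω) * Y ω) ω
      - ({ω | A ω = a}.indicator fun ω => φ (X ω) * g (X ω)) ω) P := hT2.sub hT3
  rw [hFeq, integral_add hT1 hT23, integral_sub hT2 hT3,
    integral_indicator (hX hw), integral_indicator hS, integral_indicator hS,
    hregY, hpullm, hpullg, hcancel m, hcancel g]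
  ring
end

section
/- Exact bias decomposition of the doubly robust functional: let e_a be a version of the propensity score and m_a a version of the outcome regression E[Y | X, A = a]; let e* : 𝒳 → ℝ be measurable with e*(x) ≥ ε for all x (ε > 0) and g : 𝒳 → ℝ measurable with g ∘ X integrable. Then for every measurable subgroup w ⊆ 𝒳, E[ 1{X ∈ w} · ( g(X) + 1{A = a} · (Y − g(X)) / e*(X) ) ] − ∫_{{X ∈ w}} m_a(X) dP = E[ 1{X ∈ w} · (e_a(X) − e*(X)) · (m_a(X) − g(X)) / e*(X) ]. -/
open MeasureTheory

lemma key_pullout {Ω : Type*} [m0 : MeasurableSpace Ω] (μ : Measure Ω) [IsFiniteMeasure μ]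
    {𝔪 : MeasurableSpace Ω} (hle : 𝔪 ≤ m0) {f η φ : Ω → ℝ}
    (hf : Integrable f μ) (hη : StronglyMeasurable[𝔪] η) (hηint : Integrable η μ)
    (heq : ∀ s, MeasurableSet[𝔪] s → ∫ x in s, η x ∂μ = ∫ x in s, f x ∂μ)
    (hφ : StronglyMeasurable[𝔪] φ)
    (hφf : Integrable (fun x => φ x * f x) μ) :
    ∫ x, φ x * f x ∂μ = ∫ x, φ x * η x ∂μ := by
  have hηm : AEStronglyMeasurable[𝔪] η μ := hη.aestronglyMeasurable
  have hintOn : ∀ s, MeasurableSet[𝔪] s → μ s < ⊤ → Integrable η (μ.restrict s) :=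
    fun s _ _ => hηint.restrict
  have heq' : ∀ s, MeasurableSet[𝔪] s → μ s < ⊤ →
      ∫ x in s, η x ∂μ = ∫ x in s, f x ∂μ := fun s hs _ => heq s hs
  have hcond : η =ᵐ[μ] μ[f|𝔪] :=
    ae_eq_condExp_of_forall_setIntegral_eq hle hf hintOn heq' hηm
  have hpull : μ[φ * f|𝔪] =ᵐ[μ] φ * μ[f|𝔪] :=
    condExp_mul_of_stronglyMeasurable_left hφ hφf hf
  calc ∫ x, φ x * f x ∂μ = ∫ x, (μ[φ * f|𝔪]) x ∂μ := (integral_condExp hle).symm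
    _ = ∫ x, φ x * (μ[f|𝔪]) x ∂μ := integral_congr_ae hpull
    _ = ∫ x, φ x * η x ∂μ := integral_congr_ae (by
        filter_upwards [hcond] with x hx; rw [hx])

/-- Exact bias decomposition of the doubly robust functional:
`E[1{X ∈ w}(g(X) + 1{A = a}(Y − g(X))/e*(X))] − ∫_{X ∈ w} m_a(X) dP
  = E[1{X ∈ w}(e_a(X) − e*(X))(m_a(X) − g(X))/e*(X)]`. -/
theorem dr_bias_decomposition
    {Ω : Type*} [MeasurableSpace Ω] (P : Measure Ω) [IsProbabilityMeasure P]
    {𝒳 : Type*} [MeasurableSpace 𝒳]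
    (X : Ω → 𝒳) (hX : Measurable X)
    (A : Ω → ℝ) (hA : Measurable A) (hA01 : ∀ ω, A ω = 0 ∨ A ω = 1)
    (Y : Ω → ℝ) (hY : Measurable Y) (hYint : Integrable Y P)
    (a : ℝ) (ha : a = 0 ∨ a = 1)
    -- a version of the propensity score, with 0 ≤ e_a ≤ 1
    (e : 𝒳 → ℝ) (he : Measurable e)
    (he01 : ∀ x, 0 ≤ e x ∧ e x ≤ 1)
    (hePS : ∀ B : Set 𝒳, MeasurableSet B →
      ∫ ω in X ⁻¹' B, e (X ω) ∂P = (P (X ⁻¹' B ∩ {ω | A ω = a})).toReal)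
    -- a version of the outcome regression E[Y | X, A = a]
    (m : 𝒳 → ℝ) (hm : Measurable m)
    (hmint : Integrable (fun ω => m (X ω)) P)
    (hmOR : ∀ B : Set 𝒳, MeasurableSet B →
      ∫ ω in X ⁻¹' B ∩ {ω | A ω = a}, Y ω ∂P
        = ∫ ω in X ⁻¹' B ∩ {ω | A ω = a}, m (X ω) ∂P)
    -- ANY measurable propensity model bounded below by ε > 0
    (estar : 𝒳 → ℝ) (hestar : Measurable estar)
    (ε : ℝ) (hε : 0 < ε) (hestarpos : ∀ x, ε ≤ estar x)
    -- ANY measurable outcome model with integrable composition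
    (g : 𝒳 → ℝ) (hg : Measurable g)
    (hgint : Integrable (fun ω => g (X ω)) P)
    -- square integrability
    (hmg2 : MemLp (fun ω => m (X ω) - g (X ω)) 2 P)
    (hee2 : MemLp (fun ω => e (X ω) - estar (X ω)) 2 P)
    -- the subgroup
    (w : Set 𝒳) (hw : MeasurableSet w) :
    (∫ ω, (X ⁻¹' w).indicator
        (fun ω' => g (X ω')
          + ({ω'' | A ω'' = a}).indicator
              (fun ω'' => (Y ω'' - g (X ω'')) / estar (X ω'')) ω') ω ∂P)
      - ∫ ω in X ⁻¹' w, m (X ω) ∂P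
      = ∫ ω, (X ⁻¹' w).indicator
          (fun ω' => (e (X ω') - estar (X ω')) * (m (X ω') - g (X ω'))
            / estar (X ω')) ω ∂P := by
  -- basic facts
  have hAa : MeasurableSet {ω | A ω = a} := hA (measurableSet_singleton a)
  have hepos : ∀ x, 0 < estar x := fun x => lt_of_lt_of_le hε (hestarpos x)
  have hene : ∀ x, estar x ≠ 0 := fun x => (hepos x).ne'
  -- the model functions
  set ψ : 𝒳 → ℝ := fun x => w.indicator (fun _ => (1:ℝ)) x / estar x with hψdef
  set Φ : 𝒳 → ℝ := fun x => ψ x * (m x - g x) with hΦdef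
  have hψval : ∀ x ∈ w, ψ x = 1 / estar x := by
    intro x hx; simp [hψdef, Set.indicator_of_mem hx]
  have hψval' : ∀ x, x ∉ w → ψ x = 0 := by
    intro x hx; simp [hψdef, Set.indicator_of_notMem hx]
  have hψm : Measurable ψ := (measurable_one.indicator hw).div hestar
  have hΦm : Measurable Φ := hψm.mul (hm.sub hg)
  have hψbdd : ∀ x, ‖ψ x‖ ≤ 1 / ε := by
    intro x
    by_cases hx : x ∈ w
    · rw [hψval x hx, Real.norm_eq_abs, abs_of_nonneg (one_div_nonneg.mpr (hepos x).le)]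
      exact one_div_le_one_div_of_le hε (hestarpos x)
    · rw [hψval' x hx, norm_zero]; exact (one_div_pos.mpr hε).le
  -- 𝔪-strong measurability of compositions
  have hcomap : ∀ q : 𝒳 → ℝ, Measurable q →
      StronglyMeasurable[MeasurableSpace.comap X inferInstance] fun ω => q (X ω) :=
    fun q hq => ((hq.comp (Measurable.of_comap_le le_rfl))).stronglyMeasurable
  have hle : MeasurableSpace.comap X inferInstance ≤ (inferInstance : MeasurableSpace Ω) :=
    hX.comap_le
  -- integrability facts over P
  have hMG : Integrable (fun ω => m (X ω) - g (X ω)) P := hmint.sub hgint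
  have hψXaesm : AEStronglyMeasurable (fun ω => ψ (X ω)) P :=
    (hψm.comp hX).aestronglyMeasurable
  have hΦint : Integrable (fun ω => Φ (X ω)) P :=
    Integrable.bdd_mul hMG hψXaesm (c := 1 / ε) (Filter.Eventually.of_forall fun x => hψbdd _)
  have heXint : Integrable (fun ω => e (X ω)) P := by
    refine (integrable_const (1:ℝ)).mono' (he.comp hX).aestronglyMeasurable ?_
    refine Filter.Eventually.of_forall fun ω => ?_
    rw [Real.norm_eq_abs, abs_le]
    constructor
    · linarith [(he01 (X ω)).1]
    · simpa using (he01 (X ω)).2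
  have hχint : Integrable (({ω | A ω = a}).indicator (fun _ => (1:ℝ))) P := by
    exact (integrable_const (1:ℝ)).indicator hAa
  have hΦχ : Integrable (fun ω => Φ (X ω) * ({ω' | A ω' = a}).indicator (fun _ => (1:ℝ)) ω) P := by
    have h := Integrable.bdd_mul hΦint
      ((measurable_one.indicator hAa : Measurable _).aestronglyMeasurable)
      (c := 1) (Filter.Eventually.of_forall fun x => by
        by_cases hx : A x = a <;>
          simp [Set.indicator, hx])
    exact h.congr (Filter.Eventually.of_forall fun x => mul_comm _ _)
  -- Step A: E[Φ(X)·1{A=a}] = E[Φ(X)·e(X)]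
  have heqA : ∀ s, MeasurableSet[MeasurableSpace.comap X inferInstance] s →
      ∫ x in s, e (X x) ∂P = ∫ x in s, ({ω | A ω = a}).indicator (fun _ => (1:ℝ)) x ∂P := by
    rintro s ⟨B, hB, rfl⟩
    rw [hePS B hB, setIntegral_indicator hAa, setIntegral_const, smul_eq_mul, mul_one]
    rfl
  have stepA : ∫ ω, Φ (X ω) * ({ω' | A ω' = a}).indicator (fun _ => (1:ℝ)) ω ∂P
      = ∫ ω, Φ (X ω) * e (X ω) ∂P :=
    key_pullout P hle hχint (hcomap e he) heXint heqA (hcomap Φ hΦm) hΦχ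
  -- Step B: on P restricted to {A = a}, E[ψ(X)·Y] = E[ψ(X)·m(X)]
  have heqB : ∀ s, MeasurableSet[MeasurableSpace.comap X inferInstance] s →
      ∫ x in s, m (X x) ∂(P.restrict {ω | A ω = a})
        = ∫ x in s, Y x ∂(P.restrict {ω | A ω = a}) := by
    rintro s ⟨B, hB, rfl⟩
    rw [Measure.restrict_restrict (hX hB)]
    exact (hmOR B hB).symm
  have hψY : Integrable (fun ω => ψ (X ω) * Y ω) (P.restrict {ω | A ω = a}) :=
    Integrable.bdd_mul hYint.restrict hψXaesm.restrict (c := 1 / ε) (Filter.Eventually.of_forall fun x => hψbdd _)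
  have stepB : ∫ ω, ψ (X ω) * Y ω ∂(P.restrict {ω | A ω = a})
      = ∫ ω, ψ (X ω) * m (X ω) ∂(P.restrict {ω | A ω = a}) :=
    key_pullout (P.restrict {ω | A ω = a}) hle hYint.restrict (hcomap m hm)
      hmint.restrict heqB (hcomap ψ hψm) hψY
  -- arithmetic
  have hψg : Integrable (fun ω => ψ (X ω) * g (X ω)) (P.restrict {ω | A ω = a}) :=
    Integrable.bdd_mul hgint.restrict hψXaesm.restrict (c := 1 / ε) (Filter.Eventually.of_forall fun x => hψbdd _)
  have hψYg : Integrable (fun ω => ψ (X ω) * (Y ω - g (X ω))) P :=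
    Integrable.bdd_mul (hYint.sub hgint) hψXaesm (c := 1 / ε) (Filter.Eventually.of_forall fun x => hψbdd _)
  have hΦe : Integrable (fun ω => Φ (X ω) * e (X ω)) P := by
    have h := Integrable.bdd_mul hΦint (he.comp hX).aestronglyMeasurable
      (c := 1) (Filter.Eventually.of_forall fun x => by
        simp only [Function.comp_apply, Real.norm_eq_abs, abs_le]
        exact ⟨by linarith [(he01 (X x)).1], (he01 (X x)).2⟩)
    exact h.congr (Filter.Eventually.of_forall fun x => mul_comm _ _)
  -- decompose the first integral
  have h1 : (∫ ω, (X ⁻¹' w).indicator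
        (fun ω' => g (X ω')
          + ({ω'' | A ω'' = a}).indicator
              (fun ω'' => (Y ω'' - g (X ω'')) / estar (X ω'')) ω') ω ∂P)
      = (∫ ω in X ⁻¹' w, g (X ω) ∂P)
        + ∫ ω, ({ω' | A ω' = a}).indicator (fun ω' => ψ (X ω') * (Y ω' - g (X ω'))) ω ∂P := by
    have hpt : ∀ ω, (X ⁻¹' w).indicator
        (fun ω' => g (X ω')
          + ({ω'' | A ω'' = a}).indicator
              (fun ω'' => (Y ω'' - g (X ω'')) / estar (X ω'')) ω') ω
        = (X ⁻¹' w).indicator (fun ω' => g (X ω')) ω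
          + ({ω' | A ω' = a}).indicator (fun ω' => ψ (X ω') * (Y ω' - g (X ω'))) ω := by
      intro ω
      by_cases hωw : ω ∈ X ⁻¹' w <;> by_cases hωa : ω ∈ {ω' | A ω' = a}
      · simp only [Set.indicator_of_mem hωw, Set.indicator_of_mem hωa,
          hψval _ (Set.mem_preimage.mp hωw)]
        ring
      · simp only [Set.indicator_of_mem hωw, Set.indicator_of_notMem hωa]
      · simp only [Set.indicator_of_notMem hωw, Set.indicator_of_mem hωa,
          hψval' _ (fun hc => hωw (Set.mem_preimage.mpr hc))]
        ring
      · simp only [Set.indicator_of_notMem hωw, Set.indicator_of_notMem hωa]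
        ring
    rw [integral_congr_ae (Filter.Eventually.of_forall hpt),
      integral_add (hgint.indicator (hX hw)) (hψYg.indicator hAa),
      integral_indicator (hX hw)]
  have h2 : ∫ ω, ({ω' | A ω' = a}).indicator (fun ω' => ψ (X ω') * (Y ω' - g (X ω'))) ω ∂P
      = ∫ ω, ψ (X ω) * (Y ω - g (X ω)) ∂(P.restrict {ω | A ω = a}) :=
    integral_indicator hAa
  have hψmA : Integrable (fun ω => ψ (X ω) * m (X ω)) (P.restrict {ω | A ω = a}) :=
    Integrable.bdd_mul hmint.restrict hψXaesm.restrict (c := 1 / ε) (Filter.Eventually.of_forall fun x => hψbdd _)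
  have h3 : ∫ ω, ψ (X ω) * (Y ω - g (X ω)) ∂(P.restrict {ω | A ω = a})
      = ∫ ω, Φ (X ω) ∂(P.restrict {ω | A ω = a}) := by
    simp_rw [mul_sub]
    rw [integral_sub hψY hψg, stepB, ← integral_sub hψmA hψg]
    exact integral_congr_ae (Filter.Eventually.of_forall fun ω => by
      simp only [hΦdef]; ring)
  have h6 : ∫ ω, Φ (X ω) ∂(P.restrict {ω | A ω = a})
      = ∫ ω, Φ (X ω) * ({ω' | A ω' = a}).indicator (fun _ => (1:ℝ)) ω ∂P := by
    rw [← integral_indicator hAa]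
    refine integral_congr_ae (Filter.Eventually.of_forall fun ω => ?_)
    by_cases hωa : ω ∈ {ω' | A ω' = a}
    · simp only [Set.indicator_of_mem hωa, mul_one]
    · simp only [Set.indicator_of_notMem hωa, mul_zero]
  have h8 : (∫ ω, (X ⁻¹' w).indicator
          (fun ω' => (e (X ω') - estar (X ω')) * (m (X ω') - g (X ω'))
            / estar (X ω')) ω ∂P)
      = (∫ ω, Φ (X ω) * e (X ω) ∂P) - ∫ ω in X ⁻¹' w, (m (X ω) - g (X ω)) ∂P := by
    have hpt2 : ∀ ω, (X ⁻¹' w).indicator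
          (fun ω' => (e (X ω') - estar (X ω')) * (m (X ω') - g (X ω'))
            / estar (X ω')) ω
        = Φ (X ω) * e (X ω)
          - (X ⁻¹' w).indicator (fun ω' => m (X ω') - g (X ω')) ω := by
      intro ω
      by_cases hωw : ω ∈ X ⁻¹' w
      · simp only [Set.indicator_of_mem hωw, hΦdef, hψval _ (Set.mem_preimage.mp hωw)]
        have hne := hene (X ω)
        field_simp
      · simp only [Set.indicator_of_notMem hωw, hΦdef,
          hψval' _ (fun hc => hωw (Set.mem_preimage.mpr hc))]
        ring
    rw [integral_congr_ae (Filter.Eventually.of_forall hpt2),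
      integral_sub hΦe (hMG.indicator (hX hw)), integral_indicator (hX hw)]
  have h9 : ∫ ω in X ⁻¹' w, (m (X ω) - g (X ω)) ∂P
      = (∫ ω in X ⁻¹' w, m (X ω) ∂P) - ∫ ω in X ⁻¹' w, g (X ω) ∂P :=
    integral_sub hmint.restrict hgint.restrict
  rw [h1, h2, h3, h6, stepA, h8, h9]
  ring
end

section
/- Product bias bound for the doubly robust functional (Cauchy–Schwarz step in the rate-of-convergence proof): under the bias-decomposition hypotheses, for every measurable subgroup w ⊆ 𝒳, | E[ 1{X ∈ w} · ( g(X) + 1{A = a} · (Y − g(X)) / e*(X) ) ] − ∫_{{X ∈ w}} m_a(X) dP | ≤ ε⁻¹ · ‖ (e_a − e*) ∘ X ‖_{L²(P)} · ‖ (m_a − g) ∘ X ‖_{L²(P)}. -/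
open MeasureTheory

lemma integral_comp_mul_eq_zero_aux
    {Ω : Type*} [MeasurableSpace Ω] {P : Measure Ω} [IsProbabilityMeasure P]
    {𝒳 : Type*} [m𝒳 : MeasurableSpace 𝒳]
    {X : Ω → 𝒳} (hX : Measurable X)
    {f : Ω → ℝ} (hf : Integrable f P)
    (hzero : ∀ B : Set 𝒳, MeasurableSet B → ∫ ω in X ⁻¹' B, f ω ∂P = 0)
    {h : 𝒳 → ℝ} (hh : Measurable h)
    (hint : Integrable (fun ω => h (X ω) * f ω) P) :
    ∫ ω, h (X ω) * f ω ∂P = 0 := by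
  have hle : m𝒳.comap X ≤ ‹MeasurableSpace Ω› := hX.comap_le
  have hcond : (0 : Ω → ℝ) =ᵐ[P] P[f | m𝒳.comap X] := by
    refine ae_eq_condExp_of_forall_setIntegral_eq hle hf
      (fun s _ _ => integrableOn_zero) (fun s hs _ => ?_)
      stronglyMeasurable_const.aestronglyMeasurable
    obtain ⟨B, hB, rfl⟩ := hs
    simp [hzero B hB]
  have hXm : Measurable[m𝒳.comap X] X := measurable_iff_comap_le.mpr le_rfl
  have hsm : StronglyMeasurable[m𝒳.comap X] (fun ω => h (X ω)) :=
    (hh.comp hXm).stronglyMeasurable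
  have hprod : (fun ω => h (X ω) * f ω) = (fun ω => h (X ω)) * f := rfl
  have hpull : P[(fun ω => h (X ω)) * f | m𝒳.comap X]
      =ᵐ[P] (fun ω => h (X ω)) * P[f | m𝒳.comap X] :=
    condExp_mul_of_stronglyMeasurable_left hsm (hprod ▸ hint) hf
  have hzero' : P[(fun ω => h (X ω)) * f | m𝒳.comap X] =ᵐ[P] 0 := by
    refine hpull.trans ?_
    filter_upwards [hcond.symm] with ω hω
    simp [hω]
  calc ∫ ω, h (X ω) * f ω ∂P = ∫ ω, ((fun ω => h (X ω)) * f) ω ∂P := rfl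
    _ = ∫ ω, (P[(fun ω => h (X ω)) * f | m𝒳.comap X]) ω ∂P :=
        (integral_condExp hle).symm
    _ = ∫ _ω, (0 : ℝ) ∂P := integral_congr_ae hzero'
    _ = 0 := integral_zero _ _

lemma abs_integral_mul_le_aux
    {Ω : Type*} [MeasurableSpace Ω] {P : Measure Ω}
    {u v : Ω → ℝ} (hu : MemLp u 2 P) (hv : MemLp v 2 P) :
    |∫ ω, u ω * v ω ∂P| ≤ (eLpNorm u 2 P).toReal * (eLpNorm v 2 P).toReal := by
  have h2 : ENNReal.ofReal (2 : ℝ) = 2 := by norm_num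
  have hpq : (2 : ℝ).HolderConjugate 2 := ⟨by norm_num, by norm_num, by norm_num⟩
  have hint : Integrable (fun ω => u ω * v ω) P := by
    have := hv.smul (r := 1) hu
    exact memLp_one_iff_integrable.mp this
  have habs : |∫ ω, u ω * v ω ∂P| ≤ ∫ ω, ‖u ω‖ * ‖v ω‖ ∂P := by
    calc |∫ ω, u ω * v ω ∂P| ≤ ∫ ω, ‖u ω * v ω‖ ∂P := by
          simpa using norm_integral_le_integral_norm (fun ω => u ω * v ω) (μ := P)
      _ = ∫ ω, ‖u ω‖ * ‖v ω‖ ∂P := by simp [norm_mul]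
  have hCS := integral_mul_norm_le_Lp_mul_Lq (μ := P) hpq (h2 ▸ hu) (h2 ▸ hv)
  have htu : (eLpNorm u 2 P).toReal = (∫ ω, ‖u ω‖ ^ (2 : ℝ) ∂P) ^ (1 / (2 : ℝ)) := by
    rw [hu.eLpNorm_eq_integral_rpow_norm (by norm_num) (by norm_num),
      ENNReal.toReal_ofReal (by positivity)]
    norm_num
  have htv : (eLpNorm v 2 P).toReal = (∫ ω, ‖v ω‖ ^ (2 : ℝ) ∂P) ^ (1 / (2 : ℝ)) := by
    rw [hv.eLpNorm_eq_integral_rpow_norm (by norm_num) (by norm_num),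
      ENNReal.toReal_ofReal (by positivity)]
    norm_num
  rw [htu, htv]
  exact habs.trans hCS

/-- Product bias bound for the doubly robust functional (Cauchy–Schwarz
step in the rate-of-convergence proof):
`|E[1{X ∈ w}(g(X) + 1{A = a}(Y − g(X))/e*(X))] − ∫_{X ∈ w} m_a(X) dP|
  ≤ ε⁻¹ ‖(e_a − e*) ∘ X‖_{L²(P)} ‖(m_a − g) ∘ X‖_{L²(P)}`. -/
theorem dr_product_bias_bound
    {Ω : Type*} [MeasurableSpace Ω] (P : Measure Ω) [IsProbabilityMeasure P]
    {𝒳 : Type*} [MeasurableSpace 𝒳]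
    (X : Ω → 𝒳) (hX : Measurable X)
    (A : Ω → ℝ) (hA : Measurable A) (hA01 : ∀ ω, A ω = 0 ∨ A ω = 1)
    (Y : Ω → ℝ) (hY : Measurable Y) (hYint : Integrable Y P)
    (a : ℝ) (ha : a = 0 ∨ a = 1)
    -- a version of the propensity score, with 0 ≤ e_a ≤ 1
    (e : 𝒳 → ℝ) (he : Measurable e)
    (he01 : ∀ x, 0 ≤ e x ∧ e x ≤ 1)
    (hePS : ∀ B : Set 𝒳, MeasurableSet B →
      ∫ ω in X ⁻¹' B, e (X ω) ∂P = (P (X ⁻¹' B ∩ {ω | A ω = a})).toReal)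
    -- a version of the outcome regression E[Y | X, A = a]
    (m : 𝒳 → ℝ) (hm : Measurable m)
    (hmint : Integrable (fun ω => m (X ω)) P)
    (hmOR : ∀ B : Set 𝒳, MeasurableSet B →
      ∫ ω in X ⁻¹' B ∩ {ω | A ω = a}, Y ω ∂P
        = ∫ ω in X ⁻¹' B ∩ {ω | A ω = a}, m (X ω) ∂P)
    -- ANY measurable propensity model bounded below by ε > 0
    (estar : 𝒳 → ℝ) (hestar : Measurable estar)
    (ε : ℝ) (hε : 0 < ε) (hestarpos : ∀ x, ε ≤ estar x)
    -- ANY measurable outcome model with integrable composition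
    (g : 𝒳 → ℝ) (hg : Measurable g)
    (hgint : Integrable (fun ω => g (X ω)) P)
    -- square integrability
    (hmg2 : MemLp (fun ω => m (X ω) - g (X ω)) 2 P)
    (hee2 : MemLp (fun ω => e (X ω) - estar (X ω)) 2 P)
    -- the subgroup
    (w : Set 𝒳) (hw : MeasurableSet w) :
    |(∫ ω, (X ⁻¹' w).indicator
        (fun ω' => g (X ω')
          + ({ω'' | A ω'' = a}).indicator
              (fun ω'' => (Y ω'' - g (X ω'')) / estar (X ω'')) ω') ω ∂P)
        - ∫ ω in X ⁻¹' w, m (X ω) ∂P|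
      ≤ ε⁻¹ * (eLpNorm (fun ω => e (X ω) - estar (X ω)) 2 P).toReal
          * (eLpNorm (fun ω => m (X ω) - g (X ω)) 2 P).toReal := by
  have hAset : MeasurableSet {ω | A ω = a} := hA (measurableSet_singleton a)
  have hwX : MeasurableSet (X ⁻¹' w) := hX hw
  have hsne : ∀ x, estar x ≠ 0 := fun x => (lt_of_lt_of_le hε (hestarpos x)).ne'
  -- indicator functions
  set iw : Ω → ℝ := fun ω => w.indicator (fun _ => (1 : ℝ)) (X ω) with hiwdef
  set ia : Ω → ℝ := fun ω => ({ω' | A ω' = a}).indicator (fun _ => (1 : ℝ)) ω with hiadef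
  have hiw01 : ∀ ω, iw ω = 0 ∨ iw ω = 1 := by
    intro ω; by_cases h : X ω ∈ w <;> simp [hiwdef, h]
  have hia01 : ∀ ω, ia ω = 0 ∨ ia ω = 1 := by
    intro ω; by_cases h : ω ∈ {ω' | A ω' = a} <;> simp [hiadef, h]
  have hiwm : Measurable iw := (measurable_const.indicator hw).comp hX
  have hiam : Measurable ia := measurable_const.indicator hAset
  have hiw_abs : ∀ ω, |iw ω| ≤ 1 := by
    intro ω; rcases hiw01 ω with h | h <;> simp [h]
  have hia_abs : ∀ ω, |ia ω| ≤ 1 := by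
    intro ω; rcases hia01 ω with h | h <;> simp [h]
  -- the residual functions with zero conditional mean
  set f1 : Ω → ℝ := fun ω => ia ω - e (X ω) with hf1def
  set f2 : Ω → ℝ := fun ω => ({ω' | A ω' = a}).indicator (fun ω' => Y ω' - m (X ω')) ω
    with hf2def
  have hf2eq : ∀ ω, f2 ω = ia ω * (Y ω - m (X ω)) := by
    intro ω; by_cases h : ω ∈ {ω' | A ω' = a} <;> simp [hf2def, hiadef, h]
  -- integrability of e ∘ X and of f1, f2
  have heXint : Integrable (fun ω => e (X ω)) P := by
    refine (integrable_const (1 : ℝ)).mono' ((he.comp hX).aestronglyMeasurable) ?_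
    refine Filter.Eventually.of_forall fun ω => ?_
    have := he01 (X ω)
    rw [Real.norm_eq_abs, abs_le]; constructor <;> linarith [this.1, this.2]
  have hiaint : Integrable ia P :=
    (integrable_const (1 : ℝ)).indicator hAset
  have hf1int : Integrable f1 P := hiaint.sub heXint
  have hf2int : Integrable f2 P := (hYint.sub hmint).indicator hAset
  -- zero set-integrals
  have hzero1 : ∀ B : Set 𝒳, MeasurableSet B → ∫ ω in X ⁻¹' B, f1 ω ∂P = 0 := by
    intro B hB
    have h1 : ∫ ω in X ⁻¹' B, ia ω ∂P = (P (X ⁻¹' B ∩ {ω | A ω = a})).toReal := by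
      rw [hiadef]
      rw [setIntegral_indicator hAset]
      simp [Measure.restrict_apply, (hX hB).inter hAset, measureReal_def]
    rw [hf1def]
    rw [integral_sub hiaint.integrableOn heXint.integrableOn, h1, hePS B hB, sub_self]
  have hzero2 : ∀ B : Set 𝒳, MeasurableSet B → ∫ ω in X ⁻¹' B, f2 ω ∂P = 0 := by
    intro B hB
    rw [hf2def]
    rw [setIntegral_indicator hAset,
      integral_sub (hYint.integrableOn) (hmint.integrableOn), hmOR B hB, sub_self]
  -- the two weight functions
  set h1 : 𝒳 → ℝ := fun x => w.indicator (fun _ => (1 : ℝ)) x / estar x with hh1def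
  set h2 : 𝒳 → ℝ := fun x => w.indicator (fun _ => (1 : ℝ)) x * (m x - g x) / estar x
    with hh2def
  have hh1m : Measurable h1 := (measurable_const.indicator hw).div hestar
  have hh2m : Measurable h2 := ((measurable_const.indicator hw).mul (hm.sub hg)).div hestar
  have hind_bound : ∀ x : 𝒳, |w.indicator (fun _ => (1 : ℝ)) x / estar x| ≤ ε⁻¹ := by
    intro x
    have hs : 0 < estar x := lt_of_lt_of_le hε (hestarpos x)
    by_cases h : x ∈ w
    · rw [Set.indicator_of_mem h]
      rw [abs_of_nonneg (by positivity)]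
      rw [div_le_iff₀ hs, inv_mul_eq_div, le_div_iff₀ hε]
      nlinarith [hestarpos x]
    · simp [Set.indicator_of_notMem h, abs_of_nonneg, inv_nonneg.mpr hε.le]
  -- integrability of the products
  have hint1 : Integrable (fun ω => h1 (X ω) * f2 ω) P := by
    refine hf2int.bdd_mul (c := ε⁻¹) ((hh1m.comp hX).aestronglyMeasurable) ?_
    exact Filter.Eventually.of_forall fun ω => hind_bound (X ω)
  have h2Xint : Integrable (fun ω => h2 (X ω)) P := by
    have : Integrable (fun ω => (w.indicator (fun _ => (1 : ℝ)) (X ω) / estar (X ω))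
        * (m (X ω) - g (X ω))) P := by
      refine (hmint.sub hgint).bdd_mul (c := ε⁻¹)
        ((hh1m.comp hX).aestronglyMeasurable) ?_
      exact Filter.Eventually.of_forall fun ω => hind_bound (X ω)
    refine this.congr (Filter.Eventually.of_forall fun ω => ?_)
    rw [hh2def]; ring
  have hint2 : Integrable (fun ω => h2 (X ω) * f1 ω) P := by
    have hb : ∀ ω, ‖f1 ω‖ ≤ 2 := by
      intro ω
      simp only [hf1def, Real.norm_eq_abs]
      have := he01 (X ω)
      rcases hia01 ω with h | h <;> rw [h, abs_le] <;>
        exact ⟨by linarith [this.1, this.2], by linarith [this.1, this.2]⟩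
    have := h2Xint.bdd_mul (c := 2) ((hiam.sub (he.comp hX)).aestronglyMeasurable)
      (Filter.Eventually.of_forall hb)
    exact this.congr (Filter.Eventually.of_forall fun ω => mul_comm _ _)
  have hint4 : Integrable (fun ω => h2 (X ω) * e (X ω)) P := by
    have hb : ∀ ω, ‖e (X ω)‖ ≤ 1 := by
      intro ω; rw [Real.norm_eq_abs, abs_le]
      constructor <;> linarith [(he01 (X ω)).1, (he01 (X ω)).2]
    have := h2Xint.bdd_mul (c := 1) ((he.comp hX).aestronglyMeasurable)
      (Filter.Eventually.of_forall hb)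
    exact this.congr (Filter.Eventually.of_forall fun ω => mul_comm _ _)
  have hint0 : Integrable (fun ω => iw ω * g (X ω)) P := by
    refine hgint.bdd_mul (c := 1) hiwm.aestronglyMeasurable ?_
    exact Filter.Eventually.of_forall fun ω => by rw [Real.norm_eq_abs]; exact hiw_abs ω
  have hint3 : Integrable (fun ω => h2 (X ω) * ia ω) P := by
    have := h2Xint.bdd_mul (c := 1) hiam.aestronglyMeasurable
      (Filter.Eventually.of_forall fun ω => by rw [Real.norm_eq_abs]; exact hia_abs ω)
    exact this.congr (Filter.Eventually.of_forall fun ω => mul_comm _ _)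
  -- the two zero-mean identities
  have hZ1 : ∫ ω, h1 (X ω) * f2 ω ∂P = 0 :=
    integral_comp_mul_eq_zero_aux hX hf2int hzero2 hh1m hint1
  have hZ2 : ∫ ω, h2 (X ω) * f1 ω ∂P = 0 :=
    integral_comp_mul_eq_zero_aux hX hf1int hzero1 hh2m hint2
  -- pointwise decomposition of the doubly robust integrand
  have hpt : ∀ ω, (X ⁻¹' w).indicator
        (fun ω' => g (X ω')
          + ({ω'' | A ω'' = a}).indicator
              (fun ω'' => (Y ω'' - g (X ω'')) / estar (X ω'')) ω') ω
      = iw ω * g (X ω) + (h1 (X ω) * f2 ω + h2 (X ω) * ia ω) := by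
    intro ω
    have hs := hsne (X ω)
    by_cases hXw : X ω ∈ w
    · rw [Set.indicator_of_mem (show ω ∈ X ⁻¹' w from hXw)]
      by_cases hAa : ω ∈ {ω' | A ω' = a}
      · rw [Set.indicator_of_mem hAa]
        simp only [hiwdef, hiadef, hf2def, hh1def, hh2def,
          Set.indicator_of_mem hXw, Set.indicator_of_mem hAa]
        field_simp
        ring
      · rw [Set.indicator_of_notMem hAa]
        simp only [hiwdef, hiadef, hf2def, hh1def, hh2def,
          Set.indicator_of_mem hXw, Set.indicator_of_notMem hAa]
        ring
    · rw [Set.indicator_of_notMem (show ω ∉ X ⁻¹' w from hXw)]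
      simp only [hiwdef, hiadef, hf2def, hh1def, hh2def,
        Set.indicator_of_notMem hXw]
      ring
  -- the set integral of m as an indicator integral
  have hmset : ∫ ω in X ⁻¹' w, m (X ω) ∂P = ∫ ω, iw ω * m (X ω) ∂P := by
    rw [← integral_indicator hwX]
    refine integral_congr_ae (Filter.Eventually.of_forall fun ω => ?_)
    by_cases h : X ω ∈ w
    · rw [Set.indicator_of_mem (show ω ∈ X ⁻¹' w from h)]
      simp [hiwdef, Set.indicator_of_mem h]
    · rw [Set.indicator_of_notMem (show ω ∉ X ⁻¹' w from h)]
      simp [hiwdef, Set.indicator_of_notMem h]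
  have hintm : Integrable (fun ω => iw ω * m (X ω)) P := by
    refine hmint.bdd_mul (c := 1) hiwm.aestronglyMeasurable ?_
    exact Filter.Eventually.of_forall fun ω => by rw [Real.norm_eq_abs]; exact hiw_abs ω
  -- key equality
  set u : Ω → ℝ := fun ω =>
    w.indicator (fun _ => (1 : ℝ)) (X ω) / estar (X ω) * (e (X ω) - estar (X ω)) with hudef
  have hkey : (∫ ω, (X ⁻¹' w).indicator
        (fun ω' => g (X ω')
          + ({ω'' | A ω'' = a}).indicator
              (fun ω'' => (Y ω'' - g (X ω'')) / estar (X ω'')) ω') ω ∂P)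
        - ∫ ω in X ⁻¹' w, m (X ω) ∂P
      = ∫ ω, u ω * (m (X ω) - g (X ω)) ∂P := by
    have hint13 : Integrable (fun ω => h1 (X ω) * f2 ω + h2 (X ω) * ia ω) P :=
      hint1.add hint3
    have hI : (∫ ω, (X ⁻¹' w).indicator
        (fun ω' => g (X ω')
          + ({ω'' | A ω'' = a}).indicator
              (fun ω'' => (Y ω'' - g (X ω'')) / estar (X ω'')) ω') ω ∂P)
        = ∫ ω, iw ω * g (X ω) ∂P + (∫ ω, h1 (X ω) * f2 ω ∂P + ∫ ω, h2 (X ω) * ia ω ∂P) :=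
      calc (∫ ω, (X ⁻¹' w).indicator
        (fun ω' => g (X ω')
          + ({ω'' | A ω'' = a}).indicator
              (fun ω'' => (Y ω'' - g (X ω'')) / estar (X ω'')) ω') ω ∂P)
          = ∫ ω, iw ω * g (X ω) + (h1 (X ω) * f2 ω + h2 (X ω) * ia ω) ∂P :=
            integral_congr_ae (Filter.Eventually.of_forall hpt)
        _ = ∫ ω, iw ω * g (X ω) ∂P + ∫ ω, h1 (X ω) * f2 ω + h2 (X ω) * ia ω ∂P :=
            integral_add hint0 hint13
        _ = ∫ ω, iw ω * g (X ω) ∂P + (∫ ω, h1 (X ω) * f2 ω ∂P + ∫ ω, h2 (X ω) * ia ω ∂P) :=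
            by rw [integral_add hint1 hint3]
    have hia_split : ∫ ω, h2 (X ω) * ia ω ∂P
        = ∫ ω, h2 (X ω) * f1 ω ∂P + ∫ ω, h2 (X ω) * e (X ω) ∂P :=
      calc ∫ ω, h2 (X ω) * ia ω ∂P
          = ∫ ω, h2 (X ω) * f1 ω + h2 (X ω) * e (X ω) ∂P := by
            refine integral_congr_ae (Filter.Eventually.of_forall fun ω => ?_)
            simp only [hf1def]; ring
        _ = ∫ ω, h2 (X ω) * f1 ω ∂P + ∫ ω, h2 (X ω) * e (X ω) ∂P :=
            integral_add hint2 hint4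
    have hint04 : Integrable (fun ω => iw ω * g (X ω) + h2 (X ω) * e (X ω)) P :=
      hint0.add hint4
    rw [hI, hia_split, hZ1, hZ2, hmset, zero_add, zero_add,
      ← integral_add hint0 hint4, ← integral_sub hint04 hintm]
    refine integral_congr_ae (Filter.Eventually.of_forall fun ω => ?_)
    have hs := hsne (X ω)
    simp only [hudef, hh2def]
    field_simp
    ring
  rw [hkey]
  -- MemLp bounds for u
  have hum : Measurable u := (((measurable_const.indicator hw).div hestar).comp hX).mul
    ((he.comp hX).sub (hestar.comp hX))
  have hub : ∀ ω, ‖u ω‖ ≤ ‖ε⁻¹ * (e (X ω) - estar (X ω))‖ := by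
    intro ω
    simp only [hudef, Real.norm_eq_abs, abs_mul]
    refine mul_le_mul_of_nonneg_right ?_ (abs_nonneg _)
    calc |w.indicator (fun _ => (1:ℝ)) (X ω) / estar (X ω)| ≤ ε⁻¹ := hind_bound (X ω)
      _ = |ε⁻¹| := (abs_of_nonneg (inv_nonneg.mpr hε.le)).symm
  have hu2 : MemLp u 2 P :=
    MemLp.of_le (hee2.const_mul ε⁻¹) hum.aestronglyMeasurable
      (Filter.Eventually.of_forall hub)
  have hCS := abs_integral_mul_le_aux hu2 hmg2
  refine hCS.trans ?_
  refine mul_le_mul_of_nonneg_right ?_ ENNReal.toReal_nonneg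
  -- ‖u‖₂ ≤ ε⁻¹ ‖e - e*‖₂
  have hmono : eLpNorm u 2 P
      ≤ eLpNorm (fun ω => ε⁻¹ * (e (X ω) - estar (X ω))) 2 P :=
    eLpNorm_mono_ae (Filter.Eventually.of_forall hub)
  have hsmul : eLpNorm (fun ω => ε⁻¹ * (e (X ω) - estar (X ω))) 2 P
      = ‖ε⁻¹‖₊ * eLpNorm (fun ω => e (X ω) - estar (X ω)) 2 P := by
    have : (fun ω => ε⁻¹ * (e (X ω) - estar (X ω)))
        = ε⁻¹ • (fun ω => e (X ω) - estar (X ω)) := rfl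
    rw [this, eLpNorm_const_smul, enorm_eq_nnnorm]
  have hfin : (‖ε⁻¹‖₊ : ENNReal) * eLpNorm (fun ω => e (X ω) - estar (X ω)) 2 P ≠ ⊤ :=
    ENNReal.mul_ne_top ENNReal.coe_ne_top hee2.eLpNorm_ne_top
  calc (eLpNorm u 2 P).toReal
      ≤ ((‖ε⁻¹‖₊ : ENNReal) * eLpNorm (fun ω => e (X ω) - estar (X ω)) 2 P).toReal := by
        refine ENNReal.toReal_mono hfin ?_
        rw [← hsmul]; exact hmono
    _ = ε⁻¹ * (eLpNorm (fun ω => e (X ω) - estar (X ω)) 2 P).toReal := by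
        rw [ENNReal.toReal_mul, ENNReal.coe_toReal, coe_nnnorm, Real.norm_eq_abs,
          abs_of_nonneg (inv_nonneg.mpr hε.le)]
end

section
/- Sandwich variance computation for the inverse probability weighting splitting statistic (Theorem 2 of the paper, algebraic core): let E be a symmetric invertible n × n real matrix, h ∈ ℝⁿ, b₁₁, τ_l, τ_r ∈ ℝ, p_l > 0, p_r > 0, and set c = τ_l/p_l + τ_r/p_r and s = p_r·τ_l + p_l·τ_r. Let A = [[1, hᵀ, c], [0, E, 0], [0, 0, 1]] and B = [[b₁₁, hᵀ, s], [h, E, 0], [s, 0, p_l·p_r]] be (n+2) × (n+2) block matrices. Then the (1,1) entry of A⁻¹ · B · (A⁻¹)ᵀ equals b₁₁ − hᵀE⁻¹h − (p_r·τ_l + p_l·τ_r)² / (p_l·p_r). -/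
open Matrix

/-- Sandwich variance computation for the inverse probability weighting
splitting statistic (algebraic core of Theorem 2): with `c = τ_l/p_l + τ_r/p_r` and
`s = p_r·τ_l + p_l·τ_r`, the `(1,1)` entry of `A⁻¹ B (A⁻¹)ᵀ` equals
`b₁₁ − hᵀE⁻¹h − (p_r τ_l + p_l τ_r)²/(p_l p_r)`. -/
theorem sandwich_variance_ipw
    {n : ℕ} (E : Matrix (Fin n) (Fin n) ℝ) (hEsymm : E.IsSymm) (hE : IsUnit E.det)
    (h : Fin n → ℝ) (b11 τl τr pl pr : ℝ) (hpl : 0 < pl) (hpr : 0 < pr)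
    (c s : ℝ) (hc : c = τl / pl + τr / pr) (hs : s = pr * τl + pl * τr)
    (A B : Matrix (Fin 1 ⊕ (Fin n ⊕ Fin 1)) (Fin 1 ⊕ (Fin n ⊕ Fin 1)) ℝ)
    (hA : A = Matrix.fromBlocks
      (1 : Matrix (Fin 1) (Fin 1) ℝ)
      (Matrix.fromCols (Matrix.of fun _ j => h j) (Matrix.of fun _ _ => c))
      (0 : Matrix (Fin n ⊕ Fin 1) (Fin 1) ℝ)
      (Matrix.fromBlocks E 0 0 (1 : Matrix (Fin 1) (Fin 1) ℝ)))
    (hB : B = Matrix.fromBlocks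
      (Matrix.of fun _ _ => b11)
      (Matrix.fromCols (Matrix.of fun _ j => h j) (Matrix.of fun _ _ => s))
      (Matrix.fromRows (Matrix.of fun i _ => h i) (Matrix.of fun _ _ => s))
      (Matrix.fromBlocks E 0 0 (Matrix.of fun _ _ => pl * pr))) :
    (A⁻¹ * B * (A⁻¹)ᵀ) (Sum.inl 0) (Sum.inl 0)
      = b11 - h ⬝ᵥ (E⁻¹ *ᵥ h) - (pr * τl + pl * τr) ^ 2 / (pl * pr) := by
  have hAinv : A⁻¹
    = Matrix.fromBlocks 1
      (-((Matrix.fromCols (Matrix.of fun _ j => h j) (Matrix.of fun _ _ => c) :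
          Matrix (Fin 1) (Fin n ⊕ Fin 1) ℝ) *
        Matrix.fromBlocks E⁻¹ 0 0 (1 : Matrix (Fin 1) (Fin 1) ℝ)))
      0 (Matrix.fromBlocks E⁻¹ 0 0 (1 : Matrix (Fin 1) (Fin 1) ℝ)) := by
    rw [hA]
    apply inv_eq_right_inv
    rw [fromBlocks_multiply]
    simp [fromBlocks_multiply, mul_nonsing_inv E hE, ← fromBlocks_one]
  have quad : ∀ (M N : Matrix (Fin 1 ⊕ (Fin n ⊕ Fin 1)) (Fin 1 ⊕ (Fin n ⊕ Fin 1)) ℝ) i,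
      (M * N * Mᵀ) i i = (fun k => M i k) ⬝ᵥ N *ᵥ (fun k => M i k) := by
    intro M N i
    simp only [mul_apply, transpose_apply, dotProduct, mulVec, Finset.sum_mul, Finset.mul_sum]
    rw [Finset.sum_comm]
    exact Finset.sum_congr rfl fun l _ => Finset.sum_congr rfl fun k _ => by ring
  set v : Fin n → ℝ := h ᵥ* E⁻¹ with hv
  have ha : (fun k => A⁻¹ (Sum.inl 0) k)
      = Sum.elim (fun _ => (1:ℝ)) (Sum.elim (fun j => -v j) (fun _ => -c)) := by
    funext k
    rcases k with k | k | k <;>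
      simp [hAinv, mul_apply, Fintype.sum_sum_type, hv, vecMul, dotProduct, Matrix.one_apply, Fin.eq_zero]
  rw [quad, ha]
  simp [hB, mulVec, dotProduct, Fintype.sum_sum_type, Finset.mul_sum, Finset.sum_mul]
  have hsymm' : E⁻¹ᵀ = E⁻¹ := by rw [Matrix.transpose_nonsing_inv, hEsymm.eq]
  have hvE : v = E⁻¹ *ᵥ h := by rw [hv, ← Matrix.mulVec_transpose, hsymm']
  have hEv : E *ᵥ v = h := by
    rw [hvE, Matrix.mulVec_mulVec, mul_nonsing_inv E hE, Matrix.one_mulVec]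
  have hQ : ∀ x, (∑ i, E x i * v i) = h x := fun x => by
    simpa [mulVec, dotProduct] using congrFun hEv x
  have hT : ∑ x, h x * v x = ∑ x, ∑ i, h x * (E⁻¹ x i * h i) := by
    have hval : ∀ x, v x = ∑ i, E⁻¹ x i * h i := fun x => by
      simpa [mulVec, dotProduct] using congrFun hvE x
    simp [hval, Finset.mul_sum, mul_assoc]
  simp only [hQ, hT, add_neg_cancel, mul_zero, Finset.sum_const_zero, neg_zero, zero_add]
  have hplpr : pl * pr ≠ 0 := by positivity
  subst hc hs
  field_simp
  ring
end

section
/- Sandwich variance computation when propensity scores are estimated separately in the two child nodes (Theorem S-2 of the paper, algebraic core): let E_l (n × n) and E_r (m × m) be symmetric invertible real matrices, h_l ∈ ℝⁿ, h_r ∈ ℝᵐ, B₁₁, τ_l, τ_r ∈ ℝ, p_l > 0, p_r > 0, and set c = τ_l/p_l + τ_r/p_r and s = p_r·τ_l + p_l·τ_r. Let A = [[1, h_lᵀ, −h_rᵀ, c], [0, E_l, 0, 0], [0, 0, E_r, 0], [0, 0, 0, 1]] and B = [[B₁₁, h_lᵀ, −h_rᵀ, s], [h_l, E_l, 0, 0],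 [−h_r, 0, E_r, 0], [s, 0, 0, p_l·p_r]]. Then the (1,1) entry of A⁻¹ · B · (A⁻¹)ᵀ equals B₁₁ − h_lᵀE_l⁻¹h_l − h_rᵀE_r⁻¹h_r − (p_r·τ_l + p_l·τ_r)² / (p_l·p_r). -/
open Matrix

/-- Sandwich variance computation when propensity scores are estimated
separately in the two child nodes (algebraic core of Theorem S-2): with
`c = τ_l/p_l + τ_r/p_r` and `s = p_r·τ_l + p_l·τ_r`, the `(1,1)` entry of
`A⁻¹ B (A⁻¹)ᵀ` equals `B₁₁ − h_lᵀE_l⁻¹h_l − h_rᵀE_r⁻¹h_r − (p_r τ_l + p_l τ_r)²/(p_l p_r)`. -/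
theorem sandwich_variance_ipw_separate
    {n m : ℕ}
    (El : Matrix (Fin n) (Fin n) ℝ) (hElsymm : El.IsSymm) (hEl : IsUnit El.det)
    (Er : Matrix (Fin m) (Fin m) ℝ) (hErsymm : Er.IsSymm) (hEr : IsUnit Er.det)
    (hl : Fin n → ℝ) (hr : Fin m → ℝ)
    (B11 τl τr pl pr : ℝ) (hpl : 0 < pl) (hpr : 0 < pr)
    (c s : ℝ) (hc : c = τl / pl + τr / pr) (hs : s = pr * τl + pl * τr)
    (A B : Matrix (Fin 1 ⊕ (Fin n ⊕ (Fin m ⊕ Fin 1)))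
                  (Fin 1 ⊕ (Fin n ⊕ (Fin m ⊕ Fin 1))) ℝ)
    (hA : A = Matrix.fromBlocks
      (1 : Matrix (Fin 1) (Fin 1) ℝ)
      (Matrix.fromCols (Matrix.of fun _ j => hl j)
        (Matrix.fromCols (Matrix.of fun _ j => -hr j) (Matrix.of fun _ _ => c)))
      (0 : Matrix (Fin n ⊕ (Fin m ⊕ Fin 1)) (Fin 1) ℝ)
      (Matrix.fromBlocks El 0 0
        (Matrix.fromBlocks Er 0 0 (1 : Matrix (Fin 1) (Fin 1) ℝ))))
    (hB : B = Matrix.fromBlocks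
      (Matrix.of fun _ _ => B11)
      (Matrix.fromCols (Matrix.of fun _ j => hl j)
        (Matrix.fromCols (Matrix.of fun _ j => -hr j) (Matrix.of fun _ _ => s)))
      (Matrix.fromRows (Matrix.of fun i _ => hl i)
        (Matrix.fromRows (Matrix.of fun i _ => -hr i) (Matrix.of fun _ _ => s)))
      (Matrix.fromBlocks El 0 0
        (Matrix.fromBlocks Er 0 0 (Matrix.of fun _ _ => pl * pr)))) :
    (A⁻¹ * B * (A⁻¹)ᵀ) (Sum.inl 0) (Sum.inl 0)
      = B11 - hl ⬝ᵥ (El⁻¹ *ᵥ hl) - hr ⬝ᵥ (Er⁻¹ *ᵥ hr)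
          - (pr * τl + pl * τr) ^ 2 / (pl * pr) := by
  have hEl1 : El * El⁻¹ = 1 := Matrix.mul_nonsing_inv _ hEl
  have hEr1 : Er * Er⁻¹ = 1 := Matrix.mul_nonsing_inv _ hEr
  have hEl2 : El⁻¹ * El = 1 := Matrix.nonsing_inv_mul _ hEl
  have hEr2 : Er⁻¹ * Er = 1 := Matrix.nonsing_inv_mul _ hEr
  set t : Matrix (Fin 1) (Fin n ⊕ (Fin m ⊕ Fin 1)) ℝ :=
    Matrix.fromCols (Matrix.of fun _ j => hl j)
      (Matrix.fromCols (Matrix.of fun _ j => -hr j) (Matrix.of fun _ _ => c)) with ht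
  set Dinv : Matrix (Fin n ⊕ (Fin m ⊕ Fin 1)) (Fin n ⊕ (Fin m ⊕ Fin 1)) ℝ :=
    Matrix.fromBlocks El⁻¹ 0 0 (Matrix.fromBlocks Er⁻¹ 0 0 (1 : Matrix (Fin 1) (Fin 1) ℝ)) with hDinv
  have hAinv : A⁻¹ = Matrix.fromBlocks 1 (-(t * Dinv)) 0 Dinv := by
    apply Matrix.inv_eq_right_inv
    rw [hA]
    simp [Matrix.fromBlocks_multiply, hDinv, hEl1, hEr1, ← Matrix.fromBlocks_one, ht]
  rw [hAinv, hB]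
  simp only [Matrix.fromBlocks_transpose, Matrix.transpose_one, Matrix.transpose_zero,
    Matrix.transpose_neg, Matrix.fromBlocks_multiply, Matrix.fromBlocks_apply₁₁,
    ht, hDinv, Matrix.fromCols_mul_fromBlocks, Matrix.fromCols_mul_fromRows,
    Matrix.transpose_fromCols, Matrix.fromBlocks_mul_fromRows,
    Matrix.neg_mul, Matrix.mul_neg, Matrix.mul_assoc, hEl2, hEr2, Matrix.mul_one,
    Matrix.one_mul, Matrix.mul_zero, Matrix.zero_mul, add_zero, zero_add]
  simp [Matrix.mul_apply, Matrix.mulVec, dotProduct, Finset.mul_sum, Finset.sum_mul, hc, hs]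
  field_simp
  ring
end

section
/- Consistency of the subgroup inverse probability weighting estimator with known propensity score: let (Xᵢ, Aᵢ, Yᵢ), i ≥ 1, be i.i.d. copies of (X, A, Y) (with associated potential outcomes satisfying consistency, mean exchangeability and positivity), let w ⊆ 𝒳 be a measurable subgroup with P(X ∈ w) > 0, and let e_a be a version of the propensity score with ε ≤ e_a(X) ≤ 1 − ε almost surely. Then, almost surely, ( Σ_{i=1}^{n} 1{Xᵢ ∈ w, Aᵢ = a} · Yᵢ / e_a(Xᵢ) ) / ( Σ_{i=1}^{n} 1{Xᵢ ∈ w} ) converges as n → ∞ to E[Y^a | X ∈ w] = (1/P(X ∈ w)) ∫_{{X ∈ w}} Y^a dP. -/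
open MeasureTheory Filter Topology
open scoped ENNReal NNReal

/-- Weighted mean-exchangeability: if `∫_{X⁻¹B ∩ S} Ya = ∫_{X⁻¹B ∩ S} ν∘X` for all
measurable `B`, then the same holds with any nonnegative bounded measurable weight `q ∘ X`. -/
lemma weighted_exchange {Ω : Type*} [MeasurableSpace Ω] (P : Measure Ω) [IsProbabilityMeasure P]
    {𝒳 : Type*} [MeasurableSpace 𝒳] (X : Ω → 𝒳) (hX : Measurable X)
    (S : Set Ω) (hS : MeasurableSet S)
    (Ya : Ω → ℝ) (hYam : Measurable Ya) (hYaint : Integrable Ya P)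
    (ν : 𝒳 → ℝ) (hν : Measurable ν) (hνint : Integrable (fun ω => ν (X ω)) P)
    (hexch : ∀ B : Set 𝒳, MeasurableSet B →
      ∫ ω in X ⁻¹' B ∩ S, Ya ω ∂P = ∫ ω in X ⁻¹' B ∩ S, ν (X ω) ∂P)
    (q : 𝒳 → ℝ) (hqm : Measurable q) (hq0 : ∀ x, 0 ≤ q x)
    (C : ℝ) (hqb : ∀ᵐ ω ∂P, q (X ω) ≤ C) :
    ∫ ω in S, q (X ω) * Ya ω ∂P = ∫ ω in S, q (X ω) * ν (X ω) ∂P := by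
  have hPSle : P.restrict S ≤ P := Measure.restrict_le_self
  have hPSac : P.restrict S ≪ P := Measure.absolutelyContinuous_of_le hPSle
  set PS := P.restrict S with hPSdef
  -- the four finite measures
  set πp := PS.withDensity (fun ω => ENNReal.ofReal (Ya ω)) with hπp
  set πm := PS.withDensity (fun ω => ENNReal.ofReal (-Ya ω)) with hπm
  set σp := PS.withDensity (fun ω => ENNReal.ofReal (ν (X ω))) with hσp
  set σm := PS.withDensity (fun ω => ENNReal.ofReal (-ν (X ω))) with hσm
  have hfin : ∀ (g : Ω → ℝ), Integrable g P → ∀ t : Set Ω,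
      (PS.withDensity fun ω => ENNReal.ofReal (g ω)) t ≠ ⊤ := by
    intro g hg t
    have h1 : (PS.withDensity fun ω => ENNReal.ofReal (g ω)) t
        ≤ ∫⁻ ω, ENNReal.ofReal (g ω) ∂P := by
      refine le_trans (measure_mono (Set.subset_univ t)) ?_
      rw [withDensity_apply _ MeasurableSet.univ, setLIntegral_univ]
      exact lintegral_mono' hPSle le_rfl
    have h2 : ∫⁻ ω, ENNReal.ofReal (g ω) ∂P < ⊤ := by
      refine lt_of_le_of_lt (lintegral_mono fun ω => ?_) hg.2
      rw [← ofReal_norm_eq_enorm]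
      exact ENNReal.ofReal_le_ofReal (le_abs_self _)
    exact (lt_of_le_of_lt h1 h2).ne
  have hkey : ∀ B : Set 𝒳, MeasurableSet B →
      πp (X ⁻¹' B) + σm (X ⁻¹' B) = πm (X ⁻¹' B) + σp (X ⁻¹' B) := by
    intro B hB
    have ht : MeasurableSet (X ⁻¹' B) := hX hB
    have conv : ∀ (h : Ω → ℝ), Integrable h P →
        ∫ ω in X ⁻¹' B ∩ S, h ω ∂P
          = ((PS.withDensity fun ω => ENNReal.ofReal (h ω)) (X ⁻¹' B)).toReal
            - ((PS.withDensity fun ω => ENNReal.ofReal (-h ω)) (X ⁻¹' B)).toReal := by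
      intro h hint
      rw [← Measure.restrict_restrict ht,
        integral_eq_lintegral_pos_part_sub_lintegral_neg_part (hint.restrict.restrict),
        withDensity_apply _ ht, withDensity_apply _ ht]
    have e1 := conv Ya hYaint
    have e2 := conv (fun ω => ν (X ω)) hνint
    have e3 := hexch B hB
    rw [e1, e2] at e3
    have f1 := hfin Ya hYaint (X ⁻¹' B)
    have f2 := hfin (fun ω => -Ya ω) hYaint.neg (X ⁻¹' B)
    have f3 := hfin (fun ω => ν (X ω)) hνint (X ⁻¹' B)
    have f4 := hfin (fun ω => -ν (X ω)) hνint.neg (X ⁻¹' B)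
    have f2' : πm (X ⁻¹' B) ≠ ⊤ := f2
    have f4' : σm (X ⁻¹' B) ≠ ⊤ := f4
    refine (ENNReal.toReal_eq_toReal_iff' (by finiteness) (by finiteness)).mp ?_
    rw [ENNReal.toReal_add f1 f4', ENNReal.toReal_add f2' f3]
    linarith
  have hM : (πp + σm).map X = (πm + σp).map X := by
    refine Measure.ext fun B hB => ?_
    rw [Measure.map_apply hX hB, Measure.map_apply hX hB, Measure.add_apply, Measure.add_apply]
    exact hkey B hB
  set φ : 𝒳 → ℝ≥0∞ := fun x => ENNReal.ofReal (q x) with hφdef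
  have hφ : Measurable φ := ENNReal.measurable_ofReal.comp hqm
  have hφX : Measurable fun ω => φ (X ω) := hφ.comp hX
  have lkey : (∫⁻ ω, φ (X ω) ∂πp) + (∫⁻ ω, φ (X ω) ∂σm)
      = (∫⁻ ω, φ (X ω) ∂πm) + (∫⁻ ω, φ (X ω) ∂σp) := by
    have h1 := congrArg (fun m : Measure 𝒳 => ∫⁻ x, φ x ∂m) hM
    simpa only [lintegral_map hφ hX, lintegral_add_measure] using h1
  -- finiteness of the four lintegrals
  have hLfin : ∀ (m : Measure Ω), m ≪ P → (∀ t, m t ≠ ⊤) → ∫⁻ ω, φ (X ω) ∂m ≠ ⊤ := by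
    intro m hac hfin'
    have hb : ∀ᵐ ω ∂m, φ (X ω) ≤ ENNReal.ofReal C :=
      (hqb.filter_mono hac.ae_le).mono fun ω h => ENNReal.ofReal_le_ofReal h
    refine (lt_of_le_of_lt (lintegral_mono_ae hb) ?_).ne
    rw [lintegral_const]
    exact ENNReal.mul_lt_top ENNReal.ofReal_lt_top (hfin' _).lt_top
  -- convert the real integrals
  have conv2 : ∀ (h : Ω → ℝ), Measurable h → Integrable (fun ω => q (X ω) * h ω) PS →
      ∫ ω, q (X ω) * h ω ∂PS
        = (∫⁻ ω, φ (X ω) ∂(PS.withDensity fun ω => ENNReal.ofReal (h ω))).toReal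
          - (∫⁻ ω, φ (X ω) ∂(PS.withDensity fun ω => ENNReal.ofReal (-h ω))).toReal := by
    intro h hm hint
    have hhm : Measurable fun ω => ENNReal.ofReal (h ω) := ENNReal.measurable_ofReal.comp hm
    have hhm' : Measurable fun ω => ENNReal.ofReal (-h ω) :=
      ENNReal.measurable_ofReal.comp hm.neg
    rw [integral_eq_lintegral_pos_part_sub_lintegral_neg_part hint,
      lintegral_withDensity_eq_lintegral_mul _ hhm hφX,
      lintegral_withDensity_eq_lintegral_mul _ hhm' hφX]
    congr 1
    · refine congrArg ENNReal.toReal (lintegral_congr fun ω => ?_)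
      simp only [Pi.mul_apply, hφdef]
      rw [ENNReal.ofReal_mul (hq0 _), mul_comm]
    · refine congrArg ENNReal.toReal (lintegral_congr fun ω => ?_)
      simp only [Pi.mul_apply, hφdef]
      rw [show -(q (X ω) * h ω) = q (X ω) * (-h ω) by ring, ENNReal.ofReal_mul (hq0 _), mul_comm]
  -- integrability of the weighted integrands
  have hintYa : Integrable (fun ω => q (X ω) * Ya ω) PS := by
    refine Integrable.mono' ((hYaint.abs.const_mul C).restrict)
      ((hqm.comp hX).mul hYam).aestronglyMeasurable ?_
    refine ae_restrict_of_ae (hqb.mono fun ω h => ?_)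
    rw [Real.norm_eq_abs, abs_mul, abs_of_nonneg (hq0 _)]
    exact mul_le_mul_of_nonneg_right h (abs_nonneg _)
  have hintν : Integrable (fun ω => q (X ω) * ν (X ω)) PS := by
    refine Integrable.mono' ((hνint.abs.const_mul C).restrict)
      ((hqm.comp hX).mul (hν.comp hX)).aestronglyMeasurable ?_
    refine ae_restrict_of_ae (hqb.mono fun ω h => ?_)
    rw [Real.norm_eq_abs, abs_mul, abs_of_nonneg (hq0 _)]
    exact mul_le_mul_of_nonneg_right h (abs_nonneg _)
  have E1 := conv2 Ya hYam hintYa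
  have E2 := conv2 (fun ω => ν (X ω)) (hν.comp hX) hintν
  have F1 := hLfin πp ((withDensity_absolutelyContinuous _ _).trans hPSac)
    (hfin Ya hYaint)
  have F2 := hLfin πm ((withDensity_absolutelyContinuous _ _).trans hPSac)
    (hfin (fun ω => -Ya ω) hYaint.neg)
  have F3 := hLfin σp ((withDensity_absolutelyContinuous _ _).trans hPSac)
    (hfin (fun ω => ν (X ω)) hνint)
  have F4 := hLfin σm ((withDensity_absolutelyContinuous _ _).trans hPSac)
    (hfin (fun ω => -ν (X ω)) hνint.neg)
  have hTR := congrArg ENNReal.toReal lkey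
  rw [ENNReal.toReal_add F1 F4, ENNReal.toReal_add F2 F3] at hTR
  show ∫ ω, q (X ω) * Ya ω ∂PS = ∫ ω, q (X ω) * ν (X ω) ∂PS
  rw [E1, E2]
  linarith

/-- Consistency of the subgroup inverse probability weighting estimator
with known propensity score: the ratio
`(Σᵢ 1{Xᵢ ∈ w, Aᵢ = a} Yᵢ / e_a(Xᵢ)) / (Σᵢ 1{Xᵢ ∈ w})` converges almost surely to
`E[Y^a | X ∈ w]`. -/
theorem ipw_estimator_consistency
    {Ω : Type*} [MeasurableSpace Ω] (P : Measure Ω) [IsProbabilityMeasure P]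
    {𝒳 : Type*} [MeasurableSpace 𝒳]
    (X : Ω → 𝒳) (hX : Measurable X)
    (A : Ω → ℝ) (hA : Measurable A) (hA01 : ∀ ω, A ω = 0 ∨ A ω = 1)
    (Y : Ω → ℝ) (hY : Measurable Y) (hYint : Integrable Y P)
    (a : ℝ) (ha : a = 0 ∨ a = 1)
    (Y1 Y0 : Ω → ℝ) (hY1m : Measurable Y1) (hY0m : Measurable Y0)
    (hY1int : Integrable Y1 P) (hY0int : Integrable Y0 P)
    (Ya : Ω → ℝ) (hYa : Ya = if a = 1 then Y1 else Y0)
    -- consistency of potential outcomes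
    (hcons : ∀ᵐ ω ∂P, Y ω = A ω * Y1 ω + (1 - A ω) * Y0 ω)
    -- a version of the propensity score
    (e : 𝒳 → ℝ) (he : Measurable e)
    (hePS : ∀ B : Set 𝒳, MeasurableSet B →
      ∫ ω in X ⁻¹' B, e (X ω) ∂P = (P (X ⁻¹' B ∩ {ω | A ω = a})).toReal)
    -- a version of E[Y^a | X]
    (ν : 𝒳 → ℝ) (hν : Measurable ν)
    (hνint : Integrable (fun ω => ν (X ω)) P)
    (hνCE : ∀ B : Set 𝒳, MeasurableSet B →
      ∫ ω in X ⁻¹' B, Ya ω ∂P = ∫ ω in X ⁻¹' B, ν (X ω) ∂P)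
    -- mean exchangeability
    (hexch : ∀ B : Set 𝒳, MeasurableSet B →
      ∫ ω in X ⁻¹' B ∩ {ω | A ω = a}, Ya ω ∂P
        = ∫ ω in X ⁻¹' B ∩ {ω | A ω = a}, ν (X ω) ∂P)
    -- positivity
    (ε : ℝ) (hε : 0 < ε)
    (hpos : ∀ᵐ ω ∂P, ε ≤ e (X ω) ∧ e (X ω) ≤ 1 - ε)
    -- the subgroup, with P(X ∈ w) > 0
    (w : Set 𝒳) (hw : MeasurableSet w)
    (hwpos : 0 < (P (X ⁻¹' w)).toReal)
    -- i.i.d. copies of (X, A, Y)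
    (Xs : ℕ → Ω → 𝒳) (As : ℕ → Ω → ℝ) (Ys : ℕ → Ω → ℝ)
    (hmeas : ∀ i, Measurable (fun ω => (Xs i ω, As i ω, Ys i ω)))
    (hindep : ProbabilityTheory.iIndepFun
      (fun i ω => (Xs i ω, As i ω, Ys i ω)) P)
    (hident : ∀ i, ProbabilityTheory.IdentDistrib
      (fun ω => (Xs i ω, As i ω, Ys i ω)) (fun ω => (X ω, A ω, Y ω)) P P) :
    ∀ᵐ ω ∂P, Tendsto (fun n : ℕ =>
        (∑ i ∈ Finset.range n,
            ((Xs i ⁻¹' w) ∩ {ω' | As i ω' = a}).indicator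
              (fun ω' => Ys i ω' / e (Xs i ω')) ω)
          / (∑ i ∈ Finset.range n, (Xs i ⁻¹' w).indicator (fun _ => (1 : ℝ)) ω))
      atTop
      (𝓝 ((1 / (P (X ⁻¹' w)).toReal) * ∫ ω' in X ⁻¹' w, Ya ω' ∂P)) := by
  classical
  set S : Set Ω := {ω | A ω = a} with hSdef
  have hS : MeasurableSet S := hA (measurableSet_singleton a)
  set μ : Measure 𝒳 := P.map X with hμdef
  have hμprob : IsProbabilityMeasure μ := Measure.isProbabilityMeasure_map hX.aemeasurable
  have hYam : Measurable Ya := by rw [hYa]; split_ifs <;> assumption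
  have hYaint : Integrable Ya P := by rw [hYa]; split_ifs <;> assumption
  have hposμ : ∀ᵐ x ∂μ, ε ≤ e x ∧ e x ≤ 1 - ε := by
    rw [hμdef, ae_map_iff hX.aemeasurable]
    · exact hpos
    · exact (measurableSet_le measurable_const he).inter (measurableSet_le he measurable_const)
  -- the propensity-score measure identity
  have hρ : (P.restrict S).map X = μ.withDensity (fun x => ENNReal.ofReal (e x)) := by
    refine Measure.ext fun B hB => ?_
    rw [Measure.map_apply hX hB, Measure.restrict_apply (hX hB), withDensity_apply _ hB]
    have h1 : ∫ ω in X ⁻¹' B, e (X ω) ∂P = ∫ x in B, e x ∂μ :=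
      (setIntegral_map hB he.aestronglyMeasurable hX.aemeasurable).symm
    have h0 : 0 ≤ᵐ[μ.restrict B] e :=
      ae_restrict_of_ae (hposμ.mono fun x hx => le_trans hε.le hx.1)
    have h2 : ∫ x in B, e x ∂μ = (∫⁻ x in B, ENNReal.ofReal (e x) ∂μ).toReal :=
      integral_eq_lintegral_of_nonneg_ae h0 he.aestronglyMeasurable.restrict
    have h3 : (P (X ⁻¹' B ∩ S)).toReal = (∫⁻ x in B, ENNReal.ofReal (e x) ∂μ).toReal := by
      rw [← hePS B hB, h1, h2]
    have hf2 : ∫⁻ x in B, ENNReal.ofReal (e x) ∂μ ≠ ⊤ := by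
      have hb : ∫⁻ x in B, ENNReal.ofReal (e x) ∂μ ≤ ∫⁻ _, 1 ∂μ := by
        refine le_trans (lintegral_mono_ae (ae_restrict_of_ae (hposμ.mono fun x hx =>
          ENNReal.ofReal_le_one.mpr (by linarith [hx.2])))) ?_
        exact lintegral_mono' Measure.restrict_le_self le_rfl
      refine (lt_of_le_of_lt hb ?_).ne
      simp
    exact (ENNReal.toReal_eq_toReal_iff' (measure_ne_top _ _) hf2).mp h3
  -- weight function
  set q : 𝒳 → ℝ := w.indicator (fun x => |e x|⁻¹) with hqdef
  have hqm : Measurable q := (he.abs.inv).indicator hw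
  have hq0 : ∀ x, 0 ≤ q x := fun x =>
    Set.indicator_nonneg (fun x _ => inv_nonneg.mpr (abs_nonneg _)) x
  have hqb : ∀ᵐ ω ∂P, q (X ω) ≤ ε⁻¹ := by
    refine hpos.mono fun ω h => ?_
    by_cases hxw : X ω ∈ w
    · rw [hqdef, Set.indicator_of_mem hxw, abs_of_pos (lt_of_lt_of_le hε h.1)]
      exact inv_anti₀ hε h.1
    · rw [hqdef, Set.indicator_of_notMem hxw]
      positivity
  have hD : MeasurableSet (X ⁻¹' w ∩ S) := (hX hw).inter hS
  -- main identification: expectation of the IPW integrand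
  have hNmain : ∫ ω, ((X ⁻¹' w ∩ S).indicator (fun ω => Y ω / e (X ω))) ω ∂P
      = ∫ ω in X ⁻¹' w, Ya ω ∂P := by
    rw [integral_indicator hD]
    have stepB : ∫ ω in X ⁻¹' w ∩ S, Y ω / e (X ω) ∂P
        = ∫ ω in X ⁻¹' w ∩ S, |e (X ω)|⁻¹ * Ya ω ∂P := by
      refine integral_congr_ae ((ae_restrict_iff' hD).mpr ?_)
      filter_upwards [hcons, hpos] with ω h1 h2 hmem
      have hAa : A ω = a := hmem.2
      have hYYa : Y ω = Ya ω := by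
        rcases ha with h0 | h1'
        · have hA0 : A ω = 0 := by rw [hAa, h0]
          rw [hYa, if_neg (by rw [h0]; norm_num), h1, hA0]
          ring
        · have hA1 : A ω = 1 := by rw [hAa, h1']
          rw [hYa, if_pos h1', h1, hA1]
          ring
      rw [hYYa, div_eq_mul_inv, mul_comm, abs_of_pos (lt_of_lt_of_le hε h2.1)]
    rw [stepB]
    have stepC : ∫ ω in X ⁻¹' w ∩ S, |e (X ω)|⁻¹ * Ya ω ∂P
        = ∫ ω in S, q (X ω) * Ya ω ∂P := by
      have hpt : ∀ ω, q (X ω) * Ya ω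
          = (X ⁻¹' w).indicator (fun ω => |e (X ω)|⁻¹ * Ya ω) ω := by
        intro ω
        by_cases hxw : X ω ∈ w <;>
          simp [hqdef, Set.indicator_apply, Set.mem_preimage, hxw]
      rw [show (fun ω => q (X ω) * Ya ω) = (X ⁻¹' w).indicator
            (fun ω => |e (X ω)|⁻¹ * Ya ω) from funext hpt]
      rw [setIntegral_indicator (hX hw), Set.inter_comm]
    rw [stepC]
    rw [weighted_exchange P X hX S hS Ya hYam hYaint ν hν hνint hexch q hqm hq0 ε⁻¹ hqb]
    have stepE : ∫ ω in S, q (X ω) * ν (X ω) ∂P = ∫ x in w, ν x ∂μ := by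
      have h1 : ∫ ω in S, q (X ω) * ν (X ω) ∂P
          = ∫ x, q x * ν x ∂((P.restrict S).map X) := by
        rw [integral_map (f := fun x => q x * ν x) hX.aemeasurable ((hqm.mul hν).aestronglyMeasurable)]
      rw [h1, hρ]
      have hcoe : (fun x => ENNReal.ofReal (e x)) = fun x => ((e x).toNNReal : ℝ≥0∞) := rfl
      rw [hcoe, integral_withDensity_eq_integral_smul (f := fun x => (e x).toNNReal)
        (by exact measurable_real_toNNReal.comp he) _]
      have h3 : ∫ x, (e x).toNNReal • (q x * ν x) ∂μ = ∫ x, w.indicator ν x ∂μ := by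
        refine integral_congr_ae (hposμ.mono fun x hx => ?_)
        have hepos : 0 < e x := lt_of_lt_of_le hε hx.1
        show (e x).toNNReal • (q x * ν x) = w.indicator ν x
        rw [NNReal.smul_def, Real.coe_toNNReal _ hepos.le]
        by_cases hxw : x ∈ w
        · rw [hqdef, Set.indicator_of_mem hxw, Set.indicator_of_mem hxw,
            abs_of_pos hepos, smul_eq_mul, ← mul_assoc, mul_inv_cancel₀ hepos.ne', one_mul]
        · rw [hqdef, Set.indicator_of_notMem hxw, Set.indicator_of_notMem hxw,
            zero_mul, smul_zero]
      rw [h3, integral_indicator hw]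
    rw [stepE, setIntegral_map hw hν.aestronglyMeasurable hX.aemeasurable, ← hνCE w hw]
  -- SLLN setup
  set Sprod : Set (𝒳 × ℝ × ℝ) := {p | p.1 ∈ w ∧ p.2.1 = a} with hSpdef
  have hSp : MeasurableSet Sprod :=
    (measurable_fst hw).inter
      ((measurable_fst.comp measurable_snd) (measurableSet_singleton a))
  set f : 𝒳 × ℝ × ℝ → ℝ := Sprod.indicator (fun p => p.2.2 / e p.1) with hfdef
  have hfm : Measurable f :=
    ((measurable_snd.comp measurable_snd).div (he.comp measurable_fst)).indicator hSp
  set g : 𝒳 × ℝ × ℝ → ℝ := ({p : 𝒳 × ℝ × ℝ | p.1 ∈ w}).indicator (fun _ => 1) with hgdef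
  have hgm : Measurable g := measurable_const.indicator (measurable_fst hw)
  have hfZ : ∀ (X' : Ω → 𝒳) (A' Y' : Ω → ℝ) (ω : Ω),
      f (X' ω, A' ω, Y' ω)
        = ((X' ⁻¹' w) ∩ {ω' | A' ω' = a}).indicator (fun ω' => Y' ω' / e (X' ω')) ω := by
    intro X' A' Y' ω
    by_cases h : X' ω ∈ w ∧ A' ω = a <;>
      simp [hfdef, hSpdef, Set.indicator_apply, Set.mem_inter_iff, Set.mem_preimage,
        Set.mem_setOf_eq, h]
  have hgZ : ∀ (X' : Ω → 𝒳) (A' Y' : Ω → ℝ) (ω : Ω),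
      g (X' ω, A' ω, Y' ω) = (X' ⁻¹' w).indicator (fun _ => (1 : ℝ)) ω := by
    intro X' A' Y' ω
    by_cases h : X' ω ∈ w <;>
      simp [hgdef, Set.indicator_apply, Set.mem_preimage, Set.mem_setOf_eq, h]
  set Z : Ω → 𝒳 × ℝ × ℝ := fun ω => (X ω, A ω, Y ω) with hZdef
  set Zs : ℕ → Ω → 𝒳 × ℝ × ℝ := fun i ω => (Xs i ω, As i ω, Ys i ω) with hZsdef
  have hfZint : Integrable (fun ω => f (Z ω)) P := by
    have heq : (fun ω => f (Z ω))
        = fun ω => ((X ⁻¹' w ∩ S).indicator (fun ω => Y ω / e (X ω))) ω :=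
      funext fun ω => hfZ X A Y ω
    rw [heq]
    refine Integrable.mono' (hYint.abs.const_mul ε⁻¹)
      (((hY.div (he.comp hX)).indicator hD).aestronglyMeasurable) ?_
    filter_upwards [hpos] with ω h
    rw [Real.norm_eq_abs]
    by_cases hm : ω ∈ X ⁻¹' w ∩ S
    · rw [Set.indicator_of_mem hm, abs_div, abs_of_pos (lt_of_lt_of_le hε h.1),
        div_eq_mul_inv, mul_comm]
      exact mul_le_mul_of_nonneg_right (inv_anti₀ hε h.1) (abs_nonneg _)
    · rw [Set.indicator_of_notMem hm, abs_zero]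
      positivity
  have hgZint : Integrable (fun ω => g (Z ω)) P := by
    have heq : (fun ω => g (Z ω)) = (X ⁻¹' w).indicator (fun _ => (1 : ℝ)) :=
      funext fun ω => hgZ X A Y ω
    rw [heq]
    exact (integrable_const 1).indicator (hX hw)
  -- strong law for the numerator
  have hcompf := hindep.comp (fun _ => f) (fun _ => hfm)
  have hindf : Pairwise (Function.onFun (ProbabilityTheory.IndepFun · · P) fun i ω => f (Zs i ω)) :=
    fun i j hij => hcompf.indepFun hij
  have hidf : ∀ i, ProbabilityTheory.IdentDistrib (fun ω => f (Zs i ω))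
      (fun ω => f (Zs 0 ω)) P P :=
    fun i => ((hident i).comp hfm).trans ((hident 0).comp hfm).symm
  have hintf0 : Integrable (fun ω => f (Zs 0 ω)) P :=
    (((hident 0).comp hfm).integrable_iff).mpr hfZint
  have hslf := ProbabilityTheory.strong_law_ae_real (fun i ω => f (Zs i ω)) hintf0 hindf hidf
  -- strong law for the denominator
  have hcompg := hindep.comp (fun _ => g) (fun _ => hgm)
  have hindg : Pairwise (Function.onFun (ProbabilityTheory.IndepFun · · P) fun i ω => g (Zs i ω)) :=
    fun i j hij => hcompg.indepFun hij
  have hidg : ∀ i, ProbabilityTheory.IdentDistrib (fun ω => g (Zs i ω))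
      (fun ω => g (Zs 0 ω)) P P :=
    fun i => ((hident i).comp hgm).trans ((hident 0).comp hgm).symm
  have hintg0 : Integrable (fun ω => g (Zs 0 ω)) P :=
    (((hident 0).comp hgm).integrable_iff).mpr hgZint
  have hslg := ProbabilityTheory.strong_law_ae_real (fun i ω => g (Zs i ω)) hintg0 hindg hidg
  -- identify the limits
  have hmeanf : ∫ ω, f (Zs 0 ω) ∂P = ∫ ω' in X ⁻¹' w, Ya ω' ∂P := by
    have h5 : ∫ ω, f (Zs 0 ω) ∂P = ∫ ω, f (Z ω) ∂P := by
      have h6 := ((hident 0).comp hfm).integral_eq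
      simpa only [hZsdef, hZdef, Function.comp] using h6
    rw [h5, ← hNmain]
    exact integral_congr_ae (Eventually.of_forall fun ω => hfZ X A Y ω)
  have hmeang : ∫ ω, g (Zs 0 ω) ∂P = (P (X ⁻¹' w)).toReal := by
    have h5 : ∫ ω, g (Zs 0 ω) ∂P = ∫ ω, g (Z ω) ∂P := by
      have h6 := ((hident 0).comp hgm).integral_eq
      simpa only [hZsdef, hZdef, Function.comp] using h6
    have heq : (fun ω => g (Z ω)) = (X ⁻¹' w).indicator (fun _ => (1 : ℝ)) :=
      funext fun ω => hgZ X A Y ω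
    rw [h5, heq]
    simpa [measureReal_def, Pi.one_def] using integral_indicator_one (hX hw)
  filter_upwards [hslf, hslg] with ω h1 h2
  rw [hmeanf] at h1
  rw [hmeang] at h2
  have hDne : (P (X ⁻¹' w)).toReal ≠ 0 := hwpos.ne'
  have h3 := h1.div h2 hDne
  have h4 : Tendsto (fun n : ℕ =>
      (∑ i ∈ Finset.range n, f (Zs i ω)) / (∑ i ∈ Finset.range n, g (Zs i ω))) atTop
      (𝓝 ((∫ ω' in X ⁻¹' w, Ya ω' ∂P) / (P (X ⁻¹' w)).toReal)) := by
    refine Filter.Tendsto.congr' ?_ h3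
    filter_upwards [eventually_ge_atTop 1] with n hn
    have hn' : (n : ℝ) ≠ 0 := Nat.cast_ne_zero.mpr (by omega)
    exact div_div_div_cancel_right₀ hn' _ _
  have heqfun : (fun n : ℕ =>
      (∑ i ∈ Finset.range n,
          ((Xs i ⁻¹' w) ∩ {ω' | As i ω' = a}).indicator
            (fun ω' => Ys i ω' / e (Xs i ω')) ω)
        / (∑ i ∈ Finset.range n, (Xs i ⁻¹' w).indicator (fun _ => (1 : ℝ)) ω))
      = fun n : ℕ =>
      (∑ i ∈ Finset.range n, f (Zs i ω)) / (∑ i ∈ Finset.range n, g (Zs i ω)) := by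
    funext n
    congr 1
  rw [heqfun, show (1 / (P (X ⁻¹' w)).toReal) * ∫ ω' in X ⁻¹' w, Ya ω' ∂P
      = (∫ ω' in X ⁻¹' w, Ya ω' ∂P) / (P (X ⁻¹' w)).toReal by
    rw [one_div, inv_mul_eq_div]]
  exact h4
end

section
/- Consistency of the subgroup doubly robust estimator with fixed nuisance functions, at least one correctly specified (Theorem 3, part 1, with the nuisance estimators fixed at their limits): let (Xᵢ, Aᵢ, Yᵢ), i ≥ 1, be i.i.d. copies of (X, A, Y) (with associated potential outcomes satisfying consistency, mean exchangeability and positivity), let w ⊆ 𝒳 be a measurable subgroup with P(X ∈ w) > 0, let e* : 𝒳 → ℝ be measurable with e*(x) ≥ ε for all x (ε > 0), and let g* : 𝒳 → ℝ be measurable with g* ∘ X integrable. Assume that e* = e_a almost everywhere with respect to the law of X, or that g* = m_a almost everywhere with respect to the law of X (where e_a is a version of the propensity score and m_a a version of the outcome regression E[Y | X, A = a]). Then, almost surely, ( Σ_{i=1}^{n} 1{Xᵢ ∈ w} · ( g*(Xᵢ) + 1{Aᵢ = a} · (Yᵢ − g*(Xᵢ)) / e*(Xᵢ) ) ) / ( Σ_{i=1}^{n}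 1{Xᵢ ∈ w} ) converges as n → ∞ to E[Y^a | X ∈ w] = (1/P(X ∈ w)) ∫_{{X ∈ w}} Y^a dP. -/
open MeasureTheory Filter Topology

/-- If `g` has zero integral on every `m`-measurable set, then for any `m`-strongly
measurable `φ`, the integral of `φ * g` is zero. -/
lemma aux_weighted_zero {Ω : Type*} [m0 : MeasurableSpace Ω] (P : Measure Ω)
    [IsProbabilityMeasure P] {m : MeasurableSpace Ω} (hm : m ≤ m0)
    {φ g : Ω → ℝ} (hφ : StronglyMeasurable[m] φ)
    (hg : Integrable g P) (hφg : Integrable (fun ω => φ ω * g ω) P)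
    (h0 : ∀ s, MeasurableSet[m] s → ∫ ω in s, g ω ∂P = 0) :
    ∫ ω, φ ω * g ω ∂P = 0 := by
  have hce : (0 : Ω → ℝ) =ᵐ[P] P[g|m] := by
    refine ae_eq_condExp_of_forall_setIntegral_eq hm hg
      (fun s _ _ => integrableOn_zero (μ := P)) (fun s hs _ => by simp [h0 s hs]) ?_
    exact (stronglyMeasurable_const (β := ℝ)).aestronglyMeasurable
  have h1 : ∫ ω, φ ω * g ω ∂P = ∫ ω, (P[(fun ω => φ ω * g ω)|m]) ω ∂P :=
    (integral_condExp hm).symm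
  rw [h1]
  have h2 : P[(fun ω => φ ω * g ω)|m] =ᵐ[P] fun ω => φ ω * (P[g|m]) ω := by
    have := condExp_mul_of_stronglyMeasurable_left hφ (by simpa [Pi.mul_def] using hφg) hg
    simpa [Pi.mul_def] using this
  rw [integral_congr_ae h2]
  refine integral_eq_zero_of_ae ?_
  filter_upwards [hce] with ω hω
  simp [← hω]



/-- Consistency of the subgroup doubly robust estimator with fixed
nuisance functions, at least one correctly specified: the ratio
`(Σᵢ 1{Xᵢ ∈ w}(g*(Xᵢ) + 1{Aᵢ = a}(Yᵢ − g*(Xᵢ))/e*(Xᵢ))) / (Σᵢ 1{Xᵢ ∈ w})`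
converges almost surely to `E[Y^a | X ∈ w]`. -/
theorem dr_estimator_consistency
    {Ω : Type*} [MeasurableSpace Ω] (P : Measure Ω) [IsProbabilityMeasure P]
    {𝒳 : Type*} [MeasurableSpace 𝒳]
    (X : Ω → 𝒳) (hX : Measurable X)
    (A : Ω → ℝ) (hA : Measurable A) (hA01 : ∀ ω, A ω = 0 ∨ A ω = 1)
    (Y : Ω → ℝ) (hY : Measurable Y) (hYint : Integrable Y P)
    (a : ℝ) (ha : a = 0 ∨ a = 1)
    (Y1 Y0 : Ω → ℝ) (hY1m : Measurable Y1) (hY0m : Measurable Y0)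
    (hY1int : Integrable Y1 P) (hY0int : Integrable Y0 P)
    (Ya : Ω → ℝ) (hYa : Ya = if a = 1 then Y1 else Y0)
    -- consistency of potential outcomes
    (hcons : ∀ᵐ ω ∂P, Y ω = A ω * Y1 ω + (1 - A ω) * Y0 ω)
    -- a version of the propensity score
    (e : 𝒳 → ℝ) (he : Measurable e)
    (hePS : ∀ B : Set 𝒳, MeasurableSet B →
      ∫ ω in X ⁻¹' B, e (X ω) ∂P = (P (X ⁻¹' B ∩ {ω | A ω = a})).toReal)
    -- a version of the outcome regression E[Y | X, A = a]
    (m : 𝒳 → ℝ) (hm : Measurable m)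
    (hmint : Integrable (fun ω => m (X ω)) P)
    (hmOR : ∀ B : Set 𝒳, MeasurableSet B →
      ∫ ω in X ⁻¹' B ∩ {ω | A ω = a}, Y ω ∂P
        = ∫ ω in X ⁻¹' B ∩ {ω | A ω = a}, m (X ω) ∂P)
    -- a version of E[Y^a | X]
    (ν : 𝒳 → ℝ) (hν : Measurable ν)
    (hνint : Integrable (fun ω => ν (X ω)) P)
    (hνCE : ∀ B : Set 𝒳, MeasurableSet B →
      ∫ ω in X ⁻¹' B, Ya ω ∂P = ∫ ω in X ⁻¹' B, ν (X ω) ∂P)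
    -- mean exchangeability
    (hexch : ∀ B : Set 𝒳, MeasurableSet B →
      ∫ ω in X ⁻¹' B ∩ {ω | A ω = a}, Ya ω ∂P
        = ∫ ω in X ⁻¹' B ∩ {ω | A ω = a}, ν (X ω) ∂P)
    -- positivity
    (ε : ℝ) (hε : 0 < ε)
    (hpos : ∀ᵐ ω ∂P, ε ≤ e (X ω) ∧ e (X ω) ≤ 1 - ε)
    -- fixed (possibly misspecified) nuisance functions
    (estar : 𝒳 → ℝ) (hestar : Measurable estar)
    (ε' : ℝ) (hε' : 0 < ε') (hestarpos : ∀ x, ε' ≤ estar x)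
    (gstar : 𝒳 → ℝ) (hgstar : Measurable gstar)
    (hgstarint : Integrable (fun ω => gstar (X ω)) P)
    -- at least one nuisance function correctly specified (a.e. w.r.t. the law of X)
    (hdr : (∀ᵐ x ∂(P.map X), estar x = e x) ∨ (∀ᵐ x ∂(P.map X), gstar x = m x))
    -- the subgroup, with P(X ∈ w) > 0
    (w : Set 𝒳) (hw : MeasurableSet w)
    (hwpos : 0 < (P (X ⁻¹' w)).toReal)
    -- i.i.d. copies of (X, A, Y)
    (Xs : ℕ → Ω → 𝒳) (As : ℕ → Ω → ℝ) (Ys : ℕ → Ω → ℝ)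
    (hmeas : ∀ i, Measurable (fun ω => (Xs i ω, As i ω, Ys i ω)))
    (hindep : ProbabilityTheory.iIndepFun
      (fun i ω => (Xs i ω, As i ω, Ys i ω)) P)
    (hident : ∀ i, ProbabilityTheory.IdentDistrib
      (fun ω => (Xs i ω, As i ω, Ys i ω)) (fun ω => (X ω, A ω, Y ω)) P P) :
    ∀ᵐ ω ∂P, Tendsto (fun n : ℕ =>
        (∑ i ∈ Finset.range n,
            (Xs i ⁻¹' w).indicator
              (fun ω' => gstar (Xs i ω')
                + ({ω'' | As i ω'' = a}).indicator
                    (fun ω'' => (Ys i ω'' - gstar (Xs i ω'')) / estar (Xs i ω'')) ω') ω)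
          / (∑ i ∈ Finset.range n, (Xs i ⁻¹' w).indicator (fun _ => (1 : ℝ)) ω))
      atTop
      (𝓝 ((1 / (P (X ⁻¹' w)).toReal) * ∫ ω' in X ⁻¹' w, Ya ω' ∂P)) := by
  classical
  have hDmeas : MeasurableSet {ω | A ω = a} := hA (measurableSet_singleton a)
  set D : Set Ω := {ω | A ω = a} with hDdef
  have hYam : Measurable Ya := by rw [hYa]; split_ifs <;> assumption
  have hYaint : Integrable Ya P := by rw [hYa]; split_ifs <;> assumption
  -- Y = Ya a.e. on D
  have hYaD : ∀ᵐ ω ∂P, A ω = a → Y ω = Ya ω := by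
    filter_upwards [hcons] with ω hω hωa
    rcases ha with h0 | h1
    · subst h0
      rcases hA01 ω with h | h
      · rw [hω, h, hYa]; norm_num
      · rw [h] at hωa; norm_num at hωa
    · subst h1
      rcases hA01 ω with h | h
      · rw [h] at hωa; norm_num at hωa
      · rw [hω, h, hYa]; norm_num
  have hmle : MeasurableSpace.comap X inferInstance ≤ ‹MeasurableSpace Ω› := hX.comap_le
  have hXcm : Measurable[MeasurableSpace.comap X inferInstance] X :=
    measurable_iff_comap_le.mpr le_rfl
  have hcomp : ∀ {u : 𝒳 → ℝ}, Measurable u → StronglyMeasurable[MeasurableSpace.comap X inferInstance] (fun ω => u (X ω)) :=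
    fun hu => (hu.comp hXcm).stronglyMeasurable
  have heXpos : ∀ᵐ ω ∂P, ε ≤ e (X ω) := hpos.mono fun ω h => h.1
  have heXint : Integrable (fun ω => e (X ω)) P := by
    refine Integrable.mono' (integrable_const 1) (he.comp hX).aestronglyMeasurable ?_
    filter_upwards [hpos] with ω h
    rw [Real.norm_eq_abs, abs_le]
    constructor <;> linarith [h.1, h.2]
  set indD : Ω → ℝ := D.indicator (fun _ => (1:ℝ)) with hindDdef
  have hindDint : Integrable indD P := (integrable_const 1).indicator hDmeas
  have hindDmeas : Measurable indD := measurable_const.indicator hDmeas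
  have hindDbd : ∀ ω, ‖indD ω‖ ≤ 1 := by
    intro ω
    rw [hindDdef]
    by_cases h : ω ∈ D <;> simp [Set.indicator_apply, h]
  have hindD_setint : ∀ B : Set 𝒳, MeasurableSet B →
      ∫ ω in X ⁻¹' B, indD ω ∂P = (P (X ⁻¹' B ∩ D)).toReal := by
    intro B hB
    rw [hindDdef, setIntegral_indicator hDmeas, setIntegral_const, smul_eq_mul, mul_one, measureReal_def]
  have hzeroPS : ∀ s, MeasurableSet[MeasurableSpace.comap X inferInstance] s → ∫ ω in s, (indD ω - e (X ω)) ∂P = 0 := by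
    intro s hs
    obtain ⟨B, hB, rfl⟩ := hs
    rw [integral_sub hindDint.integrableOn heXint.integrableOn, hindD_setint B hB,
      hePS B hB, sub_self]
  -- conditional expectation of the treatment indicator is e ∘ X
  have hcondD : (fun ω => e (X ω)) =ᵐ[P] P[indD|MeasurableSpace.comap X inferInstance] := by
    refine ae_eq_condExp_of_forall_setIntegral_eq hmle hindDint
      (fun s _ _ => heXint.integrableOn) (fun s hs _ => ?_)
      (hcomp he).aestronglyMeasurable
    obtain ⟨B, hB, rfl⟩ := hs
    rw [hePS B hB, hindD_setint B hB]
  -- m ∘ X = ν ∘ X a.e.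
  have hmν : (fun ω => m (X ω)) =ᵐ[P] (fun ω => ν (X ω)) := by
    set d : Ω → ℝ := fun ω => m (X ω) - ν (X ω) with hd
    have hdint : Integrable d P := hmint.sub hνint
    have hdcm : StronglyMeasurable[MeasurableSpace.comap X inferInstance] d := (hcomp hm).sub (hcomp hν)
    have hprodint : Integrable (fun ω => d ω * indD ω) P := by
      have := hdint.bdd_mul (c := 1) hindDmeas.aestronglyMeasurable
        (Filter.Eventually.of_forall hindDbd)
      simpa [mul_comm] using this
    have hsetzero : ∀ s, MeasurableSet[MeasurableSpace.comap X inferInstance] s → ∫ ω in s, d ω * indD ω ∂P = 0 := by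
      intro s hs
      obtain ⟨B, hB, rfl⟩ := hs
      have hrw : ∀ ω, d ω * indD ω = D.indicator d ω := by
        intro ω
        rw [hindDdef]
        by_cases h : ω ∈ D <;> simp [Set.indicator_apply, h]
      rw [integral_congr_ae (Filter.Eventually.of_forall fun ω => hrw ω)]
      rw [setIntegral_indicator hDmeas]
      have h1 : ∫ ω in X ⁻¹' B ∩ D, d ω ∂P
          = (∫ ω in X ⁻¹' B ∩ D, m (X ω) ∂P) - ∫ ω in X ⁻¹' B ∩ D, ν (X ω) ∂P :=
        integral_sub hmint.integrableOn hνint.integrableOn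
      have h2 : ∫ ω in X ⁻¹' B ∩ D, Y ω ∂P = ∫ ω in X ⁻¹' B ∩ D, Ya ω ∂P := by
        refine setIntegral_congr_ae ((hX hB).inter hDmeas) ?_
        filter_upwards [hYaD] with ω h hmem
        exact h hmem.2
      rw [h1, ← hmOR B hB, ← hexch B hB, h2, sub_self]
    have hce0 : (0 : Ω → ℝ) =ᵐ[P] P[(fun ω => d ω * indD ω)|MeasurableSpace.comap X inferInstance] := by
      refine ae_eq_condExp_of_forall_setIntegral_eq hmle hprodint
        (fun s _ _ => integrableOn_zero (μ := P))
        (fun s hs _ => by simp [hsetzero s hs])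
        (stronglyMeasurable_const (β := ℝ)).aestronglyMeasurable
    have hpull : P[(fun ω => d ω * indD ω)|MeasurableSpace.comap X inferInstance] =ᵐ[P] fun ω => d ω * (P[indD|MeasurableSpace.comap X inferInstance]) ω := by
      have := condExp_mul_of_stronglyMeasurable_left hdcm (by simpa [Pi.mul_def] using hprodint) hindDint
      simpa [Pi.mul_def] using this
    filter_upwards [hce0, hpull, hcondD, heXpos] with ω h1 h2 h3 h4
    have h5 : 0 = d ω * e (X ω) := by
      simp only [Pi.zero_apply] at h1
      rw [h1, h2, ← h3]
    have h6 : e (X ω) ≠ 0 := by linarith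
    have h7 : d ω = 0 := by
      rcases mul_eq_zero.mp h5.symm with h | h
      · exact h
      · exact absurd h h6
    have := sub_eq_zero.mp h7
    exact this
  -- the population functional
  set F : 𝒳 × ℝ × ℝ → ℝ := fun p =>
    if p.1 ∈ w then gstar p.1 +
      (if p.2.1 = a then (p.2.2 - gstar p.1) / estar p.1 else 0) else 0 with hFdef
  set H : 𝒳 × ℝ × ℝ → ℝ := fun p => if p.1 ∈ w then (1:ℝ) else 0 with hHdef
  have hF : Measurable F := by
    refine Measurable.ite (measurable_fst hw) ?_ measurable_const
    refine (hgstar.comp measurable_fst).add ?_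
    refine Measurable.ite ((measurable_fst.comp measurable_snd) (measurableSet_singleton a))
      ?_ measurable_const
    exact ((measurable_snd.comp measurable_snd).sub (hgstar.comp measurable_fst)).div
      (hestar.comp measurable_fst)
  have hH : Measurable H := by
    refine Measurable.ite (measurable_fst hw) measurable_const measurable_const
  set f0 : Ω → ℝ := fun ω => F (X ω, A ω, Y ω) with hf0def
  set t1 : Ω → ℝ := (X ⁻¹' w).indicator (fun ω => gstar (X ω)) with ht1def
  set φg : Ω → ℝ := fun ω => w.indicator (fun x => (estar x)⁻¹) (X ω) with hφgdef
  set gD : Ω → ℝ := D.indicator (fun ω => Y ω - gstar (X ω)) with hgDdef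
  have hsplit : ∀ ω, f0 ω = t1 ω + φg ω * gD ω := by
    intro ω
    by_cases hw1 : X ω ∈ w <;> by_cases hd1 : A ω = a <;>
      simp [hf0def, hFdef, ht1def, hφgdef, hgDdef, hDdef, Set.indicator_apply, hw1, hd1,
        div_eq_mul_inv, mul_comm]
  have ht1int : Integrable t1 P := hgstarint.indicator (hX hw)
  have hgDint : Integrable gD P := (hYint.sub hgstarint).indicator hDmeas
  have hφgbd : ∀ ω, ‖φg ω‖ ≤ ε'⁻¹ := by
    intro ω
    rw [hφgdef]
    by_cases h : X ω ∈ w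
    · simp only [Set.indicator_apply, h, if_true, Real.norm_eq_abs]
      rw [abs_of_nonneg (inv_nonneg.mpr (le_of_lt (lt_of_lt_of_le hε' (hestarpos _))))]
      exact inv_anti₀ hε' (hestarpos _)
    · simp only [Set.indicator_apply, h, if_false, norm_zero]
      positivity
  have hφgmeas : Measurable φg := (hestar.inv.indicator hw).comp hX
  have hφgD : Integrable (fun ω => φg ω * gD ω) P :=
    hgDint.bdd_mul hφgmeas.aestronglyMeasurable (Filter.Eventually.of_forall hφgbd)
  have hf0int : Integrable f0 P :=
    (ht1int.add hφgD).congr (Filter.Eventually.of_forall fun ω => (hsplit ω).symm)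
  have hf0sum : ∫ ω, f0 ω ∂P = (∫ ω, t1 ω ∂P) + ∫ ω, φg ω * gD ω ∂P := by
    rw [integral_congr_ae (Filter.Eventually.of_forall hsplit)]
    exact integral_add ht1int hφgD
  have ht1eq : ∫ ω, t1 ω ∂P = ∫ ω in X ⁻¹' w, gstar (X ω) ∂P := by
    rw [ht1def, integral_indicator (hX hw)]
  -- key identity: E[f0] = ∫_{X ∈ w} Ya
  have hEf : ∫ ω, f0 ω ∂P = ∫ ω in X ⁻¹' w, Ya ω ∂P := by
    have hνw : ∫ ω in X ⁻¹' w, ν (X ω) ∂P = ∫ ω in X ⁻¹' w, Ya ω ∂P := (hνCE w hw).symm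
    rcases hdr with hee' | hgm'
    · -- estar = e a.e.
      have hee : ∀ᵐ ω ∂P, estar (X ω) = e (X ω) :=
        (MeasureTheory.ae_map_iff hX.aemeasurable (measurableSet_eq_fun hestar he)).mp hee'
      set φe : Ω → ℝ := fun ω => w.indicator (fun x => (e x)⁻¹) (X ω) with hφedef
      have hφee : φg =ᵐ[P] φe := by
        filter_upwards [hee] with ω h
        rw [hφgdef, hφedef]
        by_cases hw1 : X ω ∈ w <;> simp [Set.indicator_apply, hw1, h]
      have hφebd : ∀ᵐ ω ∂P, ‖φe ω‖ ≤ ε⁻¹ := by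
        filter_upwards [heXpos] with ω h
        rw [hφedef]
        by_cases hw1 : X ω ∈ w
        · simp only [Set.indicator_apply, hw1, if_true, Real.norm_eq_abs]
          rw [abs_of_nonneg (inv_nonneg.mpr (le_of_lt (lt_of_lt_of_le hε h)))]
          exact inv_anti₀ hε h
        · simp only [Set.indicator_apply, hw1, if_false, norm_zero]
          positivity
      have hφemeas : Measurable φe := (he.inv.indicator hw).comp hX
      set gD1 : Ω → ℝ := D.indicator (fun ω => Y ω - ν (X ω)) with hgD1def
      set gD2 : Ω → ℝ := D.indicator (fun ω => ν (X ω) - gstar (X ω)) with hgD2def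
      have hgDsplit : ∀ ω, gD ω = gD1 ω + gD2 ω := by
        intro ω
        rw [hgDdef, hgD1def, hgD2def]
        by_cases h : ω ∈ D <;> simp [Set.indicator_apply, h] <;> ring
      have hgD1int : Integrable gD1 P := (hYint.sub hνint).indicator hDmeas
      have hgD2int : Integrable gD2 P := (hνint.sub hgstarint).indicator hDmeas
      have hφegD1 : Integrable (fun ω => φe ω * gD1 ω) P :=
        hgD1int.bdd_mul hφemeas.aestronglyMeasurable hφebd
      have hφegD2 : Integrable (fun ω => φe ω * gD2 ω) P :=
        hgD2int.bdd_mul hφemeas.aestronglyMeasurable hφebd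
      have hstep1 : ∫ ω, φg ω * gD ω ∂P
          = (∫ ω, φe ω * gD1 ω ∂P) + ∫ ω, φe ω * gD2 ω ∂P := by
        rw [← integral_add hφegD1 hφegD2]
        refine integral_congr_ae ?_
        filter_upwards [hφee] with ω h
        rw [h, hgDsplit ω, mul_add]
      -- first piece is zero
      have hz1 : ∫ ω, φe ω * gD1 ω ∂P = 0 := by
        refine aux_weighted_zero P hmle (hcomp (he.inv.indicator hw)) hgD1int hφegD1 ?_
        intro s hs
        obtain ⟨B, hB, rfl⟩ := hs
        rw [hgD1def, setIntegral_indicator hDmeas]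
        have h1 : ∫ ω in X ⁻¹' B ∩ D, (Y ω - ν (X ω)) ∂P
            = (∫ ω in X ⁻¹' B ∩ D, Y ω ∂P) - ∫ ω in X ⁻¹' B ∩ D, ν (X ω) ∂P :=
          integral_sub hYint.integrableOn hνint.integrableOn
        have h2 : ∫ ω in X ⁻¹' B ∩ D, Y ω ∂P = ∫ ω in X ⁻¹' B ∩ D, Ya ω ∂P := by
          refine setIntegral_congr_ae ((hX hB).inter hDmeas) ?_
          filter_upwards [hYaD] with ω h hmem
          exact h hmem.2
        rw [h1, h2, hexch B hB, sub_self]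
      -- second piece
      set ψ : Ω → ℝ := fun ω => w.indicator (fun x => (ν x - gstar x) * (e x)⁻¹) (X ω) with hψdef
      have hψmeas : Measurable ψ := (((hν.sub hgstar).mul he.inv).indicator hw).comp hX
      have hψint : Integrable ψ P := by
        have hbase : Integrable (fun ω => (ν (X ω) - gstar (X ω)) * (e (X ω))⁻¹) P := by
          have h1 : Integrable (fun ω => (e (X ω))⁻¹ * (ν (X ω) - gstar (X ω))) P := by
            refine (hνint.sub hgstarint).bdd_mul (c := ε⁻¹)
              ((he.inv.comp hX)).aestronglyMeasurable ?_
            filter_upwards [heXpos] with ω h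
            rw [Real.norm_eq_abs, abs_of_nonneg (inv_nonneg.mpr (le_of_lt (lt_of_lt_of_le hε h)))]
            exact inv_anti₀ hε h
          exact h1.congr (Filter.Eventually.of_forall fun ω => mul_comm _ _)
        have := hbase.indicator (hX hw)
        refine this.congr (Filter.Eventually.of_forall fun ω => ?_)
        rw [hψdef]
        by_cases h : X ω ∈ w <;> simp [Set.indicator_apply, Set.mem_preimage, h]
      have hrw2 : ∀ ω, φe ω * gD2 ω = ψ ω * indD ω := by
        intro ω
        rw [hφedef, hgD2def, hψdef, hindDdef]
        by_cases hw1 : X ω ∈ w <;> by_cases hd1 : ω ∈ D <;>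
          simp [Set.indicator_apply, hw1, hd1] <;> ring
      have hψindD : Integrable (fun ω => ψ ω * indD ω) P :=
        hφegD2.congr (Filter.Eventually.of_forall hrw2)
      have hψeX : Integrable (fun ω => ψ ω * e (X ω)) P := by
        have h1 : Integrable (fun ω => e (X ω) * ψ ω) P := by
          refine hψint.bdd_mul (c := 1) (he.comp hX).aestronglyMeasurable ?_
          filter_upwards [hpos] with ω h
          rw [Real.norm_eq_abs, abs_le]
          constructor <;> linarith [h.1, h.2]
        exact h1.congr (Filter.Eventually.of_forall fun ω => mul_comm _ _)
      have hz2 : ∫ ω, ψ ω * (indD ω - e (X ω)) ∂P = 0 := by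
        refine aux_weighted_zero P hmle (hcomp (((hν.sub hgstar).mul he.inv).indicator hw))
          (hindDint.sub heXint) ?_ hzeroPS
        refine (hψindD.sub hψeX).congr (Filter.Eventually.of_forall fun ω => ?_)
        simp only [Pi.sub_apply]
        ring
      have hstep2 : ∫ ω, φe ω * gD2 ω ∂P = ∫ ω, ψ ω * e (X ω) ∂P := by
        have h1 : ∫ ω, (ψ ω * indD ω - ψ ω * e (X ω)) ∂P = 0 := by
          rw [← hz2]
          refine integral_congr_ae (Filter.Eventually.of_forall fun ω => ?_)
          ring
        have h2 := integral_sub hψindD hψeX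
        rw [h1] at h2
        have h3 : ∫ ω, ψ ω * indD ω ∂P = ∫ ω, ψ ω * e (X ω) ∂P := by linarith
        rw [← h3]
        exact integral_congr_ae (Filter.Eventually.of_forall hrw2)
      have hstep3 : ∫ ω, ψ ω * e (X ω) ∂P
          = ∫ ω, (X ⁻¹' w).indicator (fun ω' => ν (X ω') - gstar (X ω')) ω ∂P := by
        refine integral_congr_ae ?_
        filter_upwards [heXpos] with ω h
        have hne : e (X ω) ≠ 0 := by linarith
        rw [hψdef]
        by_cases hw1 : X ω ∈ w
        · simp only [Set.indicator_apply, Set.mem_preimage, hw1, if_true]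
          field_simp
        · simp [Set.indicator_apply, Set.mem_preimage, hw1]
      have hstep4 : ∫ ω, (X ⁻¹' w).indicator (fun ω' => ν (X ω') - gstar (X ω')) ω ∂P
          = (∫ ω in X ⁻¹' w, ν (X ω) ∂P) - ∫ ω in X ⁻¹' w, gstar (X ω) ∂P := by
        rw [integral_indicator (hX hw)]
        exact integral_sub hνint.integrableOn hgstarint.integrableOn
      rw [hf0sum, ht1eq, hstep1, hz1, hstep2, hstep3, hstep4, ← hνw]
      ring
    · -- gstar = m a.e.
      have hgm : ∀ᵐ ω ∂P, gstar (X ω) = m (X ω) :=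
        (MeasureTheory.ae_map_iff hX.aemeasurable (measurableSet_eq_fun hgstar hm)).mp hgm'
      set gD' : Ω → ℝ := D.indicator (fun ω => Y ω - m (X ω)) with hgD'def
      have hgD'int : Integrable gD' P := (hYint.sub hmint).indicator hDmeas
      have hgDeq : gD =ᵐ[P] gD' := by
        filter_upwards [hgm] with ω h
        rw [hgDdef, hgD'def]
        by_cases hd1 : ω ∈ D <;> simp [Set.indicator_apply, hd1, h]
      have hφgD' : Integrable (fun ω => φg ω * gD' ω) P :=
        hgD'int.bdd_mul hφgmeas.aestronglyMeasurable (Filter.Eventually.of_forall hφgbd)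
      have hz : ∫ ω, φg ω * gD' ω ∂P = 0 := by
        refine aux_weighted_zero P hmle (hcomp (hestar.inv.indicator hw)) hgD'int hφgD' ?_
        intro s hs
        obtain ⟨B, hB, rfl⟩ := hs
        rw [hgD'def, setIntegral_indicator hDmeas]
        have h1 : ∫ ω in X ⁻¹' B ∩ D, (Y ω - m (X ω)) ∂P
            = (∫ ω in X ⁻¹' B ∩ D, Y ω ∂P) - ∫ ω in X ⁻¹' B ∩ D, m (X ω) ∂P :=
          integral_sub hYint.integrableOn hmint.integrableOn
        rw [h1, hmOR B hB, sub_self]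
      have hstep : ∫ ω, φg ω * gD ω ∂P = 0 := by
        rw [← hz]
        refine integral_congr_ae ?_
        filter_upwards [hgDeq] with ω h
        rw [h]
      have ht1' : ∫ ω in X ⁻¹' w, gstar (X ω) ∂P = ∫ ω in X ⁻¹' w, Ya ω ∂P := by
        have h1 : ∫ ω in X ⁻¹' w, gstar (X ω) ∂P = ∫ ω in X ⁻¹' w, ν (X ω) ∂P := by
          refine setIntegral_congr_ae (hX hw) ?_
          filter_upwards [hgm, hmν] with ω h1 h2 _
          rw [h1, h2]
        rw [h1, hνw]
      rw [hf0sum, ht1eq, hstep, ht1', add_zero]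
  -- the i.i.d. sequence and the strong law
  set Z : ℕ → Ω → 𝒳 × ℝ × ℝ := fun i ω => (Xs i ω, As i ω, Ys i ω) with hZdef
  have hZid : ∀ i, ProbabilityTheory.IdentDistrib (fun ω => F (Z i ω)) (fun ω => F (Z 0 ω)) P P :=
    fun i => ((hident i).trans (hident 0).symm).comp hF
  have hf0id : ProbabilityTheory.IdentDistrib (fun ω => F (Z 0 ω)) f0 P P :=
    (hident 0).comp hF
  have hintF : Integrable (fun ω => F (Z 0 ω)) P := hf0id.integrable_iff.mpr hf0int
  have hindepF : Pairwise (Function.onFun (fun f g => ProbabilityTheory.IndepFun f g P) (fun i ω => F (Z i ω))) :=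
    fun i j hij => (hindep.indepFun hij).comp hF hF
  have hnum := ProbabilityTheory.strong_law_ae_real (fun i ω => F (Z i ω)) hintF hindepF hZid
  -- denominator
  have hH0id : ∀ i, ProbabilityTheory.IdentDistrib (fun ω => H (Z i ω)) (fun ω => H (Z 0 ω)) P P :=
    fun i => ((hident i).trans (hident 0).symm).comp hH
  have hh0 : Integrable (fun ω => H (X ω, A ω, Y ω)) P := by
    have : (fun ω => H (X ω, A ω, Y ω)) = (X ⁻¹' w).indicator (fun _ => (1:ℝ)) := by
      funext ω
      by_cases h : X ω ∈ w <;> simp [hHdef, Set.indicator_apply, Set.mem_preimage, h]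
    rw [this]
    exact (integrable_const 1).indicator (hX hw)
  have hh0id : ProbabilityTheory.IdentDistrib (fun ω => H (Z 0 ω)) (fun ω => H (X ω, A ω, Y ω)) P P :=
    (hident 0).comp hH
  have hintH : Integrable (fun ω => H (Z 0 ω)) P := hh0id.integrable_iff.mpr hh0
  have hindepH : Pairwise (Function.onFun (fun f g => ProbabilityTheory.IndepFun f g P) (fun i ω => H (Z i ω))) :=
    fun i j hij => (hindep.indepFun hij).comp hH hH
  have hden := ProbabilityTheory.strong_law_ae_real (fun i ω => H (Z i ω)) hintH hindepH hH0id
  -- identify the limits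
  have hEF : ∫ ω, F (Z 0 ω) ∂P = ∫ ω in X ⁻¹' w, Ya ω ∂P := hf0id.integral_eq.trans hEf
  have hEH : ∫ ω, H (Z 0 ω) ∂P = (P (X ⁻¹' w)).toReal := by
    rw [hh0id.integral_eq]
    have : (fun ω => H (X ω, A ω, Y ω)) = (X ⁻¹' w).indicator (fun _ => (1:ℝ)) := by
      funext ω
      by_cases h : X ω ∈ w <;> simp [hHdef, Set.indicator_apply, Set.mem_preimage, h]
    rw [this, integral_indicator (hX hw), setIntegral_const, smul_eq_mul, mul_one, measureReal_def]
  rw [hEF] at hnum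
  rw [hEH] at hden
  -- combine
  have hkey : ∀ (x y n : ℝ), n ≠ 0 → x / n / (y / n) = x / y := by
    intro x y n hn
    rcases eq_or_ne y 0 with h | h
    · simp [h]
    · field_simp
  filter_upwards [hnum, hden] with ω h1 h2
  have hc : (P (X ⁻¹' w)).toReal ≠ 0 := ne_of_gt hwpos
  have h3 := h1.div h2 hc
  have hlim : (1 / (P (X ⁻¹' w)).toReal) * ∫ ω' in X ⁻¹' w, Ya ω' ∂P
      = (∫ ω' in X ⁻¹' w, Ya ω' ∂P) / (P (X ⁻¹' w)).toReal := one_div_mul_eq_div _ _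
  rw [hlim]
  refine Tendsto.congr' ?_ h3
  filter_upwards [eventually_ge_atTop 1] with n hn
  have hn' : (n : ℝ) ≠ 0 := by
    simp only [ne_eq, Nat.cast_eq_zero]
    omega
  simp only [Pi.div_apply]
  rw [hkey _ _ _ hn']
  congr 1
end
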